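/- arXiv:1308.1346 — 6 statements merged into one kernel-verified Lean document; each statement's English description precedes it below -/
import Mathlib

section
/- Let k be a finite field whose cardinality is not 2, 3 or 5, and let n = 2. Let R be a complete Noetherian local commutative ring with residue field k, and let S be an Artinian local commutative ring with residue field k. Then for every group homomorphism ρ : SL_2(R) → GL_2(S) lifting the natural representation (i.e. π_S(ρ(A)(i,j)) = π_R(A(i,j)) for all A ∈ SL_2(R) and all i,j), there exist a local ring homomorphism f : R → S with π_S ∘ f = π_R and a matrix X ∈ GL_2(S) with X ≡ I mod m_S such that ρ(A) = X · f(A) · X⁻¹ for all A ∈ SL_2(R), where f(A) denotes f applied entrywise. -/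
open Matrix IsLocalRing

namespace SL2Lift

section Defs
variable {R : Type*} [CommRing R]

/-- upper elementary matrix in `SL₂` -/
def Eu (r : R) : SpecialLinearGroup (Fin 2) R :=
  ⟨!![1, r; 0, 1], by simp [Matrix.det_fin_two_of]⟩

/-- lower elementary matrix in `SL₂` -/
def El (r : R) : SpecialLinearGroup (Fin 2) R :=
  ⟨!![1, 0; r, 1], by simp [Matrix.det_fin_two_of]⟩

/-- torus element of `SL₂` -/
def Tm (a b : R) (hab : a * b = 1) : SpecialLinearGroup (Fin 2) R :=
  ⟨!![a, 0; 0, b], by simp [Matrix.det_fin_two_of, hab]⟩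

/-- Weyl element of `SL₂` -/
def Wm : SpecialLinearGroup (Fin 2) R :=
  ⟨!![0, 1; -1, 0], by simp [Matrix.det_fin_two_of]⟩

@[simp] lemma Eu_coe (r : R) : (Eu r : Matrix (Fin 2) (Fin 2) R) = !![1, r; 0, 1] := rfl
@[simp] lemma El_coe (r : R) : (El r : Matrix (Fin 2) (Fin 2) R) = !![1, 0; r, 1] := rfl
@[simp] lemma Tm_coe (a b : R) (h : a * b = 1) :
    (Tm a b h : Matrix (Fin 2) (Fin 2) R) = !![a, 0; 0, b] := rfl
@[simp] lemma Wm_coe :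
    ((Wm : SpecialLinearGroup (Fin 2) R) : Matrix (Fin 2) (Fin 2) R) = !![0, 1; -1, 0] := rfl

lemma Eu_mul (r r' : R) : Eu r * Eu r' = Eu (r + r') := by
  apply Subtype.ext
  show ((Eu r : Matrix (Fin 2) (Fin 2) R)) * (Eu r' : Matrix (Fin 2) (Fin 2) R) = _
  rw [Eu_coe, Eu_coe, Eu_coe, Matrix.mul_fin_two]
  congr 1 <;> ring_nf

lemma Eu_zero : (Eu (0 : R)) = 1 := by
  apply Subtype.ext
  show ((Eu (0:R) : Matrix (Fin 2) (Fin 2) R)) = _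
  rw [Eu_coe, Matrix.SpecialLinearGroup.coe_one, Matrix.one_fin_two]

lemma El_mul (r r' : R) : El r * El r' = El (r + r') := by
  apply Subtype.ext
  show ((El r : Matrix (Fin 2) (Fin 2) R)) * (El r' : Matrix (Fin 2) (Fin 2) R) = _
  rw [El_coe, El_coe, El_coe, Matrix.mul_fin_two]
  congr 1 <;> ring_nf

lemma Tm_mul (a b a' b' : R) (h : a * b = 1) (h' : a' * b' = 1) :
    Tm a b h * Tm a' b' h' = Tm (a * a') (b * b') (by
      rw [mul_mul_mul_comm, h, h', one_mul]) := by
  apply Subtype.ext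
  show ((Tm a b h : Matrix (Fin 2) (Fin 2) R)) * (Tm a' b' h' : Matrix (Fin 2) (Fin 2) R) = _
  rw [Tm_coe, Tm_coe, Tm_coe, Matrix.mul_fin_two]
  congr 1 <;> ring_nf

lemma Tm_one : (Tm (1 : R) 1 (one_mul 1) : SpecialLinearGroup (Fin 2) R) = 1 := by
  apply Subtype.ext
  show ((Tm (1:R) 1 (one_mul 1) : Matrix (Fin 2) (Fin 2) R)) = _
  rw [Tm_coe, Matrix.SpecialLinearGroup.coe_one, Matrix.one_fin_two]

lemma Tm_inv_one (a b : R) (h : a * b = 1) : Tm a b h * Tm b a (by rw [mul_comm]; exact h) = 1 := by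
  rw [Tm_mul]
  have : a * b = (1 : R) := h
  apply Subtype.ext
  show ((Tm (a*b) (b*a) _ : Matrix (Fin 2) (Fin 2) R)) = _
  rw [Tm_coe, Matrix.SpecialLinearGroup.coe_one, Matrix.one_fin_two, h, mul_comm b a, h]

lemma Tm_comm (a b a' b' : R) (h : a * b = 1) (h' : a' * b' = 1) :
    Tm a b h * Tm a' b' h' = Tm a' b' h' * Tm a b h := by
  rw [Tm_mul, Tm_mul]
  apply Subtype.ext
  rw [Tm_coe, Tm_coe]
  congr 1 <;> ring

lemma Tm_Eu (a b r : R) (h : a * b = 1) :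
    Tm a b h * Eu r = Eu (a * a * r) * Tm a b h := by
  apply Subtype.ext
  show ((Tm a b h : Matrix (Fin 2) (Fin 2) R)) * (Eu r : Matrix (Fin 2) (Fin 2) R)
      = (Eu (a*a*r) : Matrix (Fin 2) (Fin 2) R) * (Tm a b h : Matrix (Fin 2) (Fin 2) R)
  rw [Tm_coe, Eu_coe, Eu_coe, Matrix.mul_fin_two, Matrix.mul_fin_two]
  have : a * a * r * b = a * r := by
    calc a * a * r * b = (a * b) * (a * r) := by ring
    _ = a * r := by rw [h, one_mul]
  congr 1 <;> simp [this] <;> ring_nf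

lemma Wm_Tm (a b : R) (h : a * b = 1) :
    Wm * Tm a b h = Tm b a (by rw [mul_comm]; exact h) * Wm := by
  apply Subtype.ext
  show ((Wm : SpecialLinearGroup (Fin 2) R) : Matrix (Fin 2) (Fin 2) R) * (Tm a b h : Matrix (Fin 2) (Fin 2) R)
      = (Tm b a _ : Matrix (Fin 2) (Fin 2) R) * ((Wm : SpecialLinearGroup (Fin 2) R) : Matrix (Fin 2) (Fin 2) R)
  rw [Wm_coe, Tm_coe, Tm_coe, Matrix.mul_fin_two, Matrix.mul_fin_two]
  congr 1 <;> simp <;> ring_nf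

lemma Wm_Eu (r : R) : Wm * Eu (-r) = El r * Wm := by
  apply Subtype.ext
  show ((Wm : SpecialLinearGroup (Fin 2) R) : Matrix (Fin 2) (Fin 2) R) * (Eu (-r) : Matrix (Fin 2) (Fin 2) R)
      = (El r : Matrix (Fin 2) (Fin 2) R) * ((Wm : SpecialLinearGroup (Fin 2) R) : Matrix (Fin 2) (Fin 2) R)
  rw [Wm_coe, Eu_coe, El_coe, Matrix.mul_fin_two, Matrix.mul_fin_two]
  congr 1 <;> simp <;> ring_nf

lemma steinberg (c e : R) (h : c * e = 1) :
    Eu c * El (-e) * Eu c = Tm c e h * Wm := by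
  apply Subtype.ext
  show ((Eu c : Matrix (Fin 2) (Fin 2) R)) * (El (-e) : Matrix (Fin 2) (Fin 2) R)
        * (Eu c : Matrix (Fin 2) (Fin 2) R)
      = (Tm c e h : Matrix (Fin 2) (Fin 2) R) * ((Wm : SpecialLinearGroup (Fin 2) R) : Matrix (Fin 2) (Fin 2) R)
  rw [Eu_coe, El_coe, Tm_coe, Wm_coe, Matrix.mul_fin_two, Matrix.mul_fin_two, Matrix.mul_fin_two]
  have h' : e * c = 1 := by rw [mul_comm]; exact h
  congr 1 <;> simp [h, h'] <;> ring_nf <;> simp [h, h', mul_comm]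

end Defs

section Gens
variable {R : Type*} [CommRing R]

/-- the generating set of elementary matrices -/
def gens (R : Type*) [CommRing R] : Set (SpecialLinearGroup (Fin 2) R) :=
  {A | ∃ r, A = Eu r} ∪ {A | ∃ r, A = El r}

lemma Eu_mem (r : R) : Eu r ∈ Subgroup.closure (gens R) :=
  Subgroup.subset_closure (Or.inl ⟨r, rfl⟩)
lemma El_mem (r : R) : El r ∈ Subgroup.closure (gens R) :=
  Subgroup.subset_closure (Or.inr ⟨r, rfl⟩)

lemma Wm_mem : (Wm : SpecialLinearGroup (Fin 2) R) ∈ Subgroup.closure (gens R) := by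
  have h := steinberg (1 : R) 1 (one_mul 1)
  rw [Tm_one, one_mul] at h
  rw [← h]
  exact Subgroup.mul_mem _ (Subgroup.mul_mem _ (Eu_mem 1) (El_mem (-1))) (Eu_mem 1)

lemma Tm_mem (a b : R) (h : a * b = 1) : Tm a b h ∈ Subgroup.closure (gens R) := by
  have hs := steinberg a b h
  have : Tm a b h = Eu a * El (-b) * Eu a * Wm⁻¹ := by
    rw [hs, mul_assoc, mul_inv_cancel, mul_one]
  rw [this]
  exact Subgroup.mul_mem _
    (Subgroup.mul_mem _ (Subgroup.mul_mem _ (Eu_mem a) (El_mem (-b))) (Eu_mem a))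
    (Subgroup.inv_mem _ Wm_mem)

lemma decomp_of_unit (A : SpecialLinearGroup (Fin 2) R)
    (h : IsUnit ((A : Matrix (Fin 2) (Fin 2) R) 0 0)) :
    A ∈ Subgroup.closure (gens R) := by
  obtain ⟨u, hu⟩ := h
  set M : Matrix (Fin 2) (Fin 2) R := (A : Matrix (Fin 2) (Fin 2) R) with hM
  have hdet : M 0 0 * M 1 1 - M 0 1 * M 1 0 = 1 := by
    have := A.prop
    rwa [Matrix.det_fin_two] at this
  have hab : (M 0 0) * (↑u⁻¹ : R) = 1 := by
    rw [← hu]; exact u.mul_inv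
  have key : A = El (M 1 0 * ↑u⁻¹) * Tm (M 0 0) (↑u⁻¹) hab * Eu ((↑u⁻¹ : R) * M 0 1) := by
    apply Subtype.ext
    show M = _
    rw [Matrix.SpecialLinearGroup.coe_mul, Matrix.SpecialLinearGroup.coe_mul]
    show M = !![1, 0; M 1 0 * ↑u⁻¹, 1] * !![M 0 0, 0; 0, (↑u⁻¹ : R)] * !![1, (↑u⁻¹ : R) * M 0 1; 0, 1]
    rw [Matrix.mul_fin_two, Matrix.mul_fin_two]
    have hba : (↑u⁻¹ : R) * M 0 0 = 1 := by rw [mul_comm]; exact hab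
    ext i j
    fin_cases i <;> fin_cases j <;> simp
    · linear_combination (-(M 0 1)) * hba
    · linear_combination (-(M 1 0)) * hba
    · linear_combination (↑u⁻¹ : R) * hdet - (M 1 1 + (↑u⁻¹:R) * M 0 1 * M 1 0) * hba
  rw [key]
  exact Subgroup.mul_mem _ (Subgroup.mul_mem _ (El_mem _) (Tm_mem _ _ _)) (Eu_mem _)

lemma closure_gens [IsLocalRing R] : Subgroup.closure (gens R) = ⊤ := by
  rw [Subgroup.eq_top_iff']
  intro A
  by_cases h : IsUnit ((A : Matrix (Fin 2) (Fin 2) R) 0 0)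
  · exact decomp_of_unit A h
  · set M : Matrix (Fin 2) (Fin 2) R := (A : Matrix (Fin 2) (Fin 2) R) with hM
    have hdet : M 0 0 * M 1 1 - M 0 1 * M 1 0 = 1 := by
      have := A.prop; rwa [Matrix.det_fin_two] at this
    have h00 : M 0 0 ∈ maximalIdeal R := by
      rwa [IsLocalRing.mem_maximalIdeal, mem_nonunits_iff]
    have h10 : IsUnit (M 1 0) := by
      by_contra h10
      have h10' : M 1 0 ∈ maximalIdeal R := by
        rwa [IsLocalRing.mem_maximalIdeal, mem_nonunits_iff]
      have : (1 : R) ∈ maximalIdeal R := by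
        rw [← hdet]
        exact Submodule.sub_mem _ (Ideal.mul_mem_right _ _ h00) (Ideal.mul_mem_left _ _ h10')
      exact (IsLocalRing.maximalIdeal.isMaximal R).ne_top
        (Ideal.eq_top_of_isUnit_mem _ this isUnit_one)
    have hB : IsUnit (((Eu 1 * A : SpecialLinearGroup (Fin 2) R) : Matrix (Fin 2) (Fin 2) R) 0 0) := by
      have hentry : ((Eu 1 * A : SpecialLinearGroup (Fin 2) R) : Matrix (Fin 2) (Fin 2) R) 0 0
          = M 0 0 + M 1 0 := by
        rw [Matrix.SpecialLinearGroup.coe_mul]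
        show ((Eu (1:R) : Matrix (Fin 2) (Fin 2) R) * M) 0 0 = _
        rw [Matrix.mul_apply, Fin.sum_univ_two]
        show (1 : R) * M 0 0 + 1 * M 1 0 = _
        ring
      rw [hentry]
      by_contra hcon
      have h1 : M 0 0 + M 1 0 ∈ maximalIdeal R := by
        rwa [IsLocalRing.mem_maximalIdeal, mem_nonunits_iff]
      have h2 : M 1 0 ∈ maximalIdeal R := by
        have := Submodule.sub_mem _ h1 h00
        simpa using this
      rw [IsLocalRing.mem_maximalIdeal, mem_nonunits_iff] at h2
      exact h2 h10
    have hmem := decomp_of_unit _ hB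
    have hA : A = (Eu 1)⁻¹ * (Eu 1 * A) := by group
    rw [hA]
    exact Subgroup.mul_mem _ (Subgroup.inv_mem _ (Eu_mem 1)) hmem

end Gens

section Newton
variable {S : Type*} [CommRing S]

lemma entries_mul_left {I : Ideal S} {A B : Matrix (Fin 2) (Fin 2) S}
    (hB : ∀ i j, B i j ∈ I) : ∀ i j, (A * B) i j ∈ I := fun i j => by
  rw [Matrix.mul_apply]
  exact Ideal.sum_mem _ fun kk _ => Ideal.mul_mem_left _ _ (hB _ _)

lemma entries_mul_mul {I J : Ideal S} {A B : Matrix (Fin 2) (Fin 2) S}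
    (hA : ∀ i j, A i j ∈ I) (hB : ∀ i j, B i j ∈ J) : ∀ i j, (A * B) i j ∈ I * J := fun i j => by
  rw [Matrix.mul_apply]
  exact Ideal.sum_mem _ fun kk _ => Ideal.mul_mem_mul (hA _ _) (hB _ _)

/-- Newton step for idempotents -/
def newton (e : Matrix (Fin 2) (Fin 2) S) : Matrix (Fin 2) (Fin 2) S := 3 * e ^ 2 - 2 * e ^ 3

lemma newton_id (e : Matrix (Fin 2) (Fin 2) S) :
    (newton e) ^ 2 - newton e = (e ^ 2 - e) * ((e ^ 2 - e) * (4 * (e ^ 2 - e) - 3)) := by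
  unfold newton
  noncomm_ring

lemma newton_sub (e : Matrix (Fin 2) (Fin 2) S) :
    newton e - e = (1 - 2 * e) * (e ^ 2 - e) := by
  unfold newton
  noncomm_ring

lemma commute_newton {e T : Matrix (Fin 2) (Fin 2) S} (h : Commute e T) : Commute (newton e) T := by
  unfold newton
  exact ((Commute.ofNat_left 3 T).mul_left (h.pow_left 2)).sub_left
    ((Commute.ofNat_left 2 T).mul_left (h.pow_left 3))

lemma newton_iter (mS : Ideal S) (T e0 : Matrix (Fin 2) (Fin 2) S) (hcomm : Commute e0 T)
    (hsq : ∀ i j, (e0 ^ 2 - e0) i j ∈ mS) :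
    ∀ n : ℕ, ∃ e : Matrix (Fin 2) (Fin 2) S, Commute e T ∧
      (∀ i j, (e ^ 2 - e) i j ∈ mS ^ (n + 1)) ∧ (∀ i j, (e - e0) i j ∈ mS) := by
  intro n
  induction n with
  | zero =>
      refine ⟨e0, hcomm, by simpa using hsq, fun i j => by simp⟩
  | succ n ih =>
      obtain ⟨e, hc, hz, he0⟩ := ih
      refine ⟨newton e, commute_newton hc, fun i j => ?_, fun i j => ?_⟩
      · have h1 : ∀ i j : Fin 2,
            ((e ^ 2 - e) * (4 * (e ^ 2 - e) - 3) : Matrix (Fin 2) (Fin 2) S) i j ∈ mS ^ (n + 1) := by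
          intro i j
          rw [Matrix.mul_apply]
          exact Ideal.sum_mem _ fun kk _ => Ideal.mul_mem_right _ _ (hz _ _)
        have h2 := entries_mul_mul hz h1
        have hle : mS ^ (n+1) * mS ^ (n+1) ≤ mS ^ (n + 1 + 1) := by
          rw [← pow_add]
          exact Ideal.pow_le_pow_right (by omega)
        rw [newton_id]
        exact hle (h2 i j)
      · have hthis : newton e - e0 = (1 - 2 * e) * (e ^ 2 - e) + (e - e0) := by
          rw [← newton_sub e]
          exact (sub_add_sub_cancel _ _ _).symm
        rw [hthis, Matrix.add_apply]
        have hz1 : ∀ i j : Fin 2, (e ^ 2 - e) i j ∈ mS := fun i j =>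
          Ideal.pow_le_self (Nat.succ_ne_zero n) (hz i j)
        exact Submodule.add_mem _ (entries_mul_left hz1 i j) (he0 i j)

lemma conj_mul2 {α : Type*} [Monoid α] {p q : α} (h : q * p = 1) (m n : α) :
    (p * m * q) * (p * n * q) = p * (m * n) * q := by
  calc (p * m * q) * (p * n * q) = p * m * ((q * p) * (n * q)) := by simp [mul_assoc]
  _ = p * (m * n) * q := by rw [h, one_mul]; simp [mul_assoc]

lemma conj_mul {α : Type*} [Monoid α] (u : αˣ) (a b : α) :
    (↑u⁻¹ * a * ↑u) * (↑u⁻¹ * b * ↑u) = ↑u⁻¹ * (a * b) * ↑u := by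
  simp [mul_assoc]

end Newton

end SL2Lift

open SL2Lift

set_option maxHeartbeats 4000000 in
/-- For `n = 2`, `#k ∉ {2,3,5}`, `R` complete Noetherian local with residue field `k`,
`S` Artinian local with residue field `k`, every lift `ρ : SL_n(R) → GL_n(S)` of the
natural representation is conjugate (by a matrix `≡ I mod m_S`) to one induced by a
local ring homomorphism `f : R → S` compatible with the reductions. -/
theorem sln_universal_lift_dim_two
    {k : Type*} [Field k] [Fintype k]
    {R : Type*} [CommRing R] [IsLocalRing R] [IsNoetherianRing R]
    [IsAdicComplete (maximalIdeal R) R]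
    {S : Type*} [CommRing S] [IsLocalRing S] [IsArtinianRing S]
    (hk2 : Fintype.card k ≠ 2) (hk3 : Fintype.card k ≠ 3) (hk5 : Fintype.card k ≠ 5)
    (πR : R →+* k) (hπR : Function.Surjective πR)
    (hkerR : RingHom.ker πR = maximalIdeal R)
    (πS : S →+* k) (hπS : Function.Surjective πS)
    (hkerS : RingHom.ker πS = maximalIdeal S)
    (ρ : SpecialLinearGroup (Fin 2) R →* GL (Fin 2) S)
    (hlift : ∀ (A : SpecialLinearGroup (Fin 2) R) (i j : Fin 2),
      πS ((ρ A : Matrix (Fin 2) (Fin 2) S) i j) = πR ((A : Matrix (Fin 2) (Fin 2) R) i j)) :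
    ∃ (f : R →+* S) (X : GL (Fin 2) S),
      IsLocalHom f ∧
      (∀ r : R, πS (f r) = πR r) ∧
      (∀ i j, (X : Matrix (Fin 2) (Fin 2) S) i j - (1 : Matrix (Fin 2) (Fin 2) S) i j ∈
        maximalIdeal S) ∧
      (∀ A : SpecialLinearGroup (Fin 2) R,
        (ρ A : Matrix (Fin 2) (Fin 2) S) =
          (X : Matrix (Fin 2) (Fin 2) S) * (A : Matrix (Fin 2) (Fin 2) R).map f *
            ((X⁻¹ : GL (Fin 2) S) : Matrix (Fin 2) (Fin 2) S)) := by
  classical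
  -- basic facts about the residue field
  have hcard : 2 < Fintype.card k := by
    have h1 : 1 < Fintype.card k := Fintype.one_lt_card
    omega
  -- an element x of k with x⁴ ≠ 1
  obtain ⟨g, hg⟩ := IsCyclic.exists_generator (α := kˣ)
  have horder : orderOf g = Fintype.card k - 1 := by
    rw [orderOf_eq_card_of_forall_mem_zpowers hg, Nat.card_eq_fintype_card, Fintype.card_units]
  have hg4 : g ^ 4 ≠ 1 := by
    intro h4
    have hdvd : orderOf g ∣ 4 := orderOf_dvd_of_pow_eq_one h4
    rw [horder] at hdvd
    obtain ⟨i, hi, hd⟩ := (Nat.dvd_prime_pow Nat.prime_two).1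
      (show Fintype.card k - 1 ∣ 2 ^ 2 by norm_num; exact hdvd)
    interval_cases i <;> simp at hd <;> omega
  set x : k := (g : k) with hxdef
  have hx0 : x ≠ 0 := Units.ne_zero g
  have hx4 : x ^ 4 ≠ 1 := by
    intro h
    apply hg4
    ext
    push_cast
    exact h
  have hx2 : x ^ 2 ≠ 1 := by
    intro h
    apply hx4
    rw [show (4:ℕ) = 2 * 2 from rfl, pow_mul, h, one_pow]
  have hxinv : x - x⁻¹ ≠ 0 := by
    intro h
    apply hx2
    have hxx : x = x⁻¹ := sub_eq_zero.mp h
    calc x ^ 2 = x * x := sq x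
    _ = x * x⁻¹ := by rw [← hxx]
    _ = 1 := mul_inv_cancel₀ hx0
  have hxinv2 : x ^ 2 - x⁻¹ ^ 2 ≠ 0 := by
    intro h
    apply hx4
    have hxx : x ^ 2 = x⁻¹ ^ 2 := sub_eq_zero.mp h
    calc x ^ 4 = x ^ 2 * x ^ 2 := by ring
    _ = x ^ 2 * x⁻¹ ^ 2 := by rw [← hxx]
    _ = (x * x⁻¹) ^ 2 := by ring
    _ = 1 := by rw [mul_inv_cancel₀ hx0, one_pow]
  have hx21 : x ^ 2 - 1 ≠ 0 := fun h => hx2 (sub_eq_zero.mp h)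
  -- units from nonzero residue
  have unitR : ∀ r : R, πR r ≠ 0 → IsUnit r := by
    intro r hr
    by_contra hu
    apply hr
    rw [← RingHom.mem_ker, hkerR]
    rwa [IsLocalRing.mem_maximalIdeal, mem_nonunits_iff]
  have unitS : ∀ s : S, πS s ≠ 0 → IsUnit s := by
    intro s hs
    by_contra hu
    apply hs
    rw [← RingHom.mem_ker, hkerS]
    rwa [IsLocalRing.mem_maximalIdeal, mem_nonunits_iff]
  -- cancellation lemmas in S
  have cancelS : ∀ u s : S, πS u ≠ 0 → u * s = 0 → s = 0 := by
    intro u s hu h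
    obtain ⟨v, hv⟩ := unitS u hu
    calc s = ↑v⁻¹ * (↑v * s) := by rw [← mul_assoc, Units.inv_mul, one_mul]
    _ = ↑v⁻¹ * (u * s) := by rw [hv]
    _ = 0 := by rw [h, mul_zero]
  have cancelS' : ∀ u s t : S, πS u ≠ 0 → s * u = t * u → s = t := by
    intro u s t hu h
    have : (s - t) * u = 0 := by rw [sub_mul, h, sub_self]
    have := cancelS u (s - t) hu (by rw [mul_comm] at this; exact this)
    exact sub_eq_zero.mp this
  -- the unit a in R lifting x
  obtain ⟨a, ha⟩ := hπR x
  obtain ⟨ua, huaa⟩ := unitR a (by rw [ha]; exact hx0)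
  set b : R := ↑ua⁻¹ with hbdef
  have hab : a * b = 1 := by
    rw [hbdef, ← huaa]
    exact ua.mul_inv
  have hb : πR b = x⁻¹ := by
    have h1 : x * πR b = 1 := by
      rw [← ha, show πR a * πR b = πR (a * b) from (_root_.map_mul πR a b).symm, hab, πR.map_one]
    exact eq_inv_of_mul_eq_one_right h1
  -- nilpotency of the maximal ideal of S
  obtain ⟨NN, hNN⟩ := IsArtinianRing.isNilpotent_jacobson_bot (R := S)
  have hjac : (⊥ : Ideal S).jacobson = maximalIdeal S :=
    IsLocalRing.jacobson_eq_maximalIdeal ⊥ bot_ne_top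
  rw [hjac] at hNN
  have hmem0 : ∀ s : S, πS s = 0 → s ∈ maximalIdeal S := by
    intro s h
    rw [← hkerS]
    exact RingHom.mem_ker.mpr h
  have hmem0' : ∀ s : S, s ∈ maximalIdeal S → πS s = 0 := by
    intro s h
    rw [← hkerS] at h
    exact RingHom.mem_ker.mp h
  -- matrix reduction homomorphism
  set π2 : Matrix (Fin 2) (Fin 2) S →+* Matrix (Fin 2) (Fin 2) k := πS.mapMatrix with hπ2def
  have π2app : ∀ (M : Matrix (Fin 2) (Fin 2) S) (i j : Fin 2), π2 M i j = πS (M i j) :=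
    fun M i j => rfl
  -- the image of the torus element
  set tab : SpecialLinearGroup (Fin 2) R := Tm a b hab with htabdef
  set T : Matrix (Fin 2) (Fin 2) S := ((ρ tab : GL (Fin 2) S) : Matrix (Fin 2) (Fin 2) S) with hTdef
  have hTred : ∀ i j : Fin 2, πS (T i j) = (!![x, 0; 0, x⁻¹] : Matrix (Fin 2) (Fin 2) k) i j := by
    intro i j
    rw [hTdef]
    rw [hlift tab i j]
    fin_cases i <;> fin_cases j <;> simp [htabdef, Tm, ha, hb]
  -- initial approximate idempotent
  obtain ⟨s2, hs2⟩ := hπS x⁻¹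
  have hu0 : πS (T 0 0 - s2) = x - x⁻¹ := by
    rw [_root_.map_sub, hTred 0 0, hs2]
    simp
  obtain ⟨v0, hv0⟩ := unitS (T 0 0 - s2) (by rw [hu0]; exact hxinv)
  have hπv0 : πS (↑v0⁻¹ : S) * (x - x⁻¹) = 1 := by
    rw [← hu0, ← hv0, show πS (↑v0⁻¹ : S) * πS (↑v0 : S) = πS ((↑v0⁻¹ : S) * ↑v0) from
      (_root_.map_mul πS _ _).symm, Units.inv_mul, πS.map_one]
  set e0 : Matrix (Fin 2) (Fin 2) S := (↑v0⁻¹ : S) • (T - s2 • (1 : Matrix (Fin 2) (Fin 2) S))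
    with he0def
  have hrede0 : ∀ i j : Fin 2, πS (e0 i j) = (!![1, 0; 0, 0] : Matrix (Fin 2) (Fin 2) k) i j := by
    intro i j
    have h1 : e0 i j = (↑v0⁻¹ : S) * (T i j - s2 * (1 : Matrix (Fin 2) (Fin 2) S) i j) := by
      rw [he0def, Matrix.smul_apply, Matrix.sub_apply, Matrix.smul_apply, smul_eq_mul,
        smul_eq_mul]
    rw [h1, _root_.map_mul, _root_.map_sub, _root_.map_mul, hs2, hTred i j]
    fin_cases i <;> fin_cases j <;>
      simp [Matrix.one_apply] <;>
      simpa using hπv0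
  have hcomm0 : Commute e0 T := by
    show e0 * T = T * e0
    rw [he0def, Matrix.smul_mul, Matrix.mul_smul]
    congr 1
    rw [sub_mul, mul_sub, Matrix.smul_mul, Matrix.mul_smul, one_mul, mul_one]
  have hsq0 : ∀ i j : Fin 2, (e0 ^ 2 - e0) i j ∈ maximalIdeal S := by
    intro i j
    apply hmem0
    rw [pow_two, Matrix.sub_apply, _root_.map_sub, Matrix.mul_apply, Fin.sum_univ_two, _root_.map_add,
      _root_.map_mul, _root_.map_mul, hrede0, hrede0, hrede0, hrede0, hrede0]
    fin_cases i <;> fin_cases j <;> simp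
  obtain ⟨e, hcommeT, hze, hee0⟩ := newton_iter (maximalIdeal S) T e0 hcomm0 hsq0 NN
  have he : e * e = e := by
    have hz : ∀ i j : Fin 2, (e ^ 2 - e) i j = 0 := by
      intro i j
      have hle : (maximalIdeal S) ^ (NN + 1) ≤ ⊥ := by
        rw [show (⊥ : Ideal S) = maximalIdeal S ^ NN from hNN.symm]
        exact Ideal.pow_le_pow_right (Nat.le_succ NN)
      simpa using hle (hze i j)
    have : e ^ 2 - e = 0 := by
      ext i j
      rw [hz i j]
      simp
    have h2 : e ^ 2 = e := by
      have := sub_eq_zero.mp this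
      exact this
    rwa [pow_two] at h2
  have hrede : ∀ i j : Fin 2, πS (e i j) = (!![1, 0; 0, 0] : Matrix (Fin 2) (Fin 2) k) i j := by
    intro i j
    have h := hee0 i j
    have h0 : πS ((e - e0) i j) = 0 := hmem0' _ h
    rw [Matrix.sub_apply, _root_.map_sub, sub_eq_zero] at h0
    rw [h0, hrede0]
  have hπ2e : π2 e = !![1, 0; 0, 0] := by
    ext i j
    rw [π2app]
    exact hrede i j
  -- the conjugating matrix X1
  set P1 : Matrix (Fin 2) (Fin 2) S := !![1, 0; 0, 0] with hP1def
  set P2 : Matrix (Fin 2) (Fin 2) S := !![0, 0; 0, 1] with hP2def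
  set X1 : Matrix (Fin 2) (Fin 2) S := e * P1 + (1 - e) * P2 with hX1def
  have hπ2P1 : π2 P1 = !![1, 0; 0, 0] := by
    ext i j
    rw [π2app]
    fin_cases i <;> fin_cases j <;> simp [hP1def]
  have hπ2P2 : π2 P2 = !![0, 0; 0, 1] := by
    ext i j
    rw [π2app]
    fin_cases i <;> fin_cases j <;> simp [hP2def]
  have h1me : (1 : Matrix (Fin 2) (Fin 2) k) - !![1, 0; 0, 0] = !![0, 0; 0, 1] := by
    ext i j
    fin_cases i <;> fin_cases j <;> simp [Matrix.one_apply]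
  have hπ2X1 : π2 X1 = 1 := by
    rw [hX1def, _root_.map_add π2, _root_.map_mul π2, _root_.map_mul π2, _root_.map_sub π2,
      _root_.map_one π2, hπ2e, hπ2P1, hπ2P2, h1me, Matrix.mul_fin_two, Matrix.mul_fin_two]
    ext i j
    fin_cases i <;> fin_cases j <;> simp [Matrix.one_apply, Matrix.add_apply]
  have hdetX1 : IsUnit X1.det := by
    apply unitS
    rw [RingHom.map_det]
    show (π2 X1).det ≠ 0
    rw [hπ2X1]
    simp
  set uX1 : (Matrix (Fin 2) (Fin 2) S)ˣ := ((Matrix.isUnit_iff_isUnit_det X1).2 hdetX1).unit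
    with huX1def
  have hX1v : (↑uX1 : Matrix (Fin 2) (Fin 2) S) = X1 := IsUnit.unit_spec _
  have hπ2Xi : π2 (↑uX1⁻¹ : Matrix (Fin 2) (Fin 2) S) = 1 := by
    have h1 : π2 (↑uX1⁻¹ : Matrix (Fin 2) (Fin 2) S) * π2 (↑uX1 : Matrix (Fin 2) (Fin 2) S) = 1 := by
      rw [show π2 (↑uX1⁻¹ : Matrix (Fin 2) (Fin 2) S) * π2 (↑uX1 : Matrix (Fin 2) (Fin 2) S)
        = π2 ((↑uX1⁻¹ : Matrix (Fin 2) (Fin 2) S) * ↑uX1) from (_root_.map_mul π2 _ _).symm,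
        Units.inv_mul, _root_.map_one π2]
    rw [hX1v, hπ2X1, mul_one] at h1
    exact h1
  have hP : e * X1 = X1 * P1 := by
    have hP1P1 : P1 * P1 = P1 := by
      rw [hP1def, Matrix.mul_fin_two]
      norm_num
    have hP2P1 : P2 * P1 = 0 := by
      rw [hP2def, hP1def, Matrix.mul_fin_two]
      norm_num
      ext i j
      fin_cases i <;> fin_cases j <;> simp
    have h1 : e * (1 - e) = 0 := by rw [mul_sub, mul_one, he, sub_self]
    have h2 : e * X1 = e * P1 := by
      rw [hX1def, mul_add, ← mul_assoc, he, ← mul_assoc, h1, zero_mul, add_zero]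
    have h3 : X1 * P1 = e * P1 := by
      rw [hX1def, add_mul, mul_assoc, hP1P1, mul_assoc, hP2P1, mul_zero, add_zero]
    rw [h2, h3]
  -- the conjugated representation
  set Φ : SpecialLinearGroup (Fin 2) R → Matrix (Fin 2) (Fin 2) S :=
    fun A => (↑uX1⁻¹ : Matrix (Fin 2) (Fin 2) S) * ((ρ A : GL (Fin 2) S) : Matrix (Fin 2) (Fin 2) S)
      * (↑uX1 : Matrix (Fin 2) (Fin 2) S)
    with hΦdef
  have hΦmul : ∀ A B, Φ A * Φ B = Φ (A * B) := by
    intro A B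
    simp only [hΦdef]
    rw [conj_mul uX1, _root_.map_mul ρ, Units.val_mul]
  have hΦone : Φ 1 = 1 := by
    simp only [hΦdef, _root_.map_one ρ, Units.val_one, mul_one, Units.inv_mul]
  have hΦred : ∀ (A : SpecialLinearGroup (Fin 2) R) (i j : Fin 2),
      πS (Φ A i j) = πR ((A : Matrix (Fin 2) (Fin 2) R) i j) := by
    intro A i j
    have h1 : π2 (Φ A) = π2 ((ρ A : GL (Fin 2) S) : Matrix (Fin 2) (Fin 2) S) := by
      simp only [hΦdef]
      rw [_root_.map_mul π2, _root_.map_mul π2, hπ2Xi, hX1v, hπ2X1, one_mul, mul_one]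
    have h2 := congrFun (congrFun h1 i) j
    rw [π2app, π2app] at h2
    rw [h2, hlift A i j]
  -- non-pow versions of nonvanishing facts
  have hxinv2' : x * x - x⁻¹ * x⁻¹ ≠ 0 := by
    intro h
    exact hxinv2 (by rw [pow_two, pow_two]; exact h)
  have hx21' : x * x - 1 ≠ 0 := by
    intro h
    exact hx21 (by rw [pow_two]; exact h)
  -- entry extraction for 2x2 products
  have entry2 : ∀ (M N : Matrix (Fin 2) (Fin 2) S) (i j : Fin 2),
      (M * N) i j = M i 0 * N 0 j + M i 1 * N 1 j := by
    intro M N i j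
    rw [Matrix.mul_apply, Fin.sum_univ_two]
  -- D := Φ tab is diagonal
  have hP' : e * (↑uX1 : Matrix (Fin 2) (Fin 2) S) = (↑uX1 : Matrix (Fin 2) (Fin 2) S) * P1 := by
    rw [hX1v]; exact hP
  have hDval : Φ tab = (↑uX1⁻¹ : Matrix (Fin 2) (Fin 2) S) * T * (↑uX1 : Matrix (Fin 2) (Fin 2) S) := by
    simp only [hΦdef]
    rfl
  have hP1e : P1 = (↑uX1⁻¹ : Matrix (Fin 2) (Fin 2) S) * e * (↑uX1 : Matrix (Fin 2) (Fin 2) S) := by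
    calc P1 = ((↑uX1⁻¹ : Matrix (Fin 2) (Fin 2) S) * ↑uX1) * P1 := by rw [Units.inv_mul, one_mul]
    _ = (↑uX1⁻¹ : Matrix (Fin 2) (Fin 2) S) * (e * ↑uX1) := by rw [mul_assoc, ← hP']
    _ = _ := by rw [← mul_assoc]
  have hDP1 : Φ tab * P1 = P1 * Φ tab := by
    rw [hDval, hP1e, conj_mul uX1, conj_mul uX1, hcommeT.eq]
  have hD01 : Φ tab 0 1 = 0 := by
    have h := congrFun (congrFun hDP1 0) 1
    rw [entry2, entry2] at h
    simp [hP1def] at h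
    simpa using h.symm
  have hD10 : Φ tab 1 0 = 0 := by
    have h := congrFun (congrFun hDP1 1) 0
    rw [entry2, entry2] at h
    simp [hP1def] at h
    simpa using h
  have hπα : πS (Φ tab 0 0) = x := by
    have h := hΦred tab 0 0
    rw [h, htabdef]
    simp [Tm, ha]
  have hπβ : πS (Φ tab 1 1) = x⁻¹ := by
    have h := hΦred tab 1 1
    rw [h, htabdef]
    simp [Tm, hb]
  have hπαβ : πS (Φ tab 0 0 - Φ tab 1 1) ≠ 0 := by
    rw [_root_.map_sub, hπα, hπβ]
    exact hxinv
  -- all torus images are diagonal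
  have htorcomm : ∀ (c d : R) (hcd : c * d = 1),
      Φ (Tm c d hcd) * Φ tab = Φ tab * Φ (Tm c d hcd) := by
    intro c d hcd
    rw [hΦmul, hΦmul, htabdef, Tm_comm]
  have htor01 : ∀ (c d : R) (hcd : c * d = 1), Φ (Tm c d hcd) 0 1 = 0 := by
    intro c d hcd
    have h := congrFun (congrFun (htorcomm c d hcd) 0) 1
    rw [entry2, entry2, hD01] at h
    have h2 : (Φ tab 0 0 - Φ tab 1 1) * (Φ (Tm c d hcd) 0 1) = 0 := by linear_combination -h
    exact cancelS _ _ hπαβ h2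
  have htor10 : ∀ (c d : R) (hcd : c * d = 1), Φ (Tm c d hcd) 1 0 = 0 := by
    intro c d hcd
    have h := congrFun (congrFun (htorcomm c d hcd) 1) 0
    rw [entry2, entry2, hD10] at h
    have h2 : (Φ tab 0 0 - Φ tab 1 1) * (Φ (Tm c d hcd) 1 0) = 0 := by linear_combination h
    exact cancelS _ _ hπαβ h2
  -- residues of torus diagonal entries
  have hπtor00 : ∀ (c d : R) (hcd : c * d = 1), πS (Φ (Tm c d hcd) 0 0) = πR c := by
    intro c d hcd
    rw [hΦred (Tm c d hcd) 0 0]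
    simp [Tm]
  have hπtor11 : ∀ (c d : R) (hcd : c * d = 1), πS (Φ (Tm c d hcd) 1 1) = πR d := by
    intro c d hcd
    rw [hΦred (Tm c d hcd) 1 1]
    simp [Tm]
  -- unipotent images: additivity and symmetry
  have hVadd : ∀ r r' : R, Φ (Eu r) * Φ (Eu r') = Φ (Eu (r + r')) := by
    intro r r'
    rw [hΦmul, Eu_mul]
  have hsym : ∀ r r' : R,
      Φ (Eu r) 0 1 * Φ (Eu r') 1 0 = Φ (Eu r') 0 1 * Φ (Eu r) 1 0 := by
    intro r r'
    have h1 := hVadd r r'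
    have h2 := hVadd r' r
    rw [add_comm r' r] at h2
    have h := h1.trans h2.symm
    have h00 := congrFun (congrFun h 0) 0
    rw [entry2, entry2] at h00
    linear_combination h00
  -- torus action on unipotents
  have hTV : ∀ (c d : R) (hcd : c * d = 1) (r : R),
      Φ (Tm c d hcd) * Φ (Eu r) = Φ (Eu (c * c * r)) * Φ (Tm c d hcd) := by
    intro c d hcd r
    rw [hΦmul, hΦmul, Tm_Eu]
  -- residues of unipotent entries
  have hπP : ∀ r : R, πS (Φ (Eu r) 0 0) = 1 := by
    intro r
    rw [hΦred (Eu r) 0 0]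
    simp [Eu]
  have hπW : ∀ r : R, πS (Φ (Eu r) 1 1) = 1 := by
    intro r
    rw [hΦred (Eu r) 1 1]
    simp [Eu]
  have hπQ : ∀ r : R, πS (Φ (Eu r) 0 1) = πR r := by
    intro r
    rw [hΦred (Eu r) 0 1]
    simp [Eu]
  -- key torus-weight equations for the pair (a, b)
  have eQ : ∀ r : R, Φ tab 0 0 * Φ (Eu r) 0 1 = Φ (Eu (a * a * r)) 0 1 * Φ tab 1 1 := by
    intro r
    have h := congrFun (congrFun (by rw [htabdef]; exact hTV a b hab r :
      Φ tab * Φ (Eu r) = Φ (Eu (a * a * r)) * Φ tab) 0) 1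
    rw [entry2, entry2, hD01] at h
    linear_combination h
  have es : ∀ r : R, Φ tab 1 1 * Φ (Eu r) 1 0 = Φ (Eu (a * a * r)) 1 0 * Φ tab 0 0 := by
    intro r
    have h := congrFun (congrFun (by rw [htabdef]; exact hTV a b hab r :
      Φ tab * Φ (Eu r) = Φ (Eu (a * a * r)) * Φ tab) 1) 0
    rw [entry2, entry2, hD10] at h
    linear_combination h
  -- lower left entries vanish
  have hkey : ∀ r : R,
      (Φ tab 0 0 * Φ tab 0 0 - Φ tab 1 1 * Φ tab 1 1) * (Φ (Eu r) 0 1 * Φ (Eu 1) 1 0) = 0 := by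
    intro r
    have e1 := eQ r
    have e2 := es r
    have s1h := hsym (a * a * r) 1
    have s2h := hsym r 1
    linear_combination (Φ tab 0 0 * Φ (Eu 1) 1 0) * e1 + (Φ tab 0 0 * Φ tab 1 1) * s1h
      - (Φ tab 1 1 * Φ (Eu 1) 0 1) * e2 - (Φ tab 1 1 * Φ tab 1 1) * s2h
  have hπQ1 : πS (Φ (Eu 1) 0 1) ≠ 0 := by
    rw [hπQ 1, πR.map_one]
    exact one_ne_zero
  have hs1 : Φ (Eu 1) 1 0 = 0 := by
    have h := hkey 1
    have hππ : πS (Φ tab 0 0 * Φ tab 0 0 - Φ tab 1 1 * Φ tab 1 1) ≠ 0 := by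
      rw [_root_.map_sub, _root_.map_mul, _root_.map_mul, hπα, hπβ]
      exact hxinv2'
    have h2 := cancelS _ _ hππ h
    exact cancelS _ _ hπQ1 h2
  have hs : ∀ r : R, Φ (Eu r) 1 0 = 0 := by
    intro r
    have h := hsym r 1
    rw [hs1, mul_zero] at h
    exact cancelS _ _ hπQ1 h.symm
  -- diagonal entries are 1
  have hPmul : ∀ r r' : R, Φ (Eu (r + r')) 0 0 = Φ (Eu r) 0 0 * Φ (Eu r') 0 0 := by
    intro r r'
    have h := congrFun (congrFun (hVadd r r') 0) 0
    rw [entry2, hs r'] at h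
    rw [← h]
    ring
  have hWmul : ∀ r r' : R, Φ (Eu (r + r')) 1 1 = Φ (Eu r) 1 1 * Φ (Eu r') 1 1 := by
    intro r r'
    have h := congrFun (congrFun (hVadd r r') 1) 1
    rw [entry2, hs r] at h
    rw [← h]
    ring
  have hPtor : ∀ r : R, Φ (Eu (a * a * r)) 0 0 = Φ (Eu r) 0 0 := by
    intro r
    have h := congrFun (congrFun (by rw [htabdef]; exact hTV a b hab r :
      Φ tab * Φ (Eu r) = Φ (Eu (a * a * r)) * Φ tab) 0) 0
    rw [entry2, entry2, hD01, hD10] at h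
    apply cancelS' (Φ tab 0 0) _ _ (by rw [hπα]; exact hx0)
    linear_combination -h
  have hWtor : ∀ r : R, Φ (Eu (a * a * r)) 1 1 = Φ (Eu r) 1 1 := by
    intro r
    have h := congrFun (congrFun (by rw [htabdef]; exact hTV a b hab r :
      Φ tab * Φ (Eu r) = Φ (Eu (a * a * r)) * Φ tab) 1) 1
    rw [entry2, entry2, hD10, hD01] at h
    apply cancelS' (Φ tab 1 1) _ _ (by rw [hπβ]; exact inv_ne_zero hx0)
    linear_combination -h
  -- the element a*a - 1 is a unit
  obtain ⟨w1, hw1⟩ := unitR (a * a - 1) (by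
    rw [_root_.map_sub, _root_.map_mul, ha, πR.map_one]
    exact hx21')
  have hPall : ∀ r : R, Φ (Eu r) 0 0 = 1 := by
    have hstep : ∀ r : R, Φ (Eu ((a * a - 1) * r)) 0 0 = 1 := by
      intro r
      have h := hPtor r
      have h2 : a * a * r = (a * a - 1) * r + r := by ring
      rw [h2, hPmul] at h
      apply cancelS' (Φ (Eu r) 0 0) _ _ (by rw [hπP r]; exact one_ne_zero)
      rw [h, one_mul]
    intro r
    have h2 : (a * a - 1) * ((↑w1⁻¹ : R) * r) = r := by
      rw [← hw1, ← mul_assoc, w1.mul_inv, one_mul]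
    rw [← h2]
    exact hstep _
  have hWall : ∀ r : R, Φ (Eu r) 1 1 = 1 := by
    have hstep : ∀ r : R, Φ (Eu ((a * a - 1) * r)) 1 1 = 1 := by
      intro r
      have h := hWtor r
      have h2 : a * a * r = (a * a - 1) * r + r := by ring
      rw [h2, hWmul] at h
      apply cancelS' (Φ (Eu r) 1 1) _ _ (by rw [hπW r]; exact one_ne_zero)
      rw [h, one_mul]
    intro r
    have h2 : (a * a - 1) * ((↑w1⁻¹ : R) * r) = r := by
      rw [← hw1, ← mul_assoc, w1.mul_inv, one_mul]
    rw [← h2]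
    exact hstep _
  -- the upper right entry is additive
  have hQadd : ∀ r r' : R, Φ (Eu (r + r')) 0 1 = Φ (Eu r) 0 1 + Φ (Eu r') 0 1 := by
    intro r r'
    have h := congrFun (congrFun (hVadd r r') 0) 1
    rw [entry2, hPall r, hWall r'] at h
    rw [← h]
    ring
  have hQ0 : Φ (Eu (0 : R)) 0 1 = 0 := by
    rw [Eu_zero, hΦone]
    simp [Matrix.one_apply]
  have hQneg : ∀ r : R, Φ (Eu (-r)) 0 1 = -Φ (Eu r) 0 1 := by
    intro r
    have h := hQadd r (-r)
    rw [add_neg_cancel, hQ0] at h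
    exact eq_neg_of_add_eq_zero_right h.symm
  -- the Weyl element image is antidiagonal
  have hba : b * a = 1 := by rw [mul_comm]; exact hab
  have hWcomm : Φ Wm * Φ tab = Φ (Tm b a hba) * Φ Wm := by
    rw [hΦmul, hΦmul, htabdef, Wm_Tm]
  have hπW01 : πS (Φ Wm 0 1) = 1 := by
    rw [hΦred Wm 0 1]
    simp [Wm]
  have hπW10 : πS (Φ Wm 1 0) = -1 := by
    rw [hΦred Wm 1 0]
    simp [Wm]
  have hW00 : Φ Wm 0 0 = 0 := by
    have h := congrFun (congrFun hWcomm 0) 0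
    simp only [entry2] at h
    rw [hD10, htor01 b a hba] at h
    have h2 : (Φ tab 0 0 - Φ (Tm b a hba) 0 0) * (Φ Wm 0 0) = 0 := by linear_combination h
    exact cancelS _ _ (by
      rw [_root_.map_sub, hπα, hπtor00 b a hba, hb]
      exact hxinv) h2
  have hW11 : Φ Wm 1 1 = 0 := by
    have h := congrFun (congrFun hWcomm 1) 1
    simp only [entry2] at h
    rw [hD01, htor10 b a hba] at h
    have h2 : (Φ tab 1 1 - Φ (Tm b a hba) 1 1) * (Φ Wm 1 1) = 0 := by linear_combination h
    exact cancelS _ _ (by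
      rw [_root_.map_sub, hπβ, hπtor11 b a hba, ha]
      intro hzz
      exact hxinv (by linear_combination -hzz)) h2
  -- shape of the lower elementary images
  have hWV : ∀ r : R, Φ Wm * Φ (Eu (-r)) = Φ (El r) * Φ Wm := by
    intro r
    rw [hΦmul, hΦmul, Wm_Eu]
  have hL01 : ∀ r : R, Φ (El r) 0 1 = 0 := by
    intro r
    have h := congrFun (congrFun (hWV r) 0) 0
    simp only [entry2] at h
    rw [hW00, hs (-r), hPall (-r)] at h
    have h2 : Φ Wm 1 0 * Φ (El r) 0 1 = 0 := by linear_combination -h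
    exact cancelS _ _ (by rw [hπW10]; exact neg_ne_zero.mpr one_ne_zero) h2
  have hL00 : ∀ r : R, Φ (El r) 0 0 = 1 := by
    intro r
    have h := congrFun (congrFun (hWV r) 0) 1
    simp only [entry2] at h
    rw [hW00, hW11, hWall (-r)] at h
    apply cancelS' (Φ Wm 0 1) _ _ (by rw [hπW01]; exact one_ne_zero)
    rw [one_mul]
    linear_combination -h
  have hL11 : ∀ r : R, Φ (El r) 1 1 = 1 := by
    intro r
    have h := congrFun (congrFun (hWV r) 1) 0
    simp only [entry2] at h
    rw [hW11, hW00, hs (-r), hPall (-r)] at h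
    apply cancelS' (Φ Wm 1 0) _ _ (by rw [hπW10]; exact neg_ne_zero.mpr one_ne_zero)
    rw [one_mul]
    linear_combination -h
  have hL10 : ∀ r : R, Φ (El r) 1 0 * Φ Wm 0 1 = -(Φ Wm 1 0 * Φ (Eu r) 0 1) := by
    intro r
    have h := congrFun (congrFun (hWV r) 1) 1
    simp only [entry2] at h
    rw [hW11, hWall (-r), hQneg r, hL11 r] at h
    linear_combination -h
  -- the Steinberg relation
  have hstein : ∀ (c d : R) (hcd : c * d = 1),
      Φ (Eu c) * Φ (El (-d)) * Φ (Eu c) = Φ (Tm c d hcd) * Φ Wm := by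
    intro c d hcd
    rw [hΦmul, hΦmul, hΦmul, steinberg c d hcd]
  -- KEY 0 : 1 + Q c * y = 0  where y = L (-d) lower left entry
  have hst0 : ∀ (c d : R) (hcd : c * d = 1),
      Φ (Eu c) 0 1 * Φ (El (-d)) 1 0 + 1 = 0 := by
    intro c d hcd
    have h := congrFun (congrFun (hstein c d hcd) 1) 1
    simp only [entry2] at h
    rw [hs c, hWall c, hL11 (-d), hL01 (-d), hW11, htor10 c d hcd] at h
    linear_combination h
  -- KEY 1 : Q c = A c * W01
  have hst1 : ∀ (c d : R) (hcd : c * d = 1),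
      Φ (Eu c) 0 1 = Φ (Tm c d hcd) 0 0 * Φ Wm 0 1 := by
    intro c d hcd
    have h := congrFun (congrFun (hstein c d hcd) 0) 1
    simp only [entry2] at h
    rw [hPall c, hWall c, hL00 (-d), hL01 (-d), hL11 (-d), hW11, htor01 c d hcd] at h
    have h0 := hst0 c d hcd
    linear_combination h - (Φ (Eu c) 0 1) * h0
  -- KEY 2 : W01 + Q c * (W10 * Q d) = 0
  have hst2 : ∀ (c d : R) (hcd : c * d = 1),
      Φ Wm 0 1 + Φ (Eu c) 0 1 * (Φ Wm 1 0 * Φ (Eu d) 0 1) = 0 := by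
    intro c d hcd
    have h0 := hst0 c d hcd
    have h1 := hL10 (-d)
    -- h1 : Φ (El (-d)) 1 0 * W01 = -(W10 * Q (-d)) ... careful: hL10 r : L r * W01 = -(W10 * Q r)
    -- with r := -d : Φ (El (-d)) 1 0 * W01 = -(W10 * Q (-d)) = W10 * Q d
    rw [hQneg d] at h1
    linear_combination (Φ Wm 0 1) * h0 - (Φ (Eu c) 0 1) * h1
  -- value at 1 : Q 1 = W01
  have hA1 : Φ (Tm 1 1 (one_mul 1)) 0 0 = 1 := by
    rw [Tm_one, hΦone]
    simp [Matrix.one_apply]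
  have hQ1W : Φ (Eu 1) 0 1 = Φ Wm 0 1 := by
    have h := hst1 1 1 (one_mul 1)
    rw [hA1, one_mul] at h
    exact h
  -- W01 * W10 = -1
  have hW0110 : Φ Wm 0 1 * Φ Wm 1 0 = -1 := by
    have h := hst2 1 1 (one_mul 1)
    rw [hQ1W] at h
    apply cancelS' (Φ Wm 0 1) _ _ (by rw [hπW01]; exact one_ne_zero)
    have : (Φ Wm 0 1 * Φ Wm 1 0 + 1) * Φ Wm 0 1 = 0 := by linear_combination h
    linear_combination this
  -- multiplicativity of the torus character
  have hAmul : ∀ (c d c' d' : R) (h1 : c * d = 1) (h2 : c' * d' = 1)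
      (h3 : (c * c') * (d * d') = 1),
      Φ (Tm (c * c') (d * d') h3) 0 0 = Φ (Tm c d h1) 0 0 * Φ (Tm c' d' h2) 0 0 := by
    intro c d c' d' h1 h2 h3
    have h := hΦmul (Tm c d h1) (Tm c' d' h2)
    rw [Tm_mul] at h
    have h00 := congrFun (congrFun h 0) 0
    rw [entry2, htor01 c d h1] at h00
    rw [show Φ (Tm (c * c') (d * d') h3) 0 0
      = Φ (Tm (c * c') (d * d') (by rw [mul_mul_mul_comm, h1, h2, one_mul])) 0 0 from rfl]
    linear_combination -h00
  -- KEY 3 : Q (c * c') * W01 = Q c * Q c'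
  have hQmul : ∀ (c d c' d' : R) (h1 : c * d = 1) (h2 : c' * d' = 1),
      Φ (Eu (c * c')) 0 1 * Φ Wm 0 1 = Φ (Eu c) 0 1 * Φ (Eu c') 0 1 := by
    intro c d c' d' h1 h2
    have h3 : (c * c') * (d * d') = 1 := by rw [mul_mul_mul_comm, h1, h2, one_mul]
    have hA := hAmul c d c' d' h1 h2 h3
    have k1 := hst1 (c * c') (d * d') h3
    have k2 := hst1 c d h1
    have k3 := hst1 c' d' h2
    calc Φ (Eu (c * c')) 0 1 * Φ Wm 0 1
        = (Φ (Tm (c*c') (d*d') h3) 0 0 * Φ Wm 0 1) * Φ Wm 0 1 := by rw [k1]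
    _ = (Φ (Tm c d h1) 0 0 * Φ Wm 0 1) * (Φ (Tm c' d' h2) 0 0 * Φ Wm 0 1) := by
        rw [hA]; ring
    _ = Φ (Eu c) 0 1 * Φ (Eu c') 0 1 := by rw [← k2, ← k3]
  -- the unit b0 = W01
  obtain ⟨uB, huB⟩ := unitS (Φ Wm 0 1) (by rw [hπW01]; exact one_ne_zero)
  have hinvB : (↑uB⁻¹ : S) * Φ Wm 0 1 = 1 := by rw [← huB]; exact uB.inv_mul
  have hπinvB : πS (↑uB⁻¹ : S) = 1 := by
    have := congrArg πS hinvB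
    rw [_root_.map_mul, hπW01, mul_one, πS.map_one] at this
    exact this
  -- definition of the ring homomorphism f
  set f0 : R → S := fun r => (↑uB⁻¹ : S) * Φ (Eu r) 0 1 with hf0def
  have hf0one : f0 1 = 1 := by rw [hf0def]; show (↑uB⁻¹ : S) * Φ (Eu 1) 0 1 = 1; rw [hQ1W, hinvB]
  have hf0zero : f0 0 = 0 := by rw [hf0def]; show (↑uB⁻¹ : S) * Φ (Eu 0) 0 1 = 0; rw [hQ0, mul_zero]
  have hf0add : ∀ r r' : R, f0 (r + r') = f0 r + f0 r' := by
    intro r r'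
    show (↑uB⁻¹ : S) * Φ (Eu (r + r')) 0 1 = (↑uB⁻¹ : S) * Φ (Eu r) 0 1 + (↑uB⁻¹ : S) * Φ (Eu r') 0 1
    rw [hQadd]
    ring
  have hf0mulu : ∀ (c d c' d' : R), c * d = 1 → c' * d' = 1 →
      f0 (c * c') = f0 c * f0 c' := by
    intro c d c' d' h1 h2
    show (↑uB⁻¹ : S) * Φ (Eu (c * c')) 0 1
      = ((↑uB⁻¹ : S) * Φ (Eu c) 0 1) * ((↑uB⁻¹ : S) * Φ (Eu c') 0 1)
    have h := hQmul c d c' d' h1 h2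
    have h2 : (↑uB⁻¹ : S) * Φ (Eu (c * c')) 0 1
        = (↑uB⁻¹ : S) * (↑uB⁻¹ : S) * (Φ (Eu (c * c')) 0 1 * Φ Wm 0 1) := by
      linear_combination (-(↑uB⁻¹ : S) * Φ (Eu (c * c')) 0 1) * hinvB
    rw [h2, h]
    ring
  -- every element of R is a sum of two units
  have two_units : ∀ r : R, ∃ u v : R, πR u ≠ 0 ∧ πR v ≠ 0 ∧ u + v = r := by
    intro r
    have hy : ∃ y : k, y ≠ 0 ∧ y ≠ πR r := by
      by_contra hcon
      push_neg at hcon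
      have hsub : (Finset.univ : Finset k).card ≤ ({0, πR r} : Finset k).card := by
        apply Finset.card_le_card
        intro y _
        by_cases hy : y = 0
        · simp [hy]
        · simp [hcon y hy]
      have h2 : ({0, πR r} : Finset k).card ≤ 2 := by
        apply (Finset.card_insert_le _ _).trans
        simp
      rw [Finset.card_univ] at hsub
      omega
    obtain ⟨y, hy0, hyr⟩ := hy
    obtain ⟨u, hu⟩ := hπR y
    refine ⟨u, r - u, by rw [hu]; exact hy0, ?_, by ring⟩
    rw [_root_.map_sub, hu]
    intro h0
    exact hyr (sub_eq_zero.mp h0).symm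
  -- f0 is multiplicative
  have hf0mulC : ∀ c r : R, πR c ≠ 0 → f0 (c * r) = f0 c * f0 r := by
    intro c r hc
    obtain ⟨uc, huc⟩ := unitR c hc
    have hcd : c * (↑uc⁻¹ : R) = 1 := by rw [← huc]; exact uc.mul_inv
    obtain ⟨u, v, hu, hv, huv⟩ := two_units r
    obtain ⟨uu, huu⟩ := unitR u hu
    obtain ⟨uv, huv'⟩ := unitR v hv
    have hud : u * (↑uu⁻¹ : R) = 1 := by rw [← huu]; exact uu.mul_inv
    have hvd : v * (↑uv⁻¹ : R) = 1 := by rw [← huv']; exact uv.mul_inv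
    have h1 : f0 (c * u) = f0 c * f0 u := hf0mulu c _ u _ hcd hud
    have h2 : f0 (c * v) = f0 c * f0 v := hf0mulu c _ v _ hcd hvd
    calc f0 (c * r) = f0 (c * u + c * v) := by rw [← huv, mul_add]
    _ = f0 (c * u) + f0 (c * v) := hf0add _ _
    _ = f0 c * (f0 u + f0 v) := by rw [h1, h2]; ring
    _ = f0 c * f0 (u + v) := by rw [hf0add]
    _ = f0 c * f0 r := by rw [huv]
  have hf0mul : ∀ r r' : R, f0 (r * r') = f0 r * f0 r' := by
    intro r r'
    obtain ⟨u, v, hu, hv, huv⟩ := two_units r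
    calc f0 (r * r') = f0 (u * r' + v * r') := by rw [← huv]; ring_nf
    _ = f0 (u * r') + f0 (v * r') := hf0add _ _
    _ = f0 u * f0 r' + f0 v * f0 r' := by rw [hf0mulC u r' hu, hf0mulC v r' hv]
    _ = (f0 u + f0 v) * f0 r' := by ring
    _ = f0 (u + v) * f0 r' := by rw [hf0add]
    _ = f0 r * f0 r' := by rw [huv]
  -- the ring homomorphism f
  set f : R →+* S :=
    { toFun := f0, map_one' := hf0one, map_mul' := hf0mul,
      map_zero' := hf0zero, map_add' := hf0add } with hfdef
  have hfapp : ∀ r : R, f r = (↑uB⁻¹ : S) * Φ (Eu r) 0 1 := fun r => rfl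
  have hπf : ∀ r : R, πS (f r) = πR r := by
    intro r
    rw [hfapp, _root_.map_mul, hπinvB, one_mul, hπQ]
  have hlocalf : IsLocalHom f := by
    constructor
    intro r hr
    by_contra hru
    have h1 : πR r = 0 := by
      rw [← RingHom.mem_ker, hkerR]
      rwa [IsLocalRing.mem_maximalIdeal, mem_nonunits_iff]
    have h2 : πS (f r) = 0 := by rw [hπf, h1]
    have h3 : ¬IsUnit (f r) := by
      have := hmem0 _ h2
      rwa [IsLocalRing.mem_maximalIdeal, mem_nonunits_iff] at this
    exact h3 hr
  -- the second conjugating matrix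
  set X2m : Matrix (Fin 2) (Fin 2) S := !![1, 0; 0, (↑uB⁻¹ : S)] with hX2mdef
  set X2i : Matrix (Fin 2) (Fin 2) S := !![1, 0; 0, (↑uB : S)] with hX2idef
  have hBinvB : (↑uB : S) * (↑uB⁻¹ : S) = 1 := uB.mul_inv
  have hinvBB : (↑uB⁻¹ : S) * (↑uB : S) = 1 := uB.inv_mul
  have hX2a : X2m * X2i = 1 := by
    rw [hX2mdef, hX2idef, Matrix.mul_fin_two]
    ext i j
    fin_cases i <;> fin_cases j <;> simp [Matrix.one_apply]
  have hX2b : X2i * X2m = 1 := by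
    rw [hX2idef, hX2mdef, Matrix.mul_fin_two]
    ext i j
    fin_cases i <;> fin_cases j <;> simp [Matrix.one_apply]
  set uX2 : (Matrix (Fin 2) (Fin 2) S)ˣ := ⟨X2m, X2i, hX2a, hX2b⟩ with huX2def
  -- the two monoid homomorphisms agree
  set ψL : SpecialLinearGroup (Fin 2) R →* Matrix (Fin 2) (Fin 2) S :=
    { toFun := Φ, map_one' := hΦone, map_mul' := fun A B => (hΦmul A B).symm } with hψLdef
  set ψR : SpecialLinearGroup (Fin 2) R →* Matrix (Fin 2) (Fin 2) S :=
    { toFun := fun A => X2m * ((A : Matrix (Fin 2) (Fin 2) R).map f) * X2i,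
      map_one' := by
        show X2m * ((1 : Matrix (Fin 2) (Fin 2) R).map f) * X2i = 1
        rw [Matrix.map_one _ f.map_zero f.map_one, mul_one, hX2a],
      map_mul' := by
        intro A B
        show X2m * (((A * B : SpecialLinearGroup (Fin 2) R) : Matrix (Fin 2) (Fin 2) R).map f) * X2i
          = (X2m * _ * X2i) * (X2m * _ * X2i)
        rw [Matrix.SpecialLinearGroup.coe_mul, Matrix.map_mul, conj_mul2 hX2b] } with hψRdef
  have hEuEq : ∀ r : R, Φ (Eu r) = X2m * (((Eu r : SpecialLinearGroup (Fin 2) R) :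
      Matrix (Fin 2) (Fin 2) R).map f) * X2i := by
    intro r
    have hmap : ((Eu r : SpecialLinearGroup (Fin 2) R) : Matrix (Fin 2) (Fin 2) R).map f
        = !![1, f0 r; 0, 1] := by
      rw [Eu_coe]
      ext i j
      fin_cases i <;> fin_cases j <;> simp [Matrix.map_apply] <;> rfl
    rw [hmap, hX2mdef, hX2idef, Matrix.mul_fin_two, Matrix.mul_fin_two]
    ext i j
    fin_cases i <;> fin_cases j <;> simp
    · exact hPall r
    · show Φ (Eu r) 0 1 = ((↑uB⁻¹ : S) * Φ (Eu r) 0 1) * (↑uB : S)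
      calc Φ (Eu r) 0 1 = ((↑uB⁻¹ : S) * (↑uB : S)) * Φ (Eu r) 0 1 := by rw [hinvBB, one_mul]
      _ = ((↑uB⁻¹ : S) * Φ (Eu r) 0 1) * (↑uB : S) := by ring
    · exact hs r
    · exact hWall r
  have hGval : ∀ r : R, Φ (El r) 1 0 = (↑uB⁻¹ : S) * ((↑uB⁻¹ : S) * Φ (Eu r) 0 1) := by
    intro r
    apply cancelS' (Φ Wm 0 1) _ _ (by rw [hπW01]; exact one_ne_zero)
    apply cancelS' (Φ Wm 0 1) _ _ (by rw [hπW01]; exact one_ne_zero)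
    have h1 := hL10 r
    -- (L r * W01) * W01 = -(W10 * Q r) * W01 = Q r  (using W01*W10 = -1)
    have h2 : (↑uB⁻¹ : S) * Φ Wm 0 1 = 1 := hinvB
    calc Φ (El r) 1 0 * Φ Wm 0 1 * Φ Wm 0 1
        = (-(Φ Wm 1 0 * Φ (Eu r) 0 1)) * Φ Wm 0 1 := by rw [h1]
    _ = -(Φ Wm 0 1 * Φ Wm 1 0) * Φ (Eu r) 0 1 := by ring
    _ = Φ (Eu r) 0 1 := by rw [hW0110]; ring
    _ = ((↑uB⁻¹ : S) * Φ Wm 0 1) * (((↑uB⁻¹ : S) * Φ Wm 0 1) * Φ (Eu r) 0 1) := by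
        rw [h2]; ring
    _ = (↑uB⁻¹ : S) * ((↑uB⁻¹ : S) * Φ (Eu r) 0 1) * Φ Wm 0 1 * Φ Wm 0 1 := by ring
  have hElEq : ∀ r : R, Φ (El r) = X2m * (((El r : SpecialLinearGroup (Fin 2) R) :
      Matrix (Fin 2) (Fin 2) R).map f) * X2i := by
    intro r
    have hmap : ((El r : SpecialLinearGroup (Fin 2) R) : Matrix (Fin 2) (Fin 2) R).map f
        = !![1, 0; f0 r, 1] := by
      rw [El_coe]
      ext i j
      fin_cases i <;> fin_cases j <;> simp [Matrix.map_apply] <;> rfl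
    rw [hmap, hX2mdef, hX2idef, Matrix.mul_fin_two, Matrix.mul_fin_two]
    ext i j
    fin_cases i <;> fin_cases j <;> simp
    · exact hL00 r
    · exact hL01 r
    · exact hGval r
    · exact hL11 r
  have hψeq : ψL = ψR := by
    apply MonoidHom.eq_of_eqOn_dense (closure_gens (R := R))
    rintro A (⟨r, rfl⟩ | ⟨r, rfl⟩)
    · exact hEuEq r
    · exact hElEq r
  have hψeq' : ∀ A : SpecialLinearGroup (Fin 2) R,
      Φ A = X2m * ((A : Matrix (Fin 2) (Fin 2) R).map f) * X2i :=
    fun A => DFunLike.congr_fun hψeq A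
  -- final assembly
  refine ⟨f, uX1 * uX2, hlocalf, hπf, ?_, ?_⟩
  · -- X ≡ 1 mod m
    intro i j
    apply hmem0
    have hval : (↑(uX1 * uX2) : Matrix (Fin 2) (Fin 2) S) = X1 * X2m := by
      rw [Units.val_mul, hX1v]
    have hπ2X2 : π2 X2m = 1 := by
      ext i' j'
      rw [π2app]
      fin_cases i' <;> fin_cases j' <;> simp [hX2mdef, hπinvB, Matrix.one_apply]
    have hred1 : πS ((↑(uX1 * uX2) : Matrix (Fin 2) (Fin 2) S) i j)
        = (1 : Matrix (Fin 2) (Fin 2) k) i j := by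
      rw [hval, ← π2app]
      rw [_root_.map_mul π2, hπ2X1, hπ2X2, mul_one]
    rw [_root_.map_sub, hred1]
    have : πS ((1 : Matrix (Fin 2) (Fin 2) S) i j) = (1 : Matrix (Fin 2) (Fin 2) k) i j := by
      rw [← π2app, _root_.map_one π2]
    rw [this, sub_self]
  · -- the conjugation identity
    intro A
    have h1 := hψeq' A
    have hXv : (↑(uX1 * uX2) : Matrix (Fin 2) (Fin 2) S) = (↑uX1 : Matrix (Fin 2) (Fin 2) S) * X2m := by
      rw [Units.val_mul]
    have hXiv : (↑((uX1 * uX2)⁻¹) : Matrix (Fin 2) (Fin 2) S)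
        = X2i * (↑uX1⁻¹ : Matrix (Fin 2) (Fin 2) S) := by
      rw [_root_.mul_inv_rev, Units.val_mul]
      rfl
    rw [hXv, hXiv]
    have h2 : Φ A = (↑uX1⁻¹ : Matrix (Fin 2) (Fin 2) S) * ((ρ A : GL (Fin 2) S) :
        Matrix (Fin 2) (Fin 2) S) * (↑uX1 : Matrix (Fin 2) (Fin 2) S) := by
      simp only [hΦdef]
    calc ((ρ A : GL (Fin 2) S) : Matrix (Fin 2) (Fin 2) S)
        = (↑uX1 : Matrix (Fin 2) (Fin 2) S) * Φ A * (↑uX1⁻¹ : Matrix (Fin 2) (Fin 2) S) := by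
          rw [h2]
          simp [mul_assoc]
    _ = (↑uX1 : Matrix (Fin 2) (Fin 2) S) * (X2m * ((A : Matrix (Fin 2) (Fin 2) R).map f) * X2i) *
          (↑uX1⁻¹ : Matrix (Fin 2) (Fin 2) S) := by rw [h1]
    _ = (↑uX1 : Matrix (Fin 2) (Fin 2) S) * X2m * ((A : Matrix (Fin 2) (Fin 2) R).map f) *
          (X2i * (↑uX1⁻¹ : Matrix (Fin 2) (Fin 2) S)) := by
        simp [mul_assoc]
end

section
/- Let k be a finite field, n ≥ 2, let R be a complete Noetherian local commutative ring with residue field k, and let S be a complete Noetherian local commutative ring with residue field k. Suppose f, g : R → S are local ring homomorphisms with π_S ∘ f = π_R and π_S ∘ g = π_R, and suppose there exists X ∈ GL_n(S) with X ≡ I mod m_S such that f(A) = X · g(A) · X⁻¹ for all A ∈ SL_n(R) (f, g applied entrywise). Then f = g. -/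
open Matrix IsLocalRing

/-- If two local ring homomorphisms `f g : R → S` compatible with the
reductions induce strictly equivalent lifts of the natural representation of `SL_n(R)`
(i.e. `f(A) = X · g(A) · X⁻¹` for all `A ∈ SL_n(R)` with `X ≡ I mod m_S`), then `f = g`. -/
theorem sln_induced_lift_injective
    {k : Type*} [Field k] [Fintype k]
    {R : Type*} [CommRing R] [IsLocalRing R] [IsNoetherianRing R]
    [IsAdicComplete (maximalIdeal R) R]
    {S : Type*} [CommRing S] [IsLocalRing S] [IsNoetherianRing S]
    [IsAdicComplete (maximalIdeal S) S]
    (n : ℕ) (hn : 2 ≤ n)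
    (πR : R →+* k) (hπR : Function.Surjective πR)
    (hkerR : RingHom.ker πR = maximalIdeal R)
    (πS : S →+* k) (hπS : Function.Surjective πS)
    (hkerS : RingHom.ker πS = maximalIdeal S)
    (f g : R →+* S) (hf : IsLocalHom f) (hg : IsLocalHom g)
    (hfπ : ∀ r : R, πS (f r) = πR r) (hgπ : ∀ r : R, πS (g r) = πR r)
    (X : GL (Fin n) S)
    (hX : ∀ i j, (X : Matrix (Fin n) (Fin n) S) i j - (1 : Matrix (Fin n) (Fin n) S) i j ∈
      maximalIdeal S)
    (hconj : ∀ A : SpecialLinearGroup (Fin n) R,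
      (A : Matrix (Fin n) (Fin n) R).map f =
        (X : Matrix (Fin n) (Fin n) S) * (A : Matrix (Fin n) (Fin n) R).map g *
          ((X⁻¹ : GL (Fin n) S) : Matrix (Fin n) (Fin n) S)) :
    f = g := by
  classical
  haveI : NeZero n := ⟨by omega⟩
  have h01 : (0 : Fin n) ≠ (1 : Fin n) := by
    intro h
    have h' := congrArg Fin.val h
    simp [Fin.val_one'] at h'
    omega
  -- X 0 0 is a unit
  have hX00 : IsUnit ((X : Matrix (Fin n) (Fin n) S) 0 0) := by
    by_contra hu
    have hm : (X : Matrix (Fin n) (Fin n) S) 0 0 ∈ maximalIdeal S :=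
      (IsLocalRing.mem_maximalIdeal _).2 hu
    have hone : (1 : S) ∈ maximalIdeal S := by
      have := Ideal.sub_mem _ hm (hX 0 0)
      simpa using this
    exact (IsLocalRing.maximalIdeal.isMaximal S).ne_top (Ideal.eq_top_of_isUnit_mem _ hone isUnit_one)
  -- agreement on units
  have key : ∀ u : Rˣ, f u = g u := by
    intro u
    set d : Fin n → R := fun i => if i = 0 then (u : R) else if i = 1 then ((u⁻¹ : Rˣ) : R) else 1 with hd
    have hdet : (Matrix.diagonal d).det = 1 := by
      rw [Matrix.det_diagonal]
      rw [← Finset.mul_prod_erase Finset.univ d (Finset.mem_univ 0)]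
      rw [← Finset.mul_prod_erase _ d
        (by simp [h01.symm] : (1 : Fin n) ∈ Finset.univ.erase 0)]
      have hrest : ∀ i ∈ (Finset.univ.erase (0 : Fin n)).erase 1, d i = 1 := by
        intro i hi
        simp only [Finset.mem_erase, Finset.mem_univ, and_true] at hi
        simp [hd, hi.1, hi.2]
      rw [Finset.prod_congr rfl hrest]
      simp [hd, h01.symm]
    set A : SpecialLinearGroup (Fin n) R := ⟨Matrix.diagonal d, hdet⟩ with hA
    have h := hconj A
    have hXX : ((X⁻¹ : GL (Fin n) S) : Matrix (Fin n) (Fin n) S) *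
        (X : Matrix (Fin n) (Fin n) S) = 1 := by
      have : (X⁻¹ * X : GL (Fin n) S) = 1 := inv_mul_cancel X
      calc ((X⁻¹ : GL (Fin n) S) : Matrix (Fin n) (Fin n) S) * (X : Matrix (Fin n) (Fin n) S)
          = ((X⁻¹ * X : GL (Fin n) S) : Matrix (Fin n) (Fin n) S) := rfl
        _ = 1 := by rw [this]; rfl
    have h2 : ((A : Matrix (Fin n) (Fin n) R).map f) * (X : Matrix (Fin n) (Fin n) S)
        = (X : Matrix (Fin n) (Fin n) S) * ((A : Matrix (Fin n) (Fin n) R).map g) := by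
      rw [h, mul_assoc, mul_assoc, hXX, mul_one]
    have hAf : (A : Matrix (Fin n) (Fin n) R).map f = Matrix.diagonal (fun i => f (d i)) := by
      rw [hA]
      exact Matrix.diagonal_map (map_zero f)
    have hAg : (A : Matrix (Fin n) (Fin n) R).map g = Matrix.diagonal (fun i => g (d i)) := by
      rw [hA]
      exact Matrix.diagonal_map (map_zero g)
    rw [hAf, hAg] at h2
    have hentry := Matrix.ext_iff.2 h2 0 0
    rw [Matrix.diagonal_mul, Matrix.mul_diagonal] at hentry
    have hd0 : d 0 = (u : R) := by simp [hd]
    rw [hd0] at hentry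
    have : f (u : R) * (X : Matrix (Fin n) (Fin n) S) 0 0
        = g (u : R) * (X : Matrix (Fin n) (Fin n) S) 0 0 := by
      rw [hentry, mul_comm]
    exact hX00.mul_right_cancel this
  -- conclude
  ext r
  by_cases hr : IsUnit r
  · have := key hr.unit
    simpa [hr.unit_spec] using this
  · have hm : r ∈ maximalIdeal R := (IsLocalRing.mem_maximalIdeal _).2 hr
    have hu : IsUnit (r - 1) := by
      by_contra h'
      have hm' : r - 1 ∈ maximalIdeal R := (IsLocalRing.mem_maximalIdeal _).2 h'
      have hone : (1 : R) ∈ maximalIdeal R := by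
        have := Ideal.sub_mem _ hm hm'
        simpa using this
      exact (IsLocalRing.maximalIdeal.isMaximal R).ne_top
        (Ideal.eq_top_of_isUnit_mem _ hone isUnit_one)
    have h1 := key hu.unit
    rw [hu.unit_spec] at h1
    simp only [_root_.map_sub, _root_.map_one] at h1
    exact sub_left_inj.mp h1
end

section
/- Let R be a commutative local ring, n ≥ 2, and let 𝔞 be an ideal of R. Let U_𝔞 := {M ∈ SL_n(R) : M ≡ I mod 𝔞 entrywise} and let V_𝔞 be the subgroup of GL_n(R) generated by all transvections t_ab^r with a ≠ b and r ∈ 𝔞. Then U_{𝔞²} ⊆ V_𝔞 ⊆ U_𝔞. In particular, taking 𝔞 = R, the group SL_n(R) is generated by the elementary transvections t_ab^r with a ≠ b and r ∈ R. -/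
set_option linter.unusedSectionVars false

open Matrix IsLocalRing

namespace SLNGen

variable {R : Type*} [CommRing R] [IsLocalRing R] {n : ℕ}

/-- The set of elementary transvections with parameter in `𝔞`. -/
def Tset (𝔞 : Ideal R) : Set (SpecialLinearGroup (Fin n) R) :=
  {T | ∃ (a b : Fin n) (r : R), a ≠ b ∧ r ∈ 𝔞 ∧
    (T : Matrix (Fin n) (Fin n) R) = Matrix.transvection a b r}

/-- A transvection as an element of `SL_n`. -/
def tSL (a b : Fin n) (h : a ≠ b) (r : R) : SpecialLinearGroup (Fin n) R :=
  ⟨Matrix.transvection a b r, Matrix.det_transvection_of_ne a b h r⟩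

lemma tSL_coe (a b : Fin n) (h : a ≠ b) (r : R) :
    ((tSL a b h r : SpecialLinearGroup (Fin n) R) : Matrix (Fin n) (Fin n) R)
      = Matrix.transvection a b r := rfl

lemma tSL_mem {𝔞 : Ideal R} (a b : Fin n) (h : a ≠ b) {r : R} (hr : r ∈ 𝔞) :
    tSL a b h r ∈ Subgroup.closure (Tset 𝔞) :=
  Subgroup.subset_closure ⟨a, b, r, h, hr, rfl⟩

/-- Part 2: elements of the closure are congruent to `1` mod `𝔞`. -/
lemma mem_U_of_mem_closure (𝔞 : Ideal R) {M : SpecialLinearGroup (Fin n) R}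
    (hM : M ∈ Subgroup.closure (Tset 𝔞)) :
    ∀ i j, (M : Matrix (Fin n) (Fin n) R) i j - (1 : Matrix (Fin n) (Fin n) R) i j ∈ 𝔞 := by
  induction hM using Subgroup.closure_induction with
  | mem x hx =>
    obtain ⟨a, b, r, hab, hr, hx⟩ := hx
    intro i j
    rw [hx]
    simp only [Matrix.transvection, Matrix.add_apply, Matrix.single]
    simp only [Matrix.of_apply, add_sub_cancel_left]
    split_ifs
    · exact hr
    · exact zero_mem _
  | one => intro i j; simp only [Matrix.SpecialLinearGroup.coe_one, sub_self]; exact zero_mem _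
  | mul x y hx hy px py =>
    intro i j
    have h : ((x * y : SpecialLinearGroup (Fin n) R) : Matrix (Fin n) (Fin n) R)
        - (1 : Matrix (Fin n) (Fin n) R)
        = ((x : Matrix (Fin n) (Fin n) R) - 1) * ((y : Matrix (Fin n) (Fin n) R) - 1)
          + ((x : Matrix (Fin n) (Fin n) R) - 1) + ((y : Matrix (Fin n) (Fin n) R) - 1) := by
      rw [Matrix.SpecialLinearGroup.coe_mul]; noncomm_ring
    have h2 := congrFun (congrFun h i) j
    simp only [Matrix.sub_apply, Matrix.add_apply] at h2 ⊢
    rw [h2]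
    refine add_mem (add_mem ?_ (px i j)) (py i j)
    rw [Matrix.mul_apply]
    exact Ideal.sum_mem _ fun k _ => Ideal.mul_mem_right _ _ (px i k)
  | inv x hx px =>
    intro i j
    have hxy : ((x⁻¹ : SpecialLinearGroup (Fin n) R) : Matrix (Fin n) (Fin n) R)
        * (x : Matrix (Fin n) (Fin n) R) = 1 := by
      rw [← Matrix.SpecialLinearGroup.coe_mul, inv_mul_cancel,
        Matrix.SpecialLinearGroup.coe_one]
    have h : ((x⁻¹ : SpecialLinearGroup (Fin n) R) : Matrix (Fin n) (Fin n) R)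
        - (1 : Matrix (Fin n) (Fin n) R)
        = ((x⁻¹ : SpecialLinearGroup (Fin n) R) : Matrix (Fin n) (Fin n) R)
          * ((1 : Matrix (Fin n) (Fin n) R) - (x : Matrix (Fin n) (Fin n) R)) := by
      rw [Matrix.mul_sub, Matrix.mul_one, hxy]
    have h2 := congrFun (congrFun h i) j
    simp only [Matrix.sub_apply] at h2 ⊢
    rw [h2, Matrix.mul_apply]
    refine Ideal.sum_mem _ fun k _ => Ideal.mul_mem_left _ _ ?_
    simp only [Matrix.sub_apply]
    have := px k j
    have h3 : (1 : Matrix (Fin n) (Fin n) R) k j - (x : Matrix (Fin n) (Fin n) R) k j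
        = -((x : Matrix (Fin n) (Fin n) R) k j - (1 : Matrix (Fin n) (Fin n) R) k j) := by ring
    rw [h3]
    exact neg_mem this

lemma transvection_apply (a b : Fin n) (c : R) (i j : Fin n) :
    Matrix.transvection a b c i j
      = (if i = j then 1 else 0) + (if a = i ∧ b = j then c else 0) := by
  simp [Matrix.transvection, Matrix.add_apply, Matrix.one_apply, Matrix.single]

lemma transvection_mul_apply (a b : Fin n) (c : R) (X : Matrix (Fin n) (Fin n) R) (i j : Fin n) :
    (Matrix.transvection a b c * X) i j = X i j + (if i = a then c * X b j else 0) := by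
  by_cases h : i = a
  · subst h; rw [if_pos rfl]; exact Matrix.transvection_mul_apply_same i b j c X
  · rw [if_neg h, add_zero]; exact Matrix.transvection_mul_apply_of_ne a b i j h c X

lemma mul_transvection_apply (a b : Fin n) (c : R) (X : Matrix (Fin n) (Fin n) R) (i j : Fin n) :
    (X * Matrix.transvection a b c) i j = X i j + (if j = b then c * X i a else 0) := by
  by_cases h : j = b
  · subst h; rw [if_pos rfl]; rw [Matrix.mul_transvection_apply_same a j i c X]
  · rw [if_neg h, add_zero]; exact Matrix.mul_transvection_apply_of_ne a b i j h c X

/-- Diagonal matrix with `v` at `p`, `w` at `q`, `1` elsewhere. -/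
def dmat (p q : Fin n) (v w : R) : Matrix (Fin n) (Fin n) R :=
  Matrix.diagonal (fun i => if i = p then v else if i = q then w else 1)

lemma dmat_apply (p q : Fin n) (v w : R) (i j : Fin n) :
    dmat p q v w i j
      = if i = j then (if i = p then v else if i = q then w else 1) else 0 := by
  rw [dmat, Matrix.diagonal_apply]

lemma dmat_det (p q : Fin n) (hpq : p ≠ q) (v w : R) (hvw : v * w = 1) :
    (dmat p q v w).det = 1 := by
  rw [dmat, Matrix.det_diagonal]
  rw [← Finset.mul_prod_erase _ _ (Finset.mem_univ p),
    ← Finset.mul_prod_erase _ _ (Finset.mem_erase.mpr ⟨Ne.symm hpq, Finset.mem_univ q⟩)]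
  rw [if_pos rfl, if_neg (Ne.symm hpq), if_pos rfl]
  rw [Finset.prod_eq_one, mul_one, hvw]
  intro i hi
  simp only [Finset.mem_erase] at hi
  rw [if_neg hi.2.1, if_neg hi.1]

def dSL (p q : Fin n) (hpq : p ≠ q) (v w : R) (hvw : v * w = 1) :
    SpecialLinearGroup (Fin n) R :=
  ⟨dmat p q v w, dmat_det p q hpq v w hvw⟩

lemma whitehead_single (𝔞 : Ideal R) (p q : Fin n) (hpq : p ≠ q) {s r : R}
    (hs : s ∈ 𝔞) (hr : r ∈ 𝔞) (w : R) (hw : (1 + s * r) * w = 1) :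
    dSL p q hpq (1 + s * r) w hw ∈ Subgroup.closure (Tset 𝔞) := by
  have key : dmat p q (1 + s * r) w
      = Matrix.transvection q p (-(r * w)) * (Matrix.transvection p q s *
        (Matrix.transvection q p r * Matrix.transvection p q (-(w * s)))) := by
    ext i j
    simp only [transvection_mul_apply, transvection_apply, dmat_apply]
    rcases eq_or_ne p i with rfl | hip
    · rcases eq_or_ne p j with rfl | hjp
      · simp [hpq, hpq.symm]
      · rcases eq_or_ne q j with rfl | hjq
        · simp [hpq, hpq.symm]
          linear_combination s * hw
        · simp [hpq, hpq.symm, hjp.symm, hjq.symm, hjp, hjq]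
    · rcases eq_or_ne q i with rfl | hiq
      · rcases eq_or_ne p j with rfl | hjp
        · simp [hpq, hpq.symm]
          linear_combination r * hw
        · rcases eq_or_ne q j with rfl | hjq
          · simp [hpq, hpq.symm]
            linear_combination (1 - s * r * w) * hw
          · simp [hpq, hpq.symm, hjp.symm, hjq.symm, hjp, hjq]
      · simp [hip.symm, hiq.symm, hip, hiq]
  have keySL : dSL p q hpq (1 + s * r) w hw
      = tSL q p hpq.symm (-(r * w)) * (tSL p q hpq s *
        (tSL q p hpq.symm r * tSL p q hpq (-(w * s)))) := by
    apply Subtype.ext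
    simp only [Matrix.SpecialLinearGroup.coe_mul, tSL_coe]
    exact key
  rw [keySL]
  exact mul_mem (tSL_mem _ _ _ (neg_mem (Ideal.mul_mem_right _ _ hr)))
    (mul_mem (tSL_mem _ _ _ hs)
      (mul_mem (tSL_mem _ _ _ hr) (tSL_mem _ _ _ (neg_mem (Ideal.mul_mem_left _ _ hs)))))

lemma dmat_mul_dmat (p q : Fin n) (a b c d : R) :
    dmat p q a b * dmat p q c d = dmat p q (a * c) (b * d) := by
  rw [dmat, dmat, dmat, Matrix.diagonal_mul_diagonal]
  have h : (fun i : Fin n => (if i = p then a else if i = q then b else 1)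
      * (if i = p then c else if i = q then d else 1))
      = fun i : Fin n => if i = p then a * c else if i = q then b * d else 1 :=
    funext fun i => by split_ifs <;> ring
  rw [h]

lemma whitehead_list (𝔞 : Ideal R) (hm : 𝔞 ≤ maximalIdeal R) (p q : Fin n) (hpq : p ≠ q)
    (l : List (R × R)) :
    ∀ (_ : ∀ x ∈ l, x.1 ∈ 𝔞 ∧ x.2 ∈ 𝔞) (w : R)
      (hw : (1 + (l.map fun x => x.1 * x.2).sum) * w = 1),
      dSL p q hpq (1 + (l.map fun x => x.1 * x.2).sum) w hw ∈ Subgroup.closure (Tset 𝔞) := by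
  suffices h : ∀ (N : ℕ) (l : List (R × R)), l.length = N →
      ∀ (_ : ∀ x ∈ l, x.1 ∈ 𝔞 ∧ x.2 ∈ 𝔞) (w : R)
        (hw : (1 + (l.map fun x => x.1 * x.2).sum) * w = 1),
        dSL p q hpq (1 + (l.map fun x => x.1 * x.2).sum) w hw ∈ Subgroup.closure (Tset 𝔞) by
    exact h l.length l rfl
  clear l
  intro N
  induction N with
  | zero =>
    intro l hlen _ w hw
    obtain rfl : l = [] := List.length_eq_zero_iff.mp hlen
    have hw1 : w = 1 := by simpa using hw
    have h1 : dSL p q hpq (1 + (List.map (fun x : R × R => x.1 * x.2) []).sum) w hw = 1 := by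
      apply Subtype.ext
      show dmat p q _ w = (1 : Matrix (Fin n) (Fin n) R)
      subst hw1
      ext i j
      rw [dmat_apply, Matrix.one_apply]
      split_ifs <;> simp
    rw [h1]; exact one_mem _
  | succ m ih =>
    intro l hlen hmem w hw
    obtain ⟨x, tl, rfl⟩ : ∃ x tl, l = x :: tl := by
      cases l with
      | nil => simp at hlen
      | cons a b => exact ⟨a, b, rfl⟩
    obtain ⟨s, r⟩ := x
    have hsr : s ∈ 𝔞 ∧ r ∈ 𝔞 := hmem (s, r) List.mem_cons_self
    set T := (tl.map fun x : R × R => x.1 * x.2).sum with hT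
    have hTm : T ∈ 𝔞 := by
      refine list_sum_mem ?_
      intro x hx
      obtain ⟨y, hy, rfl⟩ := List.mem_map.mp hx
      exact Ideal.mul_mem_right _ _ (hmem y (List.mem_cons_of_mem _ hy)).1
    have hunit : ∀ z : R, z ∈ 𝔞 → IsUnit (1 + z) := by
      intro z hz
      have h2 := IsLocalRing.isUnit_one_sub_self_of_mem_nonunits (-z)
        ((mem_maximalIdeal _).mp (neg_mem (hm hz)))
      simpa [sub_neg_eq_add] using h2
    have hu1 : IsUnit (1 + s * r) := hunit _ (Ideal.mul_mem_right _ _ hsr.1)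
    set w₁ : R := ↑hu1.unit⁻¹ with hw₁def
    have hw₁ : (1 + s * r) * w₁ = 1 := by
      rw [hw₁def]; exact hu1.mul_val_inv
    set tl' := tl.map (fun x : R × R => (w₁ * x.1, x.2)) with htl'
    have hmem' : ∀ x ∈ tl', x.1 ∈ 𝔞 ∧ x.2 ∈ 𝔞 := by
      intro x hx
      obtain ⟨y, hy, rfl⟩ := List.mem_map.mp hx
      exact ⟨Ideal.mul_mem_left _ _ (hmem y (List.mem_cons_of_mem _ hy)).1,
        (hmem y (List.mem_cons_of_mem _ hy)).2⟩
    have hsum' : ((tl'.map fun x : R × R => x.1 * x.2)).sum = w₁ * T := by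
      rw [htl', List.map_map]
      rw [show ((fun x : R × R => x.1 * x.2) ∘ fun x : R × R => (w₁ * x.1, x.2))
        = fun x : R × R => w₁ * (x.1 * x.2) from funext fun x => by simp [mul_assoc]]
      exact List.sum_map_mul_left tl (fun x : R × R => x.1 * x.2) w₁
    have hv₂ : IsUnit (1 + w₁ * T) := hunit _ (Ideal.mul_mem_left _ _ hTm)
    set w₂ : R := ↑hv₂.unit⁻¹ with hw₂def
    have hw₂ : (1 + w₁ * T) * w₂ = 1 := by rw [hw₂def]; exact hv₂.mul_val_inv
    have hlen' : tl'.length = m := by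
      rw [htl', List.length_map]
      simpa using hlen
    have hIH := ih tl' hlen' hmem' w₂ (by rw [hsum']; exact hw₂)
    have h1 := whitehead_single 𝔞 p q hpq hsr.1 hsr.2 w₁ hw₁
    have hv : 1 + ((((s, r) :: tl).map fun x : R × R => x.1 * x.2)).sum
        = (1 + s * r) * (1 + ((tl'.map fun x : R × R => x.1 * x.2)).sum) := by
      rw [hsum', List.map_cons, List.sum_cons, ← hT]
      linear_combination (-T) * hw₁
    have hv' : (1 + ((((s, r) :: tl).map fun x : R × R => x.1 * x.2)).sum) * (w₁ * w₂) = 1 := by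
      rw [hv]
      have h3 : (1 + s * r) * (1 + ((tl'.map fun x : R × R => x.1 * x.2)).sum) * (w₁ * w₂)
          = ((1 + s * r) * w₁) * ((1 + ((tl'.map fun x : R × R => x.1 * x.2)).sum) * w₂) := by
        ring
      rw [h3, hw₁, hsum', hw₂, one_mul]
    have hww : w = w₁ * w₂ := by
      linear_combination (-w) * hv' + (w₁ * w₂) * hw
    have hprod : dSL p q hpq (1 + ((((s, r) :: tl).map fun x : R × R => x.1 * x.2)).sum) w hw
        = dSL p q hpq (1 + s * r) w₁ hw₁
          * dSL p q hpq (1 + ((tl'.map fun x : R × R => x.1 * x.2)).sum) w₂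
            (by rw [hsum']; exact hw₂) := by
      apply Subtype.ext
      rw [Matrix.SpecialLinearGroup.coe_mul]
      show dmat p q _ _ = dmat p q _ _ * dmat p q _ _
      rw [dmat_mul_dmat, hv, hww]
    rw [hprod]
    exact mul_mem h1 hIH

lemma exists_list_of_mem_sq (𝔞 : Ideal R) {a : R} (ha : a ∈ 𝔞 ^ 2) :
    ∃ l : List (R × R), (∀ x ∈ l, x.1 ∈ 𝔞 ∧ x.2 ∈ 𝔞)
      ∧ a = (l.map fun x : R × R => x.1 * x.2).sum := by
  rw [pow_two] at ha
  refine Submodule.mul_induction_on ha ?_ ?_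
  · intro m hm k hk
    exact ⟨[(m, k)], by simp [hm, hk], by simp⟩
  · rintro x y ⟨l1, h1, rfl⟩ ⟨l2, h2, rfl⟩
    refine ⟨l1 ++ l2, ?_, by simp⟩
    intro z hz
    rcases List.mem_append.mp hz with h | h
    exacts [h1 z h, h2 z h]

lemma whitehead (𝔞 : Ideal R) (p q : Fin n) (hpq : p ≠ q) (v w : R) (hv : v - 1 ∈ 𝔞 ^ 2)
    (hw : v * w = 1) : dSL p q hpq v w hw ∈ Subgroup.closure (Tset 𝔞) := by
  by_cases htop : 𝔞 = ⊤
  · subst htop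
    have hv' : 1 + (v - 1) * 1 = v := by ring
    have heq : dSL p q hpq v w hw
        = dSL p q hpq (1 + (v - 1) * 1) w (by rw [hv']; exact hw) := by
      apply Subtype.ext
      show dmat p q _ _ = dmat p q _ _
      rw [hv']
    rw [heq]
    exact whitehead_single ⊤ p q hpq trivial trivial w _
  · obtain ⟨l, hl, hsum⟩ := exists_list_of_mem_sq 𝔞 hv
    have hveq : 1 + (l.map fun x : R × R => x.1 * x.2).sum = v := by rw [← hsum]; ring
    have heq : dSL p q hpq v w hw
        = dSL p q hpq (1 + (l.map fun x : R × R => x.1 * x.2).sum) w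
          (by rw [hveq]; exact hw) := by
      apply Subtype.ext
      show dmat p q _ _ = dmat p q _ _
      rw [hveq]
    rw [heq]
    exact whitehead_list 𝔞 (le_maximalIdeal htop) p q hpq l hl w _

lemma clearCol (𝔞 : Ideal R) (kk : Fin n) (c : Fin n → R) (s : Finset (Fin n)) :
    ∀ (_ : kk ∉ s) (_ : ∀ i ∈ s, c i ∈ 𝔞),
    ∃ E : SpecialLinearGroup (Fin n) R, E ∈ Subgroup.closure (Tset 𝔞) ∧
      ∀ (A : Matrix (Fin n) (Fin n) R) (i j : Fin n),
        ((E : Matrix (Fin n) (Fin n) R) * A) i j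
          = if i ∈ s then A i j + c i * A kk j else A i j := by
  induction s using Finset.induction_on with
  | empty =>
    intro _ _
    exact ⟨1, one_mem _, by simp [Matrix.SpecialLinearGroup.coe_one]⟩
  | @insert a s' ha ih =>
    intro hks hc
    have hks' : kk ∉ s' := fun h => hks (Finset.mem_insert_of_mem h)
    have hak : a ≠ kk := fun h => hks (h ▸ Finset.mem_insert_self a s')
    obtain ⟨E', hE'm, hE'⟩ := ih hks' (fun i hi => hc i (Finset.mem_insert_of_mem hi))
    refine ⟨tSL a kk hak (c a) * E',
      mul_mem (tSL_mem _ _ _ (hc a (Finset.mem_insert_self a s'))) hE'm, ?_⟩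
    intro A i j
    rw [Matrix.SpecialLinearGroup.coe_mul, tSL_coe, Matrix.mul_assoc, transvection_mul_apply,
      hE', hE']
    by_cases hia : i = a
    · subst hia
      simp [ha, hks']
    · simp [hia, Finset.mem_insert]

lemma clearRow (𝔞 : Ideal R) (kk : Fin n) (c : Fin n → R) (s : Finset (Fin n)) :
    ∀ (_ : kk ∉ s) (_ : ∀ i ∈ s, c i ∈ 𝔞),
    ∃ F : SpecialLinearGroup (Fin n) R, F ∈ Subgroup.closure (Tset 𝔞) ∧
      ∀ (A : Matrix (Fin n) (Fin n) R) (i j : Fin n),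
        (A * (F : Matrix (Fin n) (Fin n) R)) i j
          = if j ∈ s then A i j + c j * A i kk else A i j := by
  induction s using Finset.induction_on with
  | empty =>
    intro _ _
    exact ⟨1, one_mem _, by simp [Matrix.SpecialLinearGroup.coe_one]⟩
  | @insert a s' ha ih =>
    intro hks hc
    have hks' : kk ∉ s' := fun h => hks (Finset.mem_insert_of_mem h)
    have hak : kk ≠ a := fun h => hks (h ▸ Finset.mem_insert_self a s')
    obtain ⟨F', hF'm, hF'⟩ := ih hks' (fun i hi => hc i (Finset.mem_insert_of_mem hi))
    refine ⟨F' * tSL kk a hak (c a),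
      mul_mem hF'm (tSL_mem _ _ _ (hc a (Finset.mem_insert_self a s'))), ?_⟩
    intro A i j
    rw [Matrix.SpecialLinearGroup.coe_mul, tSL_coe, ← Matrix.mul_assoc, mul_transvection_apply,
      hF', hF']
    by_cases hja : j = a
    · subst hja
      simp [ha, hks']
    · simp [hja, Finset.mem_insert]

lemma step (𝔞 : Ideal R) (k : ℕ) (hk : k < n) (M : SpecialLinearGroup (Fin n) R)
    (hsq : ∀ i j, (M : Matrix (Fin n) (Fin n) R) i j - (1 : Matrix (Fin n) (Fin n) R) i j ∈ 𝔞 ^ 2)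
    (hid : ∀ i j : Fin n, (↑i < k ∨ ↑j < k) →
      (M : Matrix (Fin n) (Fin n) R) i j = (1 : Matrix (Fin n) (Fin n) R) i j) :
    ∃ E F : SpecialLinearGroup (Fin n) R, E ∈ Subgroup.closure (Tset 𝔞) ∧
      F ∈ Subgroup.closure (Tset 𝔞) ∧
      (∀ i j, ((E * M * F : SpecialLinearGroup (Fin n) R) : Matrix (Fin n) (Fin n) R) i j
        - (1 : Matrix (Fin n) (Fin n) R) i j ∈ 𝔞 ^ 2) ∧
      (∀ i j : Fin n, (↑i < k + 1 ∨ ↑j < k + 1) →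
        ((E * M * F : SpecialLinearGroup (Fin n) R) : Matrix (Fin n) (Fin n) R) i j
          = (1 : Matrix (Fin n) (Fin n) R) i j) := by
  have hsqle : 𝔞 ^ 2 ≤ 𝔞 := Ideal.pow_le_self two_ne_zero
  set kk : Fin n := ⟨k, hk⟩ with hkk
  -- pivot existence
  have hdet : (M : Matrix (Fin n) (Fin n) R).det = 1 := M.2
  have hadj : ∑ i, (M : Matrix (Fin n) (Fin n) R).adjugate kk i
      * (M : Matrix (Fin n) (Fin n) R) i kk = 1 := by
    have h := congrFun (congrFun (Matrix.adjugate_mul (M : Matrix (Fin n) (Fin n) R)) kk) kk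
    simpa [Matrix.mul_apply, hdet, Matrix.one_apply] using h
  have hpivot : ∃ i, IsUnit ((M : Matrix (Fin n) (Fin n) R) i kk) := by
    by_contra hcon
    push_neg at hcon
    have hmem : (1 : R) ∈ maximalIdeal R := by
      rw [← hadj]
      exact Ideal.sum_mem _ fun i _ =>
        Ideal.mul_mem_left _ _ ((mem_maximalIdeal _).mpr (hcon i))
    exact (IsLocalRing.maximalIdeal.isMaximal R).ne_top
      (Ideal.eq_top_of_isUnit_mem _ hmem isUnit_one)
  -- Phase 1 : make the pivot a unit
  have phase1 : ∃ E₁ : SpecialLinearGroup (Fin n) R, E₁ ∈ Subgroup.closure (Tset 𝔞) ∧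
      IsUnit (((E₁ * M : SpecialLinearGroup (Fin n) R) : Matrix (Fin n) (Fin n) R) kk kk) ∧
      (∀ i j, ((E₁ * M : SpecialLinearGroup (Fin n) R) : Matrix (Fin n) (Fin n) R) i j
        - (1 : Matrix (Fin n) (Fin n) R) i j ∈ 𝔞 ^ 2) ∧
      (∀ i j : Fin n, (↑i < k ∨ ↑j < k) →
        ((E₁ * M : SpecialLinearGroup (Fin n) R) : Matrix (Fin n) (Fin n) R) i j
          = (1 : Matrix (Fin n) (Fin n) R) i j) := by
    obtain ⟨i₀, hi₀⟩ := hpivot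
    by_cases hik : i₀ = kk
    · refine ⟨1, one_mem _, ?_, ?_, ?_⟩ <;>
        simp only [one_mul]
      · exact hik ▸ hi₀
      · exact hsq
      · exact hid
    · have hi₀k : ¬((i₀ : ℕ) < k) := by
        intro h
        have h0 := hid i₀ kk (Or.inl h)
        rw [Matrix.one_apply_ne (fun hc => hik hc)] at h0
        rw [h0] at hi₀
        exact not_isUnit_zero hi₀
      set c := (1 - (M : Matrix (Fin n) (Fin n) R) kk kk) * ↑hi₀.unit⁻¹ with hc
      have hc2 : c ∈ 𝔞 ^ 2 := by
        apply Ideal.mul_mem_right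
        have h1 := hsq kk kk
        rw [Matrix.one_apply_eq] at h1
        have h2 : 1 - (M : Matrix (Fin n) (Fin n) R) kk kk
            = -((M : Matrix (Fin n) (Fin n) R) kk kk - 1) := by ring
        rw [h2]
        exact neg_mem h1
      have he : ∀ x j : Fin n,
          ((tSL kk i₀ (Ne.symm hik) c * M : SpecialLinearGroup (Fin n) R)
            : Matrix (Fin n) (Fin n) R) x j
          = (M : Matrix (Fin n) (Fin n) R) x j
            + (if x = kk then c * (M : Matrix (Fin n) (Fin n) R) i₀ j else 0) := by
        intro x j
        rw [Matrix.SpecialLinearGroup.coe_mul, tSL_coe, transvection_mul_apply]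
      refine ⟨tSL kk i₀ (Ne.symm hik) c, tSL_mem _ _ _ (hsqle hc2), ?_, ?_, ?_⟩
      · have h1 : ((tSL kk i₀ (Ne.symm hik) c * M : SpecialLinearGroup (Fin n) R)
            : Matrix (Fin n) (Fin n) R) kk kk = 1 := by
          rw [he, if_pos rfl, hc]
          have hvi : (↑hi₀.unit⁻¹ : R) * (M : Matrix (Fin n) (Fin n) R) i₀ kk = 1 :=
            hi₀.val_inv_mul
          linear_combination (1 - (M : Matrix (Fin n) (Fin n) R) kk kk) * hvi
        rw [h1]
        exact isUnit_one
      · intro i j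
        rw [he]
        by_cases hikk : i = kk
        · rw [if_pos hikk, hikk]
          have h2 : (M : Matrix (Fin n) (Fin n) R) kk j
              + c * (M : Matrix (Fin n) (Fin n) R) i₀ j - (1 : Matrix (Fin n) (Fin n) R) kk j
              = ((M : Matrix (Fin n) (Fin n) R) kk j - (1 : Matrix (Fin n) (Fin n) R) kk j)
                + c * (M : Matrix (Fin n) (Fin n) R) i₀ j := by ring
          rw [h2]
          exact add_mem (hsq kk j) (Ideal.mul_mem_right _ _ hc2)
        · rw [if_neg hikk, add_zero]
          exact hsq i j
      · intro i j hij
        rw [he]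
        by_cases hikk : i = kk
        · subst hikk
          have hjk : (j : ℕ) < k := by
            rcases hij with h | h
            · exact absurd h (by simp [hkk])
            · exact h
          have hji₀ : i₀ ≠ j := by
            intro hc'
            subst hc'
            omega
          rw [if_pos rfl, hid i₀ j (Or.inr hjk), Matrix.one_apply_ne hji₀, mul_zero, add_zero]
          exact hid kk j (Or.inr hjk)
        · rw [if_neg hikk, add_zero]
          exact hid i j hij
  obtain ⟨E₁, hE₁V, hNu, hNsq, hNid⟩ := phase1
  set N : SpecialLinearGroup (Fin n) R := E₁ * M with hNdef
  set u : R := (N : Matrix (Fin n) (Fin n) R) kk kk with hu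
  set w : R := ↑hNu.unit⁻¹ with hwdef
  have hw : u * w = 1 := hNu.mul_val_inv
  have hw' : w * u = 1 := hNu.val_inv_mul
  have hu2 : u - 1 ∈ 𝔞 ^ 2 := by
    have h1 := hNsq kk kk
    rwa [Matrix.one_apply_eq] at h1
  -- Phase 2 : clear the column below the pivot
  set s₂ : Finset (Fin n) := Finset.univ.erase kk with hs₂
  have hks₂ : kk ∉ s₂ := Finset.notMem_erase _ _
  have hmem_s₂ : ∀ i : Fin n, i ∈ s₂ ↔ i ≠ kk := by
    intro i; simp [hs₂]
  set c₂ : Fin n → R := fun i => -((N : Matrix (Fin n) (Fin n) R) i kk) * w with hc₂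
  have hc₂sq : ∀ i : Fin n, i ≠ kk → c₂ i ∈ 𝔞 ^ 2 := by
    intro i hi
    have h1 := hNsq i kk
    rw [Matrix.one_apply_ne hi] at h1
    rw [sub_zero] at h1
    exact Ideal.mul_mem_right _ _ (neg_mem h1)
  obtain ⟨E₂, hE₂V, hE₂⟩ := clearCol 𝔞 kk c₂ s₂ hks₂
    (fun i hi => hsqle (hc₂sq i ((hmem_s₂ i).mp hi)))
  set N₂ : SpecialLinearGroup (Fin n) R := E₂ * N with hN₂def
  have hN₂e : ∀ i j : Fin n, (N₂ : Matrix (Fin n) (Fin n) R) i j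
      = if i = kk then (N : Matrix (Fin n) (Fin n) R) i j
        else (N : Matrix (Fin n) (Fin n) R) i j
          + c₂ i * (N : Matrix (Fin n) (Fin n) R) kk j := by
    intro i j
    rw [hN₂def, Matrix.SpecialLinearGroup.coe_mul, hE₂]
    by_cases hikk : i = kk
    · rw [if_neg (fun h => ((hmem_s₂ i).mp h) hikk), if_pos hikk]
    · rw [if_pos ((hmem_s₂ i).mpr hikk), if_neg hikk]
  have hN₂kkrow : ∀ j : Fin n, (N₂ : Matrix (Fin n) (Fin n) R) kk j
      = (N : Matrix (Fin n) (Fin n) R) kk j := by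
    intro j; rw [hN₂e, if_pos rfl]
  have hN₂col : ∀ i : Fin n, i ≠ kk → (N₂ : Matrix (Fin n) (Fin n) R) i kk = 0 := by
    intro i hi
    rw [hN₂e, if_neg hi, hc₂]
    have : (N : Matrix (Fin n) (Fin n) R) i kk
        + -((N : Matrix (Fin n) (Fin n) R) i kk) * w * u
        = (N : Matrix (Fin n) (Fin n) R) i kk * (1 - w * u) := by ring
    rw [← hu, this, hw']
    ring
  have hN₂kk : (N₂ : Matrix (Fin n) (Fin n) R) kk kk = u := by
    rw [hN₂kkrow]
  have hN₂sq : ∀ i j, (N₂ : Matrix (Fin n) (Fin n) R) i j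
      - (1 : Matrix (Fin n) (Fin n) R) i j ∈ 𝔞 ^ 2 := by
    intro i j
    rw [hN₂e]
    by_cases hikk : i = kk
    · rw [if_pos hikk]; exact hNsq i j
    · rw [if_neg hikk]
      have h2 : (N : Matrix (Fin n) (Fin n) R) i j
          + c₂ i * (N : Matrix (Fin n) (Fin n) R) kk j - (1 : Matrix (Fin n) (Fin n) R) i j
          = ((N : Matrix (Fin n) (Fin n) R) i j - (1 : Matrix (Fin n) (Fin n) R) i j)
            + c₂ i * (N : Matrix (Fin n) (Fin n) R) kk j := by ring
      rw [h2]
      exact add_mem (hNsq i j) (Ideal.mul_mem_right _ _ (hc₂sq i hikk))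
  have hN₂id : ∀ i j : Fin n, (↑i < k ∨ ↑j < k) →
      (N₂ : Matrix (Fin n) (Fin n) R) i j = (1 : Matrix (Fin n) (Fin n) R) i j := by
    intro i j hij
    rw [hN₂e]
    by_cases hikk : i = kk
    · subst hikk
      rw [if_pos rfl]
      rcases hij with h | h
      · exact absurd h (by simp [hkk])
      · exact hNid kk j (Or.inr h)
    · rw [if_neg hikk]
      rcases hij with h | h
      · have hikk0 : (N : Matrix (Fin n) (Fin n) R) i kk = 0 := by
          have := hNid i kk (Or.inl h)
          rwa [Matrix.one_apply_ne hikk] at this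
        rw [hc₂]
        simp only [hikk0, neg_zero, zero_mul, zero_mul, add_zero]
        exact hNid i j (Or.inl h)
      · have hkkj : kk ≠ j := by
          intro hc'
          subst hc'
          simp [hkk] at h
        have h0 : (N : Matrix (Fin n) (Fin n) R) kk j = 0 := by
          have := hNid kk j (Or.inr h)
          rwa [Matrix.one_apply_ne hkkj] at this
        rw [h0, mul_zero, add_zero]
        exact hNid i j (Or.inr h)
  -- Phase 3 : clear the row to the right of the pivot
  set c₃ : Fin n → R := fun j => -((N : Matrix (Fin n) (Fin n) R) kk j) * w with hc₃
  have hc₃sq : ∀ j : Fin n, j ≠ kk → c₃ j ∈ 𝔞 ^ 2 := by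
    intro j hj
    have h1 := hNsq kk j
    rw [Matrix.one_apply_ne (fun hc => hj hc.symm), sub_zero] at h1
    exact Ideal.mul_mem_right _ _ (neg_mem h1)
  obtain ⟨F, hFV, hF⟩ := clearRow 𝔞 kk c₃ s₂ hks₂
    (fun j hj => hsqle (hc₃sq j ((hmem_s₂ j).mp hj)))
  set N₃ : SpecialLinearGroup (Fin n) R := N₂ * F with hN₃def
  have hN₃e : ∀ i j : Fin n, (N₃ : Matrix (Fin n) (Fin n) R) i j
      = if j = kk then (N₂ : Matrix (Fin n) (Fin n) R) i j
        else (N₂ : Matrix (Fin n) (Fin n) R) i j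
          + c₃ j * (N₂ : Matrix (Fin n) (Fin n) R) i kk := by
    intro i j
    rw [hN₃def, Matrix.SpecialLinearGroup.coe_mul, hF]
    by_cases hjkk : j = kk
    · rw [if_neg (fun h => ((hmem_s₂ j).mp h) hjkk), if_pos hjkk]
    · rw [if_pos ((hmem_s₂ j).mpr hjkk), if_neg hjkk]
  have hN₃kk : (N₃ : Matrix (Fin n) (Fin n) R) kk kk = u := by
    rw [hN₃e, if_pos rfl, hN₂kk]
  have hN₃col : ∀ i : Fin n, i ≠ kk → (N₃ : Matrix (Fin n) (Fin n) R) i kk = 0 := by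
    intro i hi
    rw [hN₃e, if_pos rfl]
    exact hN₂col i hi
  have hN₃row : ∀ j : Fin n, j ≠ kk → (N₃ : Matrix (Fin n) (Fin n) R) kk j = 0 := by
    intro j hj
    rw [hN₃e, if_neg hj, hN₂kk, hN₂kkrow, hc₃]
    have h2 : (N : Matrix (Fin n) (Fin n) R) kk j
        + -((N : Matrix (Fin n) (Fin n) R) kk j) * w * u
        = (N : Matrix (Fin n) (Fin n) R) kk j * (1 - w * u) := by ring
    rw [h2, hw']
    ring
  have hN₃off : ∀ i j : Fin n, i ≠ kk → j ≠ kk →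
      (N₃ : Matrix (Fin n) (Fin n) R) i j = (N₂ : Matrix (Fin n) (Fin n) R) i j := by
    intro i j hi hj
    rw [hN₃e, if_neg hj, hN₂col i hi, mul_zero, add_zero]
  have hN₃sq : ∀ i j, (N₃ : Matrix (Fin n) (Fin n) R) i j
      - (1 : Matrix (Fin n) (Fin n) R) i j ∈ 𝔞 ^ 2 := by
    intro i j
    rw [hN₃e]
    by_cases hjkk : j = kk
    · rw [if_pos hjkk]; exact hN₂sq i j
    · rw [if_neg hjkk]
      have h2 : (N₂ : Matrix (Fin n) (Fin n) R) i j
          + c₃ j * (N₂ : Matrix (Fin n) (Fin n) R) i kk - (1 : Matrix (Fin n) (Fin n) R) i j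
          = ((N₂ : Matrix (Fin n) (Fin n) R) i j - (1 : Matrix (Fin n) (Fin n) R) i j)
            + c₃ j * (N₂ : Matrix (Fin n) (Fin n) R) i kk := by ring
      rw [h2]
      exact add_mem (hN₂sq i j) (Ideal.mul_mem_right _ _ (hc₃sq j hjkk))
  have hN₃id : ∀ i j : Fin n, (↑i < k ∨ ↑j < k) →
      (N₃ : Matrix (Fin n) (Fin n) R) i j = (1 : Matrix (Fin n) (Fin n) R) i j := by
    intro i j hij
    rw [hN₃e]
    by_cases hjkk : j = kk
    · rw [if_pos hjkk]; exact hN₂id i j hij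
    · rw [if_neg hjkk]
      rcases hij with h | h
      · have hikk : i ≠ kk := by
          intro hc'
          subst hc'
          simp [hkk] at h
        rw [hN₂col i hikk, mul_zero, add_zero]
        exact hN₂id i j (Or.inl h)
      · have hkkj : kk ≠ j := fun hc' => hjkk hc'.symm
        have h0 : (N : Matrix (Fin n) (Fin n) R) kk j = 0 := by
          have := hNid kk j (Or.inr h)
          rwa [Matrix.one_apply_ne hkkj] at this
        rw [hc₃]
        simp only [h0, neg_zero, zero_mul]
        rw [add_zero]
        exact hN₂id i j (Or.inr h)
  have hkv : (kk : ℕ) = k := rfl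
  -- Phase 4 : normalize the pivot
  by_cases hkl : k + 1 < n
  · set kk' : Fin n := ⟨k + 1, hkl⟩ with hkk'
    have hkv' : (kk' : ℕ) = k + 1 := rfl
    have hne : kk ≠ kk' := Fin.ne_of_val_ne (by omega)
    have hwsq : w - 1 ∈ 𝔞 ^ 2 := by
      have h2 : w - 1 = -(w * (u - 1)) := by linear_combination hw'
      rw [h2]
      exact neg_mem (Ideal.mul_mem_left _ _ hu2)
    set W : SpecialLinearGroup (Fin n) R := dSL kk kk' hne w u hw' with hWdef
    have hWV : W ∈ Subgroup.closure (Tset 𝔞) := whitehead 𝔞 kk kk' hne w u hwsq hw'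
    have hPe : ∀ i j : Fin n,
        ((W * N₃ : SpecialLinearGroup (Fin n) R) : Matrix (Fin n) (Fin n) R) i j
        = (if i = kk then w else if i = kk' then u else 1)
          * (N₃ : Matrix (Fin n) (Fin n) R) i j := by
      intro i j
      rw [Matrix.SpecialLinearGroup.coe_mul]
      have hWc : (W : Matrix (Fin n) (Fin n) R) = dmat kk kk' w u := rfl
      rw [hWc, dmat, Matrix.diagonal_mul]
    have hEMF : (W * E₂ * E₁) * M * F = W * N₃ := by
      rw [hN₃def, hN₂def, hNdef]
      group
    refine ⟨W * E₂ * E₁, F, mul_mem (mul_mem hWV hE₂V) hE₁V, hFV, ?_, ?_⟩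
    · intro i j
      rw [hEMF, hPe]
      by_cases hikk : i = kk
      · subst hikk
        rw [if_pos rfl]
        by_cases hjkk : j = kk
        · subst hjkk
          rw [hN₃kk, hw', Matrix.one_apply_eq, sub_self]
          exact zero_mem _
        · rw [hN₃row j hjkk, mul_zero, Matrix.one_apply_ne (fun hc => hjkk hc.symm), sub_zero]
          exact zero_mem _
      · rw [if_neg hikk]
        by_cases hikk' : i = kk'
        · subst hikk'
          rw [if_pos rfl]
          by_cases hjkk' : j = kk'
          · subst hjkk'
            rw [Matrix.one_apply_eq]
            have h2 : u * (N₃ : Matrix (Fin n) (Fin n) R) kk' kk' - 1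
                = (u - 1) * (N₃ : Matrix (Fin n) (Fin n) R) kk' kk'
                  + ((N₃ : Matrix (Fin n) (Fin n) R) kk' kk' - 1) := by ring
            rw [h2]
            refine add_mem (Ideal.mul_mem_right _ _ hu2) ?_
            have h3 := hN₃sq kk' kk'
            rwa [Matrix.one_apply_eq] at h3
          · rw [Matrix.one_apply_ne (fun hc => hjkk' hc.symm), sub_zero]
            refine Ideal.mul_mem_left _ _ ?_
            have h3 := hN₃sq kk' j
            rwa [Matrix.one_apply_ne (fun hc => hjkk' hc.symm), sub_zero] at h3
        · rw [if_neg hikk', one_mul]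
          exact hN₃sq i j
    · intro i j hij
      rw [hEMF, hPe]
      by_cases hikk : i = kk
      · subst hikk
        rw [if_pos rfl]
        by_cases hjkk : j = kk
        · subst hjkk; rw [hN₃kk, hw', Matrix.one_apply_eq]
        · rw [hN₃row j hjkk, mul_zero, Matrix.one_apply_ne (fun hc => hjkk hc.symm)]
      · rw [if_neg hikk]
        have hival : (i : ℕ) ≠ k := fun hc => hikk (Fin.ext hc)
        by_cases hilt : (i : ℕ) < k
        · have hikk' : i ≠ kk' := fun hc => by
            rw [hc, hkv'] at hilt; omega
          rw [if_neg hikk', one_mul]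
          exact hN₃id i j (Or.inl hilt)
        · have hjlt : (j : ℕ) < k + 1 := by
            rcases hij with h | h
            · omega
            · exact h
          by_cases hjkk : j = kk
          · subst hjkk
            rw [hN₃col i hikk, mul_zero, Matrix.one_apply_ne hikk]
          · have hjval : (j : ℕ) ≠ k := fun hc => hjkk (Fin.ext hc)
            have hjk : (j : ℕ) < k := by omega
            have h4 := hN₃id i j (Or.inr hjk)
            rw [h4]
            by_cases hikk' : i = kk'
            · subst hikk'
              rw [if_pos rfl]
              have hkkj' : kk' ≠ j := Fin.ne_of_val_ne (by omega)
              rw [Matrix.one_apply_ne hkkj', mul_zero]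
            · rw [if_neg hikk', one_mul]
  · have hkn : k + 1 = n := by omega
    have hrowlt : ∀ i : Fin n, i ≠ kk → (i : ℕ) < k := by
      intro i hi
      have h1 : (i : ℕ) < n := i.isLt
      have h2 : (i : ℕ) ≠ k := fun hc => hi (Fin.ext hc)
      omega
    have hdiag : (N₃ : Matrix (Fin n) (Fin n) R)
        = Matrix.diagonal (fun i => if i = kk then u else 1) := by
      ext i j
      rw [Matrix.diagonal_apply]
      by_cases hij : i = j
      · subst hij
        by_cases hikk : i = kk
        · subst hikk; rw [if_pos rfl, if_pos rfl, hN₃kk]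
        · rw [if_pos rfl, if_neg hikk]
          have h5 := hN₃id i i (Or.inl (hrowlt i hikk))
          rw [h5, Matrix.one_apply_eq]
      · rw [if_neg hij]
        by_cases hikk : i = kk
        · subst hikk; exact hN₃row j (fun hc => hij hc.symm)
        · have h5 := hN₃id i j (Or.inl (hrowlt i hikk))
          rw [h5, Matrix.one_apply_ne hij]
    have hdet3 : (N₃ : Matrix (Fin n) (Fin n) R).det = 1 := N₃.2
    have hu1 : u = 1 := by
      rw [hdiag, Matrix.det_diagonal] at hdet3
      rwa [Finset.prod_ite_eq' Finset.univ kk (fun _ => u),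
        if_pos (Finset.mem_univ kk)] at hdet3
    have hN₃1 : (N₃ : Matrix (Fin n) (Fin n) R) = 1 := by
      rw [hdiag, hu1]
      have h6 : (fun i : Fin n => if i = kk then (1 : R) else 1) = fun _ => 1 :=
        funext fun i => by split_ifs <;> rfl
      rw [h6, Matrix.diagonal_one]
    have hEMF : (E₂ * E₁) * M * F = N₃ := by
      rw [hN₃def, hN₂def, hNdef]
      group
    refine ⟨E₂ * E₁, F, mul_mem hE₂V hE₁V, hFV, ?_, ?_⟩
    · intro i j
      rw [hEMF, hN₃1, sub_self]
      exact zero_mem _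
    · intro i j _
      rw [hEMF, hN₃1]
lemma part1 (𝔞 : Ideal R) (M : SpecialLinearGroup (Fin n) R)
    (h : ∀ i j, (M : Matrix (Fin n) (Fin n) R) i j
      - (1 : Matrix (Fin n) (Fin n) R) i j ∈ 𝔞 ^ 2) :
    M ∈ Subgroup.closure (Tset 𝔞) := by
  suffices haux : ∀ (jj k : ℕ), n ≤ k + jj → ∀ M : SpecialLinearGroup (Fin n) R,
      (∀ i j, (M : Matrix (Fin n) (Fin n) R) i j
        - (1 : Matrix (Fin n) (Fin n) R) i j ∈ 𝔞 ^ 2) →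
      (∀ i j : Fin n, (↑i < k ∨ ↑j < k) →
        (M : Matrix (Fin n) (Fin n) R) i j = (1 : Matrix (Fin n) (Fin n) R) i j) →
      M ∈ Subgroup.closure (Tset 𝔞) by
    exact haux n 0 (by omega) M h
      (fun i j hij => by rcases hij with h' | h' <;> exact absurd h' (Nat.not_lt_zero _))
  intro jj
  induction jj with
  | zero =>
    intro k hk M hsq hid
    have hM1 : M = 1 := by
      apply Subtype.ext
      ext i j
      rw [Matrix.SpecialLinearGroup.coe_one]
      exact hid i j (Or.inl (lt_of_lt_of_le i.isLt (by omega)))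
    rw [hM1]
    exact one_mem _
  | succ m ih =>
    intro k hk M hsq hid
    by_cases hkn : k < n
    · obtain ⟨E, F, hEV, hFV, hsq', hid'⟩ := step 𝔞 k hkn M hsq hid
      have hmem := ih (k + 1) (by omega) (E * M * F) hsq' hid'
      have hM : M = E⁻¹ * (E * M * F) * F⁻¹ := by group
      rw [hM]
      exact mul_mem (mul_mem (inv_mem hEV) hmem) (inv_mem hFV)
    · exact ih k (by omega) M hsq hid

end SLNGen

open SLNGen in
/-- For a commutative local ring `R`, `n ≥ 2` and an ideal `𝔞` of `R`,
with `U_𝔞 = {M ∈ SL_n(R) : M ≡ I mod 𝔞}` and `V_𝔞` the subgroup generated by the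
transvections `t_ab^r`, `r ∈ 𝔞`, one has `U_{𝔞²} ⊆ V_𝔞 ⊆ U_𝔞`. In particular
(`𝔞 = R`), `SL_n(R)` is generated by the elementary transvections. -/
theorem sln_transvection_generation
    {R : Type*} [CommRing R] [IsLocalRing R] (n : ℕ) (hn : 2 ≤ n) (𝔞 : Ideal R) :
    (∀ M : SpecialLinearGroup (Fin n) R,
      (∀ i j, (M : Matrix (Fin n) (Fin n) R) i j - (1 : Matrix (Fin n) (Fin n) R) i j ∈ 𝔞 ^ 2) →
      M ∈ Subgroup.closure {T : SpecialLinearGroup (Fin n) R |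
        ∃ (a b : Fin n) (r : R), a ≠ b ∧ r ∈ 𝔞 ∧
          (T : Matrix (Fin n) (Fin n) R) = Matrix.transvection a b r}) ∧
    (∀ M ∈ Subgroup.closure {T : SpecialLinearGroup (Fin n) R |
        ∃ (a b : Fin n) (r : R), a ≠ b ∧ r ∈ 𝔞 ∧
          (T : Matrix (Fin n) (Fin n) R) = Matrix.transvection a b r},
      ∀ i j, (M : Matrix (Fin n) (Fin n) R) i j - (1 : Matrix (Fin n) (Fin n) R) i j ∈ 𝔞) ∧
    Subgroup.closure {T : SpecialLinearGroup (Fin n) R |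
        ∃ (a b : Fin n) (r : R), a ≠ b ∧
          (T : Matrix (Fin n) (Fin n) R) = Matrix.transvection a b r} = ⊤ := by
  refine ⟨fun M hM => part1 𝔞 M hM, fun M hM => mem_U_of_mem_closure 𝔞 hM, ?_⟩
  have hset : {T : SpecialLinearGroup (Fin n) R |
      ∃ (a b : Fin n) (r : R), a ≠ b ∧
        (T : Matrix (Fin n) (Fin n) R) = Matrix.transvection a b r}
      = Tset (⊤ : Ideal R) := by
    ext T
    simp [Tset]
  rw [hset, Subgroup.eq_top_iff']
  intro M
  exact part1 ⊤ M (fun i j => by rw [Ideal.top_pow]; exact Submodule.mem_top)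
end

section
/- Let R be a commutative local ring with residue field k and let n ≥ 2. If n ≥ 3, or if n = 2 and k has more than 3 elements (k ≠ F₂ and k ≠ F₃), then the commutator subgroup of SL_n(R) is equal to SL_n(R). -/
open Matrix IsLocalRing

namespace SlnPerfect
variable {R : Type*} [CommRing R] {n : ℕ}

lemma coe_mul' (A B : SpecialLinearGroup (Fin n) R) : (A * B).val = A.val * B.val := rfl

lemma coe_one' : (1 : SpecialLinearGroup (Fin n) R).val = 1 := rfl

lemma tv_apply (i j a b : Fin n) (c : R) :
    Matrix.transvection i j c a b
      = (if a = b then 1 else 0) + (if a = i ∧ b = j then c else 0) := by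
  rcases eq_or_ne a i with rfl | hai <;> rcases eq_or_ne b j with rfl | hbj
  · simp [transvection, one_apply]
  · simp [transvection, one_apply, single_apply_of_col_ne _ _ (Ne.symm hbj), hbj]
  · simp [transvection, one_apply, single_apply_of_row_ne (Ne.symm hai), hai]
  · simp [transvection, one_apply, single_apply_of_row_ne (Ne.symm hai), hai]

def E {i j : Fin n} (h : i ≠ j) (c : R) : SpecialLinearGroup (Fin n) R :=
  ⟨Matrix.transvection i j c, Matrix.det_transvection_of_ne i j h c⟩

def W {i j : Fin n} (h : i ≠ j) (u : Rˣ) : SpecialLinearGroup (Fin n) R :=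
  E h (u : R) * E h.symm (-((u⁻¹ : Rˣ) : R)) * E h (u : R) * E h (-1) * E h.symm 1 * E h (-1)

def Wd (i j : Fin n) (u : Rˣ) : Matrix (Fin n) (Fin n) R :=
  diagonal (fun t => if t = i then (u : R) else if t = j then ((u⁻¹ : Rˣ) : R) else 1)

lemma W_val {i j : Fin n} (h : i ≠ j) (u : Rˣ) :
    (W h u).val = Wd i j u := by
  have hvw : (u : R) * ((u⁻¹ : Rˣ) : R) = 1 := u.mul_inv
  ext a b
  simp only [W, coe_mul']; simp only [E, Wd]
  by_cases hai : a = i <;> by_cases haj : a = j <;>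
    by_cases hbi : b = i <;> by_cases hbj : b = j <;>
    [ exact absurd (hai ▸ haj ▸ rfl : (i:Fin n) = j) h;
      exact absurd (hai ▸ haj ▸ rfl : (i:Fin n) = j) h;
      exact absurd (hai ▸ haj ▸ rfl : (i:Fin n) = j) h;
      exact absurd (hai ▸ haj ▸ rfl : (i:Fin n) = j) h;
      exact absurd (hbi ▸ hbj ▸ rfl : (i:Fin n) = j) h;
      skip; skip; skip;
      exact absurd (hbi ▸ hbj ▸ rfl : (i:Fin n) = j) h;
      skip; skip; skip;
      exact absurd (hbi ▸ hbj ▸ rfl : (i:Fin n) = j) h;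
      skip; skip; skip] <;>
    simp only [hai, haj, hbi, hbj, diagonal_apply, if_pos rfl,
          mul_transvection_apply_same, mul_transvection_apply_of_ne, tv_apply,
          h, h.symm, Ne.symm h, ne_eq, not_false_eq_true, if_true, if_neg,
          true_and, false_and, and_true, and_false, if_false, add_zero, zero_add,
          one_mul, mul_one, mul_zero, zero_mul, neg_zero]
  all_goals first
    | ring1
    | (simp [Ne.symm hbi, Ne.symm hbj])
    | linear_combination (-(u:R)) * hvw
    | linear_combination hvw
    | linear_combination -hvw

def T (R : Type*) [CommRing R] (n : ℕ) : Set (SpecialLinearGroup (Fin n) R) :=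
  { A | ∃ (i j : Fin n) (h : i ≠ j) (c : R), A = E h c }

def H (R : Type*) [CommRing R] (n : ℕ) : Subgroup (SpecialLinearGroup (Fin n) R) :=
  Subgroup.closure (T R n)

lemma E_mem_H {i j : Fin n} (h : i ≠ j) (c : R) : E h c ∈ H R n :=
  Subgroup.subset_closure ⟨i, j, h, c, rfl⟩

lemma W_mem_H {i j : Fin n} (h : i ≠ j) (u : Rˣ) : W h u ∈ H R n := by
  unfold W
  exact Subgroup.mul_mem _ (Subgroup.mul_mem _ (Subgroup.mul_mem _ (Subgroup.mul_mem _
    (Subgroup.mul_mem _ (E_mem_H h _) (E_mem_H h.symm _)) (E_mem_H h _)) (E_mem_H h _))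
    (E_mem_H h.symm _)) (E_mem_H h _)

lemma E_mul_E {i j : Fin n} (h : i ≠ j) (c d : R) :
    E h c * E h d = E h (c + d) := by
  apply Subtype.ext
  simp only [coe_mul']; simp [E,
    Matrix.transvection_mul_transvection_same _ _ h]

lemma E_inv {i j : Fin n} (h : i ≠ j) (c : R) :
    (E h c)⁻¹ = E h (-c) := by
  apply inv_eq_of_mul_eq_one_right
  rw [E_mul_E, add_neg_cancel]
  apply Subtype.ext
  simp [E]

lemma E_mul_apply {i j : Fin n} (h : i ≠ j) (c : R) (M : Matrix (Fin n) (Fin n) R)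
    (a b : Fin n) :
    ((E h c).val * M) a b = M a b + if a = i then c * M j b else 0 := by
  rcases eq_or_ne a i with rfl | ha
  · simp [E]
  · simp [E, ha]

lemma mul_E_apply {i j : Fin n} (h : i ≠ j) (c : R) (M : Matrix (Fin n) (Fin n) R)
    (a b : Fin n) :
    (M * (E h c).val) a b = M a b + if b = j then c * M a i else 0 := by
  rcases eq_or_ne b j with rfl | hb
  · simp [E]
  · simp [E, hb]

lemma W_mul_apply {i j : Fin n} (h : i ≠ j) (u : Rˣ) (M : Matrix (Fin n) (Fin n) R)
    (a b : Fin n) :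
    ((W h u).val * M) a b
      = if a = i then (u : R) * M a b
        else if a = j then ((u⁻¹ : Rˣ) : R) * M a b else M a b := by
  rw [W_val, Wd, diagonal_mul]
  split_ifs <;> simp

/-- the invariant: the first `r` columns and rows of `A` agree with those of `1`. -/
def Inv (r : ℕ) (A : Matrix (Fin n) (Fin n) R) : Prop :=
  ∀ j i : Fin n, (j : ℕ) < r →
    (A i j = if i = j then (1:R) else 0) ∧ (A j i = if j = i then (1:R) else 0)

lemma Inv.col {r : ℕ} {A : Matrix (Fin n) (Fin n) R} (hA : Inv r A)
    {j : Fin n} (hj : (j:ℕ) < r) (i : Fin n) :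
    A i j = if i = j then (1:R) else 0 := (hA j i hj).1

lemma Inv.row {r : ℕ} {A : Matrix (Fin n) (Fin n) R} (hA : Inv r A)
    {j : Fin n} (hj : (j:ℕ) < r) (i : Fin n) :
    A j i = if j = i then (1:R) else 0 := (hA j i hj).2

lemma Inv_E_mul {r : ℕ} {p q : Fin n} (h : p ≠ q) (c : R)
    {A : Matrix (Fin n) (Fin n) R} (hA : Inv r A)
    (hp : r ≤ (p:ℕ)) (hq : r ≤ (q:ℕ)) : Inv r ((E h c).val * A) := by
  intro j i hj
  have hpj : p ≠ j := fun e => absurd (e ▸ hp) (by omega)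
  have hqj : q ≠ j := fun e => absurd (e ▸ hq) (by omega)
  have hjp : j ≠ p := hpj.symm
  constructor
  · rw [E_mul_apply, hA.col hj, hA.col hj]
    rcases eq_or_ne i p with rfl | hip
    · simp [hqj]
    · simp [hip]
  · rw [E_mul_apply, hA.row hj]
    simp [hjp]

lemma Inv_mul_E {r : ℕ} {p q : Fin n} (h : p ≠ q) (c : R)
    {A : Matrix (Fin n) (Fin n) R} (hA : Inv r A)
    (hp : r ≤ (p:ℕ)) (hq : r ≤ (q:ℕ)) : Inv r (A * (E h c).val) := by
  intro j i hj
  have hpj : p ≠ j := fun e => absurd (e ▸ hp) (by omega)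
  have hqj : q ≠ j := fun e => absurd (e ▸ hq) (by omega)
  have hjq : j ≠ q := hqj.symm
  constructor
  · rw [mul_E_apply, hA.col hj]
    simp [hjq, hA.col hj]
  · rw [mul_E_apply, hA.row hj, hA.row hj]
    rcases eq_or_ne i q with rfl | hiq
    · simp [hpj.symm]
    · simp [hiq]

lemma Inv_W_mul {r : ℕ} {p q : Fin n} (h : p ≠ q) (u : Rˣ)
    {A : Matrix (Fin n) (Fin n) R} (hA : Inv r A)
    (hp : r ≤ (p:ℕ)) (hq : r ≤ (q:ℕ)) : Inv r ((W h u).val * A) := by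
  intro j i hj
  have hpj : p ≠ j := fun e => absurd (e ▸ hp) (by omega)
  have hqj : q ≠ j := fun e => absurd (e ▸ hq) (by omega)
  constructor
  · rw [W_mul_apply, hA.col hj]
    rcases eq_or_ne i p with rfl | hip
    · simp [hpj]
    · rcases eq_or_ne i q with rfl | hiq
      · simp [hip, hqj]
      · simp [hip, hiq]
  · rw [W_mul_apply, hA.row hj]
    simp [hpj.symm, hqj.symm]

section LocalRing
variable [IsLocalRing R]

lemma unit_add {a b : R} (ha : IsUnit a) (hb : ¬IsUnit b) : IsUnit (a + b) := by
  by_contra hc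
  have h1 : a + b ∈ maximalIdeal R := (IsLocalRing.mem_maximalIdeal _).2 (mem_nonunits_iff.2 hc)
  have h2 : b ∈ maximalIdeal R := (IsLocalRing.mem_maximalIdeal _).2 (mem_nonunits_iff.2 hb)
  have h3 : a ∈ maximalIdeal R := by
    have := Ideal.sub_mem _ h1 h2
    simpa using this
  exact mem_nonunits_iff.1 ((IsLocalRing.mem_maximalIdeal _).1 h3) ha

lemma exists_unit_pivot {r : ℕ} (hrn : r < n) (A : SpecialLinearGroup (Fin n) R)
    (hA : Inv r A.val) : ∃ k : Fin n, r ≤ (k:ℕ) ∧ IsUnit (A.val k ⟨r, hrn⟩) := by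
  by_contra hcon
  push_neg at hcon
  have hall : ∀ k : Fin n, A.val k ⟨r,hrn⟩ ∈ maximalIdeal R := by
    intro k
    by_cases hk : r ≤ (k:ℕ)
    · exact (IsLocalRing.mem_maximalIdeal _).2 (mem_nonunits_iff.2 (hcon k hk))
    · have hne : k ≠ ⟨r,hrn⟩ := by
        intro e
        rw [e] at hk
        exact hk le_rfl
      rw [hA.row (show (k:ℕ) < r by omega) ⟨r,hrn⟩, if_neg hne]
      exact (maximalIdeal R).zero_mem
  have hdet : (1:R) ∈ maximalIdeal R := by
    have h1 : (adjugate A.val * A.val) ⟨r,hrn⟩ ⟨r,hrn⟩ = 1 := by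
      rw [Matrix.adjugate_mul, A.prop]
      simp
    rw [Matrix.mul_apply] at h1
    rw [← h1]
    exact Ideal.sum_mem _ (fun k _ => Ideal.mul_mem_left _ _ (hall k))
  exact (IsLocalRing.maximalIdeal.isMaximal R).ne_top
    (Ideal.eq_top_of_isUnit_mem _ hdet isUnit_one)

lemma pivot_fix {r : ℕ} (hrn : r < n) (A : SpecialLinearGroup (Fin n) R) (hA : Inv r A.val) :
    ∃ g ∈ H R n, Inv r (g*A).val ∧ IsUnit ((g*A).val ⟨r,hrn⟩ ⟨r,hrn⟩) := by
  obtain ⟨k, hkr, hk⟩ := exists_unit_pivot hrn A hA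
  by_cases hpivot : IsUnit (A.val ⟨r,hrn⟩ ⟨r,hrn⟩)
  · exact ⟨1, one_mem _, by simpa using hA, by simpa using hpivot⟩
  · have hkr' : k ≠ ⟨r,hrn⟩ := by
      intro e
      rw [e] at hk
      exact hpivot hk
    have hne : (⟨r,hrn⟩ : Fin n) ≠ k := Ne.symm hkr'
    refine ⟨E hne 1, E_mem_H _ _, ?_, ?_⟩
    · rw [coe_mul']
      exact Inv_E_mul hne 1 hA le_rfl hkr
    · rw [coe_mul', E_mul_apply, if_pos rfl, one_mul, add_comm]
      exact unit_add hk hpivot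

lemma clearcol {r : ℕ} (hrn : r < n) :
    ∀ (s : ℕ) (A : SpecialLinearGroup (Fin n) R), Inv r A.val →
    IsUnit (A.val ⟨r,hrn⟩ ⟨r,hrn⟩) →
    (∀ i : Fin n, s ≤ (i:ℕ) → i ≠ ⟨r,hrn⟩ → A.val i ⟨r,hrn⟩ = 0) →
    ∃ g ∈ H R n, Inv r (g*A).val ∧
      (∀ b, (g*A).val ⟨r,hrn⟩ b = A.val ⟨r,hrn⟩ b) ∧
      (∀ i, i ≠ ⟨r,hrn⟩ → (g*A).val i ⟨r,hrn⟩ = 0) := by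
  intro s
  induction s with
  | zero =>
    intro A hA hu hz
    exact ⟨1, one_mem _, by simpa using hA, by simp, fun i hi => by
      simpa using hz i (Nat.zero_le _) hi⟩
  | succ s ih =>
    intro A hA hu hz
    by_cases hs : s < n
    · set rr : Fin n := ⟨r, hrn⟩ with hrr
      set is : Fin n := ⟨s, hs⟩ with his
      by_cases hcase : is = rr ∨ A.val is rr = 0
      · refine ih A hA hu (fun i hi hir => ?_)
        rcases eq_or_ne i is with rfl | hiis
        · rcases hcase with h1 | h2
          · exact absurd h1 hir
          · exact h2
        · have : (i:ℕ) ≠ s := fun e => hiis (Fin.ext e)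
          exact hz i (by omega) hir
      · push_neg at hcase
        obtain ⟨hisr, hnz⟩ := hcase
        have hrle : r ≤ s := by
          by_contra hlt
          push_neg at hlt
          apply hnz
          have hv : ((is : Fin n) : ℕ) < r := by simp [his]; omega
          rw [hA.row hv rr, if_neg hisr]
        set u := hu.unit with hu'
        set c : R := -(A.val is rr * ((u⁻¹:Rˣ):R)) with hc
        set A' := E hisr c * A with hA'def
        have hval : A'.val = (E hisr c).val * A.val := rfl
        have hInv' : Inv r A'.val := by
          rw [hval]; exact Inv_E_mul hisr c hA (by simpa using hrle) le_rfl
        have hrowpres : ∀ b, A'.val rr b = A.val rr b := by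
          intro b
          rw [hval, E_mul_apply, if_neg (Ne.symm hisr), add_zero]
        have hu2 : IsUnit (A'.val rr rr) := by rw [hrowpres]; exact hu
        have hz' : ∀ i : Fin n, s ≤ (i:ℕ) → i ≠ rr → A'.val i rr = 0 := by
          intro i hi hir
          rcases eq_or_ne i is with rfl | hiis
          · rw [hval, E_mul_apply, if_pos rfl]
            have hspec : (u : R) = A.val rr rr := hu.unit_spec
            rw [hc, ← hspec]
            have : ((u⁻¹:Rˣ):R) * (u:R) = 1 := u.inv_mul
            ring_nf
            rw [mul_assoc]
            rw [this]  -- may need adjusting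
            ring
          · rw [hval, E_mul_apply, if_neg hiis, add_zero]
            have : (i:ℕ) ≠ s := fun e => hiis (Fin.ext e)
            exact hz i (by omega) hir
        obtain ⟨g, hg, h1, h2, h3⟩ := ih A' hInv' hu2 hz'
        refine ⟨g * E hisr c, mul_mem hg (E_mem_H _ _), ?_, ?_, ?_⟩
        · rw [mul_assoc]; exact h1
        · intro b; rw [mul_assoc]; rw [h2 b, hrowpres]
        · intro i hi; rw [mul_assoc]; exact h3 i hi
    · refine ih A hA hu (fun i hi hir => ?_)
      exact absurd i.isLt (by omega)

lemma clearrow {r : ℕ} (hrn : r < n) :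
    ∀ (s : ℕ) (A : SpecialLinearGroup (Fin n) R), Inv r A.val →
    IsUnit (A.val ⟨r,hrn⟩ ⟨r,hrn⟩) →
    (∀ j : Fin n, s ≤ (j:ℕ) → j ≠ ⟨r,hrn⟩ → A.val ⟨r,hrn⟩ j = 0) →
    ∃ g ∈ H R n, Inv r (A*g).val ∧
      (∀ i, (A*g).val i ⟨r,hrn⟩ = A.val i ⟨r,hrn⟩) ∧
      (∀ j, j ≠ ⟨r,hrn⟩ → (A*g).val ⟨r,hrn⟩ j = 0) := by
  intro s
  induction s with
  | zero =>
    intro A hA hu hz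
    exact ⟨1, one_mem _, by simpa using hA, by simp, fun j hj => by
      simpa using hz j (Nat.zero_le _) hj⟩
  | succ s ih =>
    intro A hA hu hz
    by_cases hs : s < n
    · set rr : Fin n := ⟨r, hrn⟩ with hrr
      set js : Fin n := ⟨s, hs⟩ with hjs
      by_cases hcase : js = rr ∨ A.val rr js = 0
      · refine ih A hA hu (fun j hj hjr => ?_)
        rcases eq_or_ne j js with rfl | hjjs
        · rcases hcase with h1 | h2
          · exact absurd h1 hjr
          · exact h2
        · have : (j:ℕ) ≠ s := fun e => hjjs (Fin.ext e)
          exact hz j (by omega) hjr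
      · push_neg at hcase
        obtain ⟨hjsr, hnz⟩ := hcase
        have hrle : r ≤ s := by
          by_contra hlt
          push_neg at hlt
          apply hnz
          have hv : ((js : Fin n) : ℕ) < r := by simp [hjs]; omega
          rw [hA.col hv rr, if_neg (Ne.symm hjsr)]
        set u := hu.unit with hu'
        set c : R := -(A.val rr js * ((u⁻¹:Rˣ):R)) with hc
        have hrjs : rr ≠ js := Ne.symm hjsr
        set A' := A * E hrjs c with hA'def
        have hval : A'.val = A.val * (E hrjs c).val := rfl
        have hInv' : Inv r A'.val := by
          rw [hval]; exact Inv_mul_E hrjs c hA le_rfl (by simpa using hrle)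
        have hcolpres : ∀ i, A'.val i rr = A.val i rr := by
          intro i
          rw [hval, mul_E_apply, if_neg hrjs, add_zero]
        have hu2 : IsUnit (A'.val rr rr) := by rw [hcolpres]; exact hu
        have hz' : ∀ j : Fin n, s ≤ (j:ℕ) → j ≠ rr → A'.val rr j = 0 := by
          intro j hj hjr
          rcases eq_or_ne j js with rfl | hjjs
          · rw [hval, mul_E_apply, if_pos rfl]
            have hspec : (u : R) = A.val rr rr := hu.unit_spec
            rw [hc, ← hspec]
            have h1 : ((u⁻¹:Rˣ):R) * (u:R) = 1 := u.inv_mul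
            ring_nf
            rw [mul_assoc, h1]
            ring
          · rw [hval, mul_E_apply, if_neg hjjs, add_zero]
            have : (j:ℕ) ≠ s := fun e => hjjs (Fin.ext e)
            exact hz j (by omega) hjr
        obtain ⟨g, hg, h1, h2, h3⟩ := ih A' hInv' hu2 hz'
        refine ⟨E hrjs c * g, mul_mem (E_mem_H _ _) hg, ?_, ?_, ?_⟩
        · rw [← mul_assoc]; exact h1
        · intro i; rw [← mul_assoc, h2 i, hcolpres]
        · intro j hj; rw [← mul_assoc]; exact h3 j hj
    · refine ih A hA hu (fun j hj hjr => ?_)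
      exact absurd j.isLt (by omega)

lemma step {r : ℕ} (hr1 : r + 1 < n) (A : SpecialLinearGroup (Fin n) R)
    (hA : Inv r A.val) :
    ∃ g₁ ∈ H R n, ∃ g₂ ∈ H R n, Inv (r+1) (g₁ * A * g₂).val := by
  have hrn : r < n := by omega
  set rr : Fin n := ⟨r, hrn⟩ with hrr
  set rr1 : Fin n := ⟨r+1, hr1⟩ with hrr1
  have hner : rr ≠ rr1 := by
    intro e
    have := congrArg Fin.val e
    simp [hrr, hrr1] at this
  obtain ⟨ga, hga, hA1, hu1⟩ := pivot_fix hrn A hA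
  obtain ⟨gb, hgb, hA2, hrow2, hcol2⟩ := clearcol hrn n (ga * A) hA1 hu1
    (fun i hi _ => absurd i.isLt (by omega))
  set B := gb * (ga * A) with hB
  have hu2 : IsUnit (B.val rr rr) := by rw [hrow2 rr]; exact hu1
  obtain ⟨gc, hgc, hA3, hcol3, hrow3⟩ := clearrow hrn n B hA2 hu2
    (fun j hj _ => absurd j.isLt (by omega))
  set C := B * gc with hC
  have hcolC : ∀ i, i ≠ rr → C.val i rr = 0 := fun i hi => by
    rw [hcol3 i]; exact hcol2 i hi
  have hpivC : C.val rr rr = B.val rr rr := hcol3 rr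
  have huC : IsUnit (C.val rr rr) := by rw [hpivC]; exact hu2
  set u := huC.unit with hu'
  have huspec : (u : R) = C.val rr rr := huC.unit_spec
  set D := W hner u⁻¹ * C with hD
  have hDval : D.val = (W hner u⁻¹).val * C.val := rfl
  have hDapp : ∀ a b, D.val a b = if a = rr then ((u⁻¹:Rˣ):R) * C.val a b
      else if a = rr1 then (u:R) * C.val a b else C.val a b := by
    intro a b
    rw [hDval, W_mul_apply]
    simp
  have hInvD : Inv (r+1) D.val := by
    intro j i hj
    rcases lt_or_eq_of_le (Nat.lt_succ_iff.1 hj) with hjr | hjr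
    · -- j < r : old invariant, rows/cols untouched appropriately
      have hjrr : j ≠ rr := fun e => by simp [e, hrr] at hjr
      have hjrr1 : j ≠ rr1 := fun e => by
        have := congrArg Fin.val e; simp [hrr1] at this; omega
      constructor
      · rw [hDapp]
        rcases eq_or_ne i rr with rfl | hirr
        · rw [if_pos rfl, hA3.col hjr, if_neg (Ne.symm hjrr), mul_zero]
        · rcases eq_or_ne i rr1 with rfl | hirr1
          · rw [if_neg hirr, if_pos rfl, hA3.col hjr, if_neg (Ne.symm hjrr1), mul_zero]
          · rw [if_neg hirr, if_neg hirr1, hA3.col hjr]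
      · rw [hDapp, if_neg hjrr, if_neg hjrr1]
        exact hA3.row hjr i
    · -- j = r, i.e. j = rr
      have hjeq : j = rr := Fin.ext (by simpa [hrr] using hjr)
      subst hjeq
      constructor
      · rw [hDapp]
        rcases eq_or_ne i rr with rfl | hirr
        · rw [if_pos rfl, ← huspec, Units.inv_mul, if_pos rfl]
        · rcases eq_or_ne i rr1 with rfl | hirr1
          · rw [if_neg hirr, if_pos rfl, hcolC rr1 (Ne.symm hner), mul_zero, if_neg hirr]
          · rw [if_neg hirr, if_neg hirr1, hcolC i hirr, if_neg hirr]
      · rw [hDapp, if_pos rfl]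
        rcases eq_or_ne i rr with rfl | hirr
        · rw [← huspec, Units.inv_mul, if_pos rfl]
        · rw [hrow3 i hirr, mul_zero, if_neg (Ne.symm hirr)]
  refine ⟨W hner u⁻¹ * (gb * ga), ?_, gc, hgc, ?_⟩
  · exact mul_mem (W_mem_H _ _) (mul_mem hgb hga)
  · have : W hner u⁻¹ * (gb * ga) * A * gc = D := by
      rw [hD, hC, hB]; group
    rw [this]
    exact hInvD

omit [IsLocalRing R] in
lemma inv_last (hn : 1 ≤ n) (A : SpecialLinearGroup (Fin n) R)
    (hA : Inv (n-1) A.val) : A = 1 := by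
  have hlast : n - 1 < n := by omega
  set last : Fin n := ⟨n-1, hlast⟩ with hlastdef
  have hoff : ∀ a b : Fin n, a ≠ b → A.val a b = 0 := by
    intro a b hab
    by_cases ha : (a:ℕ) < n - 1
    · rw [hA.row ha b, if_neg hab]
    · by_cases hb : (b:ℕ) < n - 1
      · rw [hA.col hb a, if_neg hab]
      · exact absurd (Fin.ext (by omega : (a:ℕ) = (b:ℕ))) hab
  have hdiag : ∀ i : Fin n, (i:ℕ) < n - 1 → A.val i i = 1 := by
    intro i hi
    rw [hA.col hi i, if_pos rfl]
  have hd : A.val = diagonal (fun i => A.val i i) := by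
    ext a b
    rcases eq_or_ne a b with rfl | hab
    · rw [diagonal_apply_eq]
    · rw [diagonal_apply_ne _ hab, hoff a b hab]
  have hdet : ∏ i, A.val i i = 1 := by
    rw [← det_diagonal, ← hd, A.prop]
  have hprod : ∏ i, A.val i i = A.val last last := by
    apply Finset.prod_eq_single_of_mem _ (Finset.mem_univ _)
    intro i _ hi
    apply hdiag
    have : (i:ℕ) ≠ n - 1 := fun e => hi (Fin.ext e)
    omega
  have hlast1 : A.val last last = 1 := by rw [← hprod, hdet]
  apply Subtype.ext
  rw [hd, coe_one']
  ext a b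
  rcases eq_or_ne a b with rfl | hab
  · rw [diagonal_apply_eq]
    by_cases ha : (a:ℕ) < n - 1
    · rw [hdiag a ha, Matrix.one_apply_eq]
    · have : a = last := Fin.ext (by simp only [hlastdef]; omega)
      rw [this, hlast1, Matrix.one_apply_eq]
  · rw [diagonal_apply_ne _ hab, Matrix.one_apply_ne hab]

lemma reach (hn : 2 ≤ n) :
    ∀ k : ℕ, k ≤ n - 1 → ∀ A : SpecialLinearGroup (Fin n) R,
      Inv (n-1-k) A.val → A ∈ H R n := by
  intro k
  induction k with
  | zero =>
    intro _ A hA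
    rw [inv_last (by omega) A (by simpa using hA)]
    exact one_mem _
  | succ k ih =>
    intro hk A hA
    have hr1 : (n-1-(k+1)) + 1 < n := by omega
    obtain ⟨g₁, hg₁, g₂, hg₂, hD⟩ := step hr1 A hA
    have heq : (n-1-(k+1)) + 1 = n-1-k := by omega
    rw [heq] at hD
    have hmem : g₁ * A * g₂ ∈ H R n := ih (by omega) _ hD
    have : A = g₁⁻¹ * (g₁ * A * g₂) * g₂⁻¹ := by group
    rw [this]
    exact mul_mem (mul_mem (inv_mem hg₁) hmem) (inv_mem hg₂)

lemma elim (hn : 2 ≤ n) (A : SpecialLinearGroup (Fin n) R) : A ∈ H R n := by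
  apply reach hn (n-1) le_rfl A
  intro j i hj
  omega

end LocalRing

open scoped commutatorElement in
lemma E_eq_commutator_of_third {i j k : Fin n} (hij : i ≠ j) (hik : i ≠ k) (hkj : k ≠ j)
    (a : R) : E hij a = ⁅E hik a, E hkj 1⁆ := by
  rw [commutatorElement_def, E_inv, E_inv]
  apply Subtype.ext
  simp only [coe_mul']; simp only [E]
  have hki : k ≠ i := hik.symm
  have hji : j ≠ i := hij.symm
  have hjk : j ≠ k := hkj.symm
  simp only [transvection, Matrix.add_mul, Matrix.mul_add, Matrix.one_mul, Matrix.mul_one,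
    single_mul_single_same, single_mul_single_of_ne, hki, hji, hjk, ne_eq,
    not_false_eq_true, add_zero, zero_add, mul_one, one_mul, zero_mul, mul_zero,
    Matrix.zero_mul, Matrix.mul_zero, add_zero]
  have hneg : ∀ (p q : Fin n) (c : R), single p q (-c) = -single p q c := by
    intro p q c
    ext x y
    simp only [single_apply, neg_apply]
    split_ifs <;> simp [single_apply, *]
  rw [show (a * -1 : R) = -a by ring, show (-a * -1 : R) = a by ring,
    hneg, hneg, hneg]
  abel

open scoped commutatorElement in
lemma E_eq_commutator_W {i j : Fin n} (hij : i ≠ j) (u : Rˣ) {a b : R}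
    (hb : ((u:R) * (u:R) - 1) * b = a) : E hij a = ⁅W hij u, E hij b⁆ := by
  have hvw : (u : R) * ((u⁻¹ : Rˣ) : R) = 1 := u.mul_inv
  have key : W hij u * E hij b = E hij a * (E hij b * W hij u) := by
    apply Subtype.ext
    simp only [coe_mul', W_val]; simp only [E]
    rw [← Matrix.mul_assoc, transvection_mul_transvection_same _ _ hij]
    ext x y
    rw [Wd, diagonal_mul, mul_diagonal, tv_apply, tv_apply]
    by_cases hxy : x = y
    · subst hxy
      have : ¬(x = i ∧ x = j) := fun ⟨h1, h2⟩ => hij (h1 ▸ h2)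
      simp [this]
    · simp only [if_neg hxy, zero_add]
      by_cases hx : x = i ∧ y = j
      · obtain ⟨rfl, rfl⟩ := hx
        simp only [and_self, if_true, if_pos rfl, if_neg hij, if_neg (Ne.symm hij)]
        linear_combination (-(u:R)*b) * hvw + ((u⁻¹:Rˣ):R) * hb
      · simp [hx]
  rw [commutatorElement_def, key]
  group

lemma E_mem_commutator_of_three (hn3 : 3 ≤ n) {i j : Fin n} (hij : i ≠ j) (c : R) :
    E hij c ∈ commutator (SpecialLinearGroup (Fin n) R) := by
  have hcard : ({i, j} : Finset (Fin n)).card ≤ 2 :=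
    le_trans (Finset.card_insert_le _ _) (by simp)
  have hne : (({i, j} : Finset (Fin n))ᶜ).Nonempty := by
    rw [← Finset.card_pos, Finset.card_compl]
    simp only [Fintype.card_fin]
    omega
  obtain ⟨k, hk⟩ := hne
  rw [Finset.mem_compl, Finset.mem_insert, Finset.mem_singleton] at hk
  push_neg at hk
  obtain ⟨hki, hkj⟩ := hk
  rw [E_eq_commutator_of_third hij (Ne.symm hki) hkj c]
  rw [commutator_def]
  exact Subgroup.commutator_mem_commutator (Subgroup.mem_top _) (Subgroup.mem_top _)

section Residue
variable [IsLocalRing R]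

lemma exists_good_unit
    (hcard : 3 < Nat.card (IsLocalRing.ResidueField R) ∨
      Infinite (IsLocalRing.ResidueField R)) :
    ∃ u : Rˣ, IsUnit ((u:R) * (u:R) - 1) := by
  set k := IsLocalRing.ResidueField R
  letI : Field k := inferInstanceAs (Field (IsLocalRing.ResidueField R))
  have hS : ({0, 1, -1} : Set k).Finite := (Set.finite_singleton _).insert _ |>.insert _
  have hex : ∃ x : k, x ∉ ({0, 1, -1} : Set k) := by
    by_contra hc
    push_neg at hc
    have huniv : (Set.univ : Set k) ⊆ {0, 1, -1} := fun x _ => hc x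
    rcases hcard with hlt | hinf
    · have h1 : (Set.univ : Set k).ncard ≤ ({0, 1, -1} : Set k).ncard :=
        Set.ncard_le_ncard huniv hS
      have h2 : ({0, 1, -1} : Set k).ncard ≤ 3 := by
        apply le_trans (Set.ncard_insert_le _ _)
        have := Set.ncard_insert_le (1:k) ({-1} : Set k)
        simp at this ⊢
        omega
      rw [Set.ncard_univ] at h1
      omega
    · exact Set.infinite_univ (hS.subset huniv)
  obtain ⟨x, hx⟩ := hex
  simp only [Set.mem_insert_iff, Set.mem_singleton_iff, not_or] at hx
  obtain ⟨hx0, hx1, hxm1⟩ := hx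
  obtain ⟨y, hy⟩ := IsLocalRing.residue_surjective (R := R) x
  have hyunit : IsUnit y := by
    by_contra hc
    have : y ∈ maximalIdeal R := (IsLocalRing.mem_maximalIdeal _).2 (mem_nonunits_iff.2 hc)
    have : IsLocalRing.residue R y = 0 := Ideal.Quotient.eq_zero_iff_mem.2 this
    rw [hy] at this
    exact hx0 this
  refine ⟨hyunit.unit, ?_⟩
  have hval : (hyunit.unit : R) = y := hyunit.unit_spec
  rw [hval]
  by_contra hc
  have hmem : y * y - 1 ∈ maximalIdeal R :=
    (IsLocalRing.mem_maximalIdeal _).2 (mem_nonunits_iff.2 hc)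
  have h0 : IsLocalRing.residue R (y * y - 1) = 0 := Ideal.Quotient.eq_zero_iff_mem.2 hmem
  have : x * x - 1 = 0 := by
    have := h0
    rw [map_sub, _root_.map_mul, hy, _root_.map_one] at this
    exact this
  have hfac : (x - 1) * (x + 1) = 0 := by ring_nf; linear_combination this
  rcases mul_eq_zero.1 hfac with h | h
  · exact hx1 (by linear_combination h)
  · exact hxm1 (by linear_combination h)

lemma E_mem_commutator_of_unit {i j : Fin n} (hij : i ≠ j) (c : R)
    (hu : ∃ u : Rˣ, IsUnit ((u:R) * (u:R) - 1)) :
    E hij c ∈ commutator (SpecialLinearGroup (Fin n) R) := by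
  obtain ⟨u, huu⟩ := hu
  set b : R := ((huu.unit⁻¹ : Rˣ) : R) * c with hbdef
  have hb : ((u:R) * (u:R) - 1) * b = c := by
    rw [hbdef, ← mul_assoc]
    have h1 : ((u:R) * (u:R) - 1) * ((huu.unit⁻¹ : Rˣ) : R) = 1 := by
      nth_rewrite 1 [← huu.unit_spec]
      exact huu.unit.mul_inv
    rw [h1, one_mul]
  rw [E_eq_commutator_W hij u hb, commutator_def]
  exact Subgroup.commutator_mem_commutator (Subgroup.mem_top _) (Subgroup.mem_top _)

end Residue

end SlnPerfect


/-- For a commutative local ring `R` with residue field `k`, if `n ≥ 3`,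
or `n = 2` and `k` has more than 3 elements, then `SL_n(R)` is its own commutator
subgroup. -/
theorem sln_perfect
    {R : Type*} [CommRing R] [IsLocalRing R] (n : ℕ) (hn : 2 ≤ n)
    (h : 3 ≤ n ∨ (n = 2 ∧
      (3 < Nat.card (IsLocalRing.ResidueField R) ∨ Infinite (IsLocalRing.ResidueField R)))) :
    commutator (SpecialLinearGroup (Fin n) R) = ⊤ := by
  rw [eq_top_iff]
  intro A _
  have hH := SlnPerfect.elim (R := R) hn A
  have hsub : SlnPerfect.T R n ⊆ (commutator (SpecialLinearGroup (Fin n) R) : Set _) := by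
    rintro x ⟨i, j, hij, c, rfl⟩
    rcases h with h3 | ⟨h2, hcd⟩
    · exact SlnPerfect.E_mem_commutator_of_three h3 hij c
    · exact SlnPerfect.E_mem_commutator_of_unit hij c (SlnPerfect.exists_good_unit hcd)
  exact (Subgroup.closure_le _).2 hsub hH
end

section
/- There exists a group homomorphism ρ₀ : SL_2(F₃) → GL_2(ℤ₃), where ℤ₃ denotes the ring of 3-adic integers, such that for every M ∈ SL_2(F₃) and all indices i,j, reducing the (i,j)-entry of ρ₀(M) modulo 3 (via the canonical surjection ℤ₃ → F₃) gives M(i,j). In other words, ρ₀ is a lift to ℤ₃ of the inclusion SL_2(F₃) ⊆ GL_2(F₃). -/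
open Matrix
namespace SL2LiftAux

abbrev R2 := Zsqrtd (-2)
abbrev M3 := Matrix (Fin 2) (Fin 2) (ZMod 3)
abbrev MR := Matrix (Fin 2) (Fin 2) R2
abbrev SL3 := SpecialLinearGroup (Fin 2) (ZMod 3)

def tbl : List (M3 × MR) := [
  (!![1,1;2,0], !![⟨1,0⟩,⟨1,0⟩;⟨-1,0⟩,⟨0,0⟩]),
  (!![2,0;1,2], !![⟨2,0⟩,⟨1,-1⟩;⟨-1,-1⟩,⟨-1,0⟩]),
  (!![1,2;1,0], !![⟨0,1⟩,⟨1,1⟩;⟨1,0⟩,⟨1,-1⟩]),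
  (!![2,1;0,2], !![⟨1,1⟩,⟨1,0⟩;⟨1,-1⟩,⟨0,-1⟩]),
  (!![2,2;0,2], !![⟨0,-1⟩,⟨-1,0⟩;⟨-1,1⟩,⟨1,1⟩]),
  (!![0,1;2,1], !![⟨1,-1⟩,⟨-1,-1⟩;⟨-1,0⟩,⟨0,1⟩]),
  (!![2,0;2,2], !![⟨-1,0⟩,⟨-1,1⟩;⟨1,1⟩,⟨2,0⟩]),
  (!![0,2;1,1], !![⟨0,0⟩,⟨-1,0⟩;⟨1,0⟩,⟨1,0⟩]),
  (!![0,1;2,2], !![⟨0,0⟩,⟨1,0⟩;⟨-1,0⟩,⟨-1,0⟩]),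
  (!![1,0;1,1], !![⟨1,0⟩,⟨1,-1⟩;⟨-1,-1⟩,⟨-2,0⟩]),
  (!![0,2;1,2], !![⟨-1,1⟩,⟨1,1⟩;⟨1,0⟩,⟨0,-1⟩]),
  (!![1,1;0,1], !![⟨0,1⟩,⟨1,0⟩;⟨1,-1⟩,⟨-1,-1⟩]),
  (!![1,2;0,1], !![⟨-1,-1⟩,⟨-1,0⟩;⟨-1,1⟩,⟨0,1⟩]),
  (!![2,1;2,0], !![⟨0,-1⟩,⟨-1,-1⟩;⟨-1,0⟩,⟨-1,1⟩]),
  (!![1,0;2,1], !![⟨-2,0⟩,⟨-1,1⟩;⟨1,1⟩,⟨1,0⟩]),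
  (!![2,2;1,0], !![⟨-1,0⟩,⟨-1,0⟩;⟨1,0⟩,⟨0,0⟩]),
  (!![1,0;0,1], !![⟨1,0⟩,⟨0,0⟩;⟨0,0⟩,⟨1,0⟩]),
  (!![2,0;0,2], !![⟨-1,0⟩,⟨0,0⟩;⟨0,0⟩,⟨-1,0⟩]),
  (!![2,2;2,1], !![⟨1,1⟩,⟨2,0⟩;⟨0,-1⟩,⟨-1,-1⟩]),
  (!![1,1;1,2], !![⟨-1,-1⟩,⟨-2,0⟩;⟨0,1⟩,⟨1,1⟩]),
  (!![0,2;1,0], !![⟨1,-1⟩,⟨0,-1⟩;⟨-2,0⟩,⟨-1,1⟩]),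
  (!![0,1;2,0], !![⟨-1,1⟩,⟨0,1⟩;⟨2,0⟩,⟨1,-1⟩]),
  (!![2,1;1,1], !![⟨-1,0⟩,⟨0,1⟩;⟨0,1⟩,⟨1,0⟩]),
  (!![1,2;2,2], !![⟨1,0⟩,⟨0,-1⟩;⟨0,-1⟩,⟨-1,0⟩])]

def L (m : M3) : MR := ((tbl.find? fun p => p.1 == m).map Prod.snd).getD 1

def red0 (x : R2) : ZMod 3 := (x.re : ZMod 3) + (x.im : ZMod 3)

lemma h0 : L ((1 : SL3) : M3) = 1 := by decide

set_option maxHeartbeats 2000000 in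
lemma h1 : ∀ M : SL3, (L (M : M3)).map red0 = (M : M3) := by decide

set_option maxHeartbeats 8000000 in
lemma h2 : ∀ M N : SL3, L ((M * N : SL3) : M3) = L (M : M3) * L (N : M3) := by decide

set_option maxHeartbeats 8000000 in
lemma h3 : ∀ M : SL3, L (M : M3) * L ((M⁻¹ : SL3) : M3) = 1 := by decide


end SL2LiftAux

open SL2LiftAux in
/-- The inclusion `SL_2(F₃) ⊆ GL_2(F₃)` lifts to `ℤ₃`. -/
theorem sl2_F3_lifts_to_Z3 :
    ∃ ρ₀ : SpecialLinearGroup (Fin 2) (ZMod 3) →* GL (Fin 2) ℤ_[3],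
      ∀ (M : SpecialLinearGroup (Fin 2) (ZMod 3)) (i j : Fin 2),
        PadicInt.toZMod ((ρ₀ M : Matrix (Fin 2) (Fin 2) ℤ_[3]) i j) =
          (M : Matrix (Fin 2) (Fin 2) (ZMod 3)) i j := by
  classical
  -- a square root of -2 in ℤ_[3], congruent to 1 mod 3
  obtain ⟨z, hz0, hz1', -, -⟩ := @hensels_lemma 3 _ ℤ_[3] _ _ (Polynomial.X ^ 2 + Polynomial.C 2) 1
    (by
      have h2 : ‖(2 : ℤ_[3])‖ = 1 := by
        refine le_antisymm (PadicInt.norm_le_one _) (not_lt.1 fun h => ?_)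
        have : ‖((2 : ℤ) : ℤ_[3])‖ < 1 := by exact_mod_cast h
        rw [PadicInt.norm_int_lt_one_iff_dvd] at this
        omega
      have h3 : ‖(3 : ℤ_[3])‖ = (3 : ℝ)⁻¹ := by
        have := PadicInt.norm_p (p := 3)
        simpa using this
      simp only [Polynomial.derivative_add, Polynomial.derivative_X_pow,
        Polynomial.derivative_C, add_zero, Polynomial.eval_add, Polynomial.eval_mul,
        Polynomial.eval_pow, Polynomial.eval_X, Polynomial.eval_C, Polynomial.eval_natCast,
        Polynomial.coe_aeval_eq_eval]
      norm_num [h2, h3])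
  have hzsq : z * z = ((-2 : ℤ) : ℤ_[3]) := by
    have hz0' : z ^ 2 + 2 = 0 := by
      simpa [Polynomial.eval_add, Polynomial.eval_pow] using hz0
    push_cast
    linear_combination hz0'
  have hz1 : PadicInt.toZMod z = 1 := by
    have hlt : ‖z - 1‖ < 1 := by
      have h2 : ‖(2 : ℤ_[3])‖ = 1 := by
        refine le_antisymm (PadicInt.norm_le_one _) (not_lt.1 fun h => ?_)
        have : ‖((2 : ℤ) : ℤ_[3])‖ < 1 := by exact_mod_cast h
        rw [PadicInt.norm_int_lt_one_iff_dvd] at this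
        omega
      simpa only [Polynomial.derivative_add, Polynomial.derivative_X_pow,
        Polynomial.derivative_C, add_zero, Polynomial.eval_add, Polynomial.eval_mul,
        Polynomial.eval_pow, Polynomial.eval_X, Polynomial.eval_C, Polynomial.eval_natCast,
        Nat.cast_ofNat, one_pow, mul_one, h2, Polynomial.coe_aeval_eq_eval] using hz1'
    have hker : PadicInt.toZMod (z - 1) = 0 := by
      rw [← RingHom.mem_ker, PadicInt.ker_toZMod, PadicInt.maximalIdeal_eq_span_p,
        Ideal.mem_span_singleton, ← PadicInt.norm_lt_one_iff_dvd]
      exact hlt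
    have h1' : PadicInt.toZMod z - PadicInt.toZMod (1 : ℤ_[3]) = 0 := by
      rw [← _root_.map_sub]; exact hker
    rw [_root_.map_one] at h1'
    exact sub_eq_zero.mp h1'
  set φ : R2 →+* ℤ_[3] := Zsqrtd.lift ⟨z, hzsq⟩ with hφ
  have hcomp : ∀ x : R2, PadicInt.toZMod (φ x) = red0 x := by
    intro x
    show PadicInt.toZMod ((x.re : ℤ_[3]) + (x.im : ℤ_[3]) * z) = _
    rw [_root_.map_add, _root_.map_mul, map_intCast, map_intCast, hz1, mul_one]
    rfl
  have h3inv : ∀ M : SL3, L ((M⁻¹ : SL3) : M3) * L (M : M3) = 1 := by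
    intro M
    have := h3 M⁻¹
    rwa [inv_inv] at this
  refine ⟨{
    toFun := fun M =>
      { val := φ.mapMatrix (L (M : M3))
        inv := φ.mapMatrix (L ((M⁻¹ : SL3) : M3))
        val_inv := by rw [← _root_.map_mul, h3 M, _root_.map_one]
        inv_val := by rw [← _root_.map_mul, h3inv M, _root_.map_one] }
    map_one' := Units.ext (by
      show φ.mapMatrix (L ((1 : SL3) : M3)) = 1
      rw [h0, _root_.map_one])
    map_mul' := fun M N => Units.ext (by
      show φ.mapMatrix (L ((M * N : SL3) : M3)) = _
      rw [h2 M N, _root_.map_mul]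
      rfl) }, ?_⟩
  intro M i j
  show PadicInt.toZMod (φ.mapMatrix (L (M : M3)) i j) = _
  rw [RingHom.mapMatrix_apply, Matrix.map_apply, hcomp]
  have := congrFun (congrFun (h1 M) i) j
  simpa [Matrix.map_apply] using this
end

section
/- Let S be an Artinian local commutative ring with residue field F₂, with reduction π_S : S → F₂ (a surjective ring homomorphism whose kernel is the maximal ideal m_S). Let ρ₁, ρ₂ : SL_3(F₂) → GL_3(S) be two group homomorphisms such that π_S(ρ_i(M)(a,b)) = M(a,b) for i = 1,2, all M ∈ SL_3(F₂) and all indices a,b. Then there exists X ∈ GL_3(S) with X ≡ I mod m_S such that ρ₂(M) = X · ρ₁(M) · X⁻¹ for all M ∈ SL_3(F₂). -/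
open Matrix IsLocalRing

namespace SL3DefAux

abbrev F2 := ZMod 2
abbrev G3 := Matrix.SpecialLinearGroup (Fin 3) F2

instance : DecidableEq (Matrix (Fin 3) (Fin 3) F2) :=
  inferInstance

instance : DecidableEq G3 := Subtype.instDecidableEq

def aG : G3 := ⟨!![0,0,1; 0,1,1; 1,1,0], by decide⟩
def bG : G3 := ⟨!![0,0,1; 1,1,1; 1,0,1], by decide⟩
def tG : G3 := ⟨!![1,1,0; 0,1,0; 0,0,1], by decide⟩

def U1 (S : Type*) [CommRing S] : Matrix (Fin 3) (Fin 3) S := !![0,1,1; 1,1,1; 1,1,0]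
def U1i (S : Type*) [CommRing S] : Matrix (Fin 3) (Fin 3) S := !![1,1,0; 1,1,1; 0,1,1]
def U2 (S : Type*) [CommRing S] : Matrix (Fin 3) (Fin 3) S := !![0,0,1; 1,0,1; 1,1,1]
def U2i (S : Type*) [CommRing S] : Matrix (Fin 3) (Fin 3) S := !![1,1,0; 0,1,1; 1,0,0]

-- group facts
lemma rel_word : tG * (aG * bG^2) * (tG * (aG^3 * bG)) * (tG * bG^2) = 1 := by decide

lemma u1_val : (tG * (aG * bG^2)).1 = (U1 F2) := by decide
lemma u1i_val : ((tG * (aG * bG^2))⁻¹).1 = (U1i F2) := by decide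
lemma u2_val : (tG * (aG * bG^2) * (tG * (aG^3 * bG))).1 = (U2 F2) := by decide
lemma u2i_val : ((tG * (aG * bG^2) * (tG * (aG^3 * bG)))⁻¹).1 = (U2i F2) := by decide

lemma shift_a : ∀ (i : ZMod 7) (j : ZMod 3),
    aG ^ ((i+1).val) * bG ^ j.val = aG * (aG ^ i.val * bG ^ j.val) := by decide
lemma shift_b : ∀ (i : ZMod 7) (j : ZMod 3),
    aG ^ ((2*i).val) * bG ^ ((j+1).val) = bG * (aG ^ i.val * bG ^ j.val) := by decide

def ea : (ZMod 7 × ZMod 3) ≃ (ZMod 7 × ZMod 3) :=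
  ⟨fun p => (p.1 + 1, p.2), fun p => (p.1 - 1, p.2), by decide, by decide⟩
def eb : (ZMod 7 × ZMod 3) ≃ (ZMod 7 × ZMod 3) :=
  ⟨fun p => (2 * p.1, p.2 + 1), fun p => (4 * p.1, p.2 - 1), by decide, by decide⟩

lemma tw01 : tG.1 = Matrix.transvection (0:Fin 3) 1 (1:F2) := by decide
lemma tw02 : (aG * tG * bG).1 = Matrix.transvection (0:Fin 3) 2 (1:F2) := by decide
lemma tw10 : (aG * bG * bG * tG * bG * tG).1 = Matrix.transvection (1:Fin 3) 0 (1:F2) := by decide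
lemma tw12 : (aG * bG * tG * aG).1 = Matrix.transvection (1:Fin 3) 2 (1:F2) := by decide
lemma tw20 : (bG * tG * bG * tG * aG).1 = Matrix.transvection (2:Fin 3) 0 (1:F2) := by decide
lemma tw21 : (aG * bG * aG * bG * tG * aG * bG).1 = Matrix.transvection (2:Fin 3) 1 (1:F2) := by decide

lemma f2_cases : ∀ c : F2, c = 0 ∨ c = 1 := by decide

lemma card21 : (21 : ℕ) • (1 : Matrix (Fin 3) (Fin 3) F2) = 1 := by decide


lemma relw : tG * ((aG * bG^2) * (tG * ((aG^3 * bG) * (tG * bG^2)))) = 1 := by decide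

lemma u2'_val : (tG * ((aG * bG^2) * (tG * (aG^3 * bG)))).1 = U2 F2 := by decide
lemma u2'i_val : ((tG * ((aG * bG^2) * (tG * (aG^3 * bG))))⁻¹).1 = U2i F2 := by decide

lemma map_U1 {R R' : Type*} [CommRing R] [CommRing R'] (f : R →+* R') :
    (U1 R).map f = U1 R' := by
  ext i j
  fin_cases i <;> fin_cases j <;>
    simp [U1, Matrix.map_apply, Matrix.vecHead, Matrix.vecTail]
lemma map_U1i {R R' : Type*} [CommRing R] [CommRing R'] (f : R →+* R') :
    (U1i R).map f = U1i R' := by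
  ext i j
  fin_cases i <;> fin_cases j <;>
    simp [U1i, Matrix.map_apply, Matrix.vecHead, Matrix.vecTail]
lemma map_U2 {R R' : Type*} [CommRing R] [CommRing R'] (f : R →+* R') :
    (U2 R).map f = U2 R' := by
  ext i j
  fin_cases i <;> fin_cases j <;>
    simp [U2, Matrix.map_apply, Matrix.vecHead, Matrix.vecTail]
lemma map_U2i {R R' : Type*} [CommRing R] [CommRing R'] (f : R →+* R') :
    (U2i R).map f = U2i R' := by
  ext i j
  fin_cases i <;> fin_cases j <;>
    simp [U2i, Matrix.map_apply, Matrix.vecHead, Matrix.vecTail]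

theorem approx3 {S : Type*} [CommRing S] (J : Ideal S) (k : ℕ)
    (A A' B B' C : Matrix (Fin 3) (Fin 3) S)
    (hA : ∀ i j, A i j - A' i j ∈ J) (hB : ∀ i j, B i j - B' i j ∈ J)
    (hC : ∀ i j, C i j ∈ J ^ k) :
    ∀ i j, (A * C * B) i j - (A' * C * B') i j ∈ J ^ (k+1) := by
  intro i j
  have key : (A * C * B) i j - (A' * C * B') i j
      = ((A - A') * C * B) i j + (A' * C * (B - B')) i j := by
    simp only [Matrix.sub_mul, Matrix.mul_sub, Matrix.sub_apply]
    ring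
  rw [key]
  refine add_mem ?_ ?_
  · simp only [Matrix.mul_apply, Matrix.sub_apply, Finset.sum_mul]
    refine Ideal.sum_mem _ fun l _ => Ideal.sum_mem _ fun m _ => ?_
    rw [pow_succ']
    exact Ideal.mul_mem_right _ _ (Ideal.mul_mem_mul (hA i m) (hC m l))
  · simp only [Matrix.mul_apply, Matrix.sub_apply, Finset.mul_sum, Finset.sum_mul]
    refine Ideal.sum_mem _ fun l _ => Ideal.sum_mem _ fun m _ => ?_
    rw [pow_succ, mul_assoc]
    exact Ideal.mul_mem_left _ _ (Ideal.mul_mem_mul (hC m l) (hB l j))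

theorem cert {S : Type*} [CommRing S] (J : Ideal S) (k : ℕ) (h2 : (2:S) ∈ J)
    (C : Matrix (Fin 3) (Fin 3) S) (hC : ∀ i j, C i j ∈ J ^ k)
    (hR : ∀ p q, (C + U1 S * C * U1i S + U2 S * C * U2i S) p q ∈ J ^ (k+1)) :
    ∀ i j, C i j ∈ J ^ (k+1) := by
  have hterm : ∀ (u v : Fin 3) (n : S), C u v * 2 * n ∈ J ^ (k+1) := fun u v n => by
    rw [pow_succ]; exact Ideal.mul_mem_right _ _ (Ideal.mul_mem_mul (hC u v) h2)
  intro i j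
  fin_cases i <;> fin_cases j
  · show C 0 0 ∈ J ^ (k+1)
    have hid : C 0 0 = ((C + U1 S * C * U1i S + U2 S * C * U2i S) 0 0 + (C + U1 S * C * U1i S + U2 S * C * U2i S) 0 1 + (C + U1 S * C * U1i S + U2 S * C * U2i S) 0 2 + (C + U1 S * C * U1i S + U2 S * C * U2i S) 1 0) - (C 0 0 * 2 * 1 + C 0 1 * 2 * 1 + C 0 2 * 2 * 1 + C 1 0 * 2 * 2 + C 1 1 * 2 * 2 + C 1 2 * 2 * 1 + C 2 0 * 2 * 3 + C 2 1 * 2 * 3 + C 2 2 * 2 * 2) := by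
      simp only [U1, U1i, U2, U2i, Matrix.add_apply, Matrix.mul_apply, Fin.sum_univ_three,
        Matrix.of_apply, Matrix.cons_val', Matrix.cons_val_zero, Matrix.cons_val_one,
        Matrix.head_cons, Matrix.cons_val_two, Matrix.tail_cons, Matrix.head_fin_const,
        Matrix.empty_val', Matrix.cons_val_fin_one]
      ring
    rw [hid]
    exact sub_mem (add_mem (add_mem (add_mem (hR 0 0) (hR 0 1)) (hR 0 2)) (hR 1 0)) (add_mem (add_mem (add_mem (add_mem (add_mem (add_mem (add_mem (add_mem (hterm 0 0 1) (hterm 0 1 1)) (hterm 0 2 1)) (hterm 1 0 2)) (hterm 1 1 2)) (hterm 1 2 1)) (hterm 2 0 3)) (hterm 2 1 3)) (hterm 2 2 2))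
  · show C 0 1 ∈ J ^ (k+1)
    have hid : C 0 1 = ((C + U1 S * C * U1i S + U2 S * C * U2i S) 0 2 + (C + U1 S * C * U1i S + U2 S * C * U2i S) 2 0) - (C 0 0 * 2 * 1 + C 0 2 * 2 * 1 + C 1 0 * 2 * 1 + C 1 1 * 2 * 1 + C 1 2 * 2 * 1 + C 2 0 * 2 * 1 + C 2 1 * 2 * 1 + C 2 2 * 2 * 1) := by
      simp only [U1, U1i, U2, U2i, Matrix.add_apply, Matrix.mul_apply, Fin.sum_univ_three,
        Matrix.of_apply, Matrix.cons_val', Matrix.cons_val_zero, Matrix.cons_val_one,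
        Matrix.head_cons, Matrix.cons_val_two, Matrix.tail_cons, Matrix.head_fin_const,
        Matrix.empty_val', Matrix.cons_val_fin_one]
      ring
    rw [hid]
    exact sub_mem (add_mem (hR 0 2) (hR 2 0)) (add_mem (add_mem (add_mem (add_mem (add_mem (add_mem (add_mem (hterm 0 0 1) (hterm 0 2 1)) (hterm 1 0 1)) (hterm 1 1 1)) (hterm 1 2 1)) (hterm 2 0 1)) (hterm 2 1 1)) (hterm 2 2 1))
  · show C 0 2 ∈ J ^ (k+1)
    have hid : C 0 2 = ((C + U1 S * C * U1i S + U2 S * C * U2i S) 0 1 + (C + U1 S * C * U1i S + U2 S * C * U2i S) 0 2 + (C + U1 S * C * U1i S + U2 S * C * U2i S) 1 0 + (C + U1 S * C * U1i S + U2 S * C * U2i S) 1 1 + (C + U1 S * C * U1i S + U2 S * C * U2i S) 1 2 + (C + U1 S * C * U1i S + U2 S * C * U2i S) 2 2) - (C 0 0 * 2 * 2 + C 0 1 * 2 * 4 + C 0 2 * 2 * 2 + C 1 0 * 2 * 2 + C 1 1 * 2 * 4 + C 1 2 * 2 * 3 + C 2 0 * 2 * 3 + C 2 1 * 2 * 5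 + C 2 2 * 2 * 3) := by
      simp only [U1, U1i, U2, U2i, Matrix.add_apply, Matrix.mul_apply, Fin.sum_univ_three,
        Matrix.of_apply, Matrix.cons_val', Matrix.cons_val_zero, Matrix.cons_val_one,
        Matrix.head_cons, Matrix.cons_val_two, Matrix.tail_cons, Matrix.head_fin_const,
        Matrix.empty_val', Matrix.cons_val_fin_one]
      ring
    rw [hid]
    exact sub_mem (add_mem (add_mem (add_mem (add_mem (add_mem (hR 0 1) (hR 0 2)) (hR 1 0)) (hR 1 1)) (hR 1 2)) (hR 2 2)) (add_mem (add_mem (add_mem (add_mem (add_mem (add_mem (add_mem (add_mem (hterm 0 0 2) (hterm 0 1 4)) (hterm 0 2 2)) (hterm 1 0 2)) (hterm 1 1 4)) (hterm 1 2 3)) (hterm 2 0 3)) (hterm 2 1 5)) (hterm 2 2 3))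
  · show C 1 0 ∈ J ^ (k+1)
    have hid : C 1 0 = ((C + U1 S * C * U1i S + U2 S * C * U2i S) 0 2 + (C + U1 S * C * U1i S + U2 S * C * U2i S) 1 0 + (C + U1 S * C * U1i S + U2 S * C * U2i S) 1 1 + (C + U1 S * C * U1i S + U2 S * C * U2i S) 1 2 + (C + U1 S * C * U1i S + U2 S * C * U2i S) 2 0 + (C + U1 S * C * U1i S + U2 S * C * U2i S) 2 2) - (C 0 0 * 2 * 3 + C 0 1 * 2 * 4 + C 0 2 * 2 * 3 + C 1 0 * 2 * 2 + C 1 1 * 2 * 4 + C 1 2 * 2 * 3 + C 2 0 * 2 * 3 + C 2 1 * 2 * 4 + C 2 2 * 2 * 3) := by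
      simp only [U1, U1i, U2, U2i, Matrix.add_apply, Matrix.mul_apply, Fin.sum_univ_three,
        Matrix.of_apply, Matrix.cons_val', Matrix.cons_val_zero, Matrix.cons_val_one,
        Matrix.head_cons, Matrix.cons_val_two, Matrix.tail_cons, Matrix.head_fin_const,
        Matrix.empty_val', Matrix.cons_val_fin_one]
      ring
    rw [hid]
    exact sub_mem (add_mem (add_mem (add_mem (add_mem (add_mem (hR 0 2) (hR 1 0)) (hR 1 1)) (hR 1 2)) (hR 2 0)) (hR 2 2)) (add_mem (add_mem (add_mem (add_mem (add_mem (add_mem (add_mem (add_mem (hterm 0 0 3) (hterm 0 1 4)) (hterm 0 2 3)) (hterm 1 0 2)) (hterm 1 1 4)) (hterm 1 2 3)) (hterm 2 0 3)) (hterm 2 1 4)) (hterm 2 2 3))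
  · show C 1 1 ∈ J ^ (k+1)
    have hid : C 1 1 = ((C + U1 S * C * U1i S + U2 S * C * U2i S) 1 0 + (C + U1 S * C * U1i S + U2 S * C * U2i S) 1 2 + (C + U1 S * C * U1i S + U2 S * C * U2i S) 2 0 + (C + U1 S * C * U1i S + U2 S * C * U2i S) 2 2) - (C 0 0 * 2 * 2 + C 0 1 * 2 * 3 + C 0 2 * 2 * 2 + C 1 0 * 2 * 2 + C 1 1 * 2 * 2 + C 1 2 * 2 * 2 + C 2 0 * 2 * 2 + C 2 1 * 2 * 2 + C 2 2 * 2 * 2) := by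
      simp only [U1, U1i, U2, U2i, Matrix.add_apply, Matrix.mul_apply, Fin.sum_univ_three,
        Matrix.of_apply, Matrix.cons_val', Matrix.cons_val_zero, Matrix.cons_val_one,
        Matrix.head_cons, Matrix.cons_val_two, Matrix.tail_cons, Matrix.head_fin_const,
        Matrix.empty_val', Matrix.cons_val_fin_one]
      ring
    rw [hid]
    exact sub_mem (add_mem (add_mem (add_mem (hR 1 0) (hR 1 2)) (hR 2 0)) (hR 2 2)) (add_mem (add_mem (add_mem (add_mem (add_mem (add_mem (add_mem (add_mem (hterm 0 0 2) (hterm 0 1 3)) (hterm 0 2 2)) (hterm 1 0 2)) (hterm 1 1 2)) (hterm 1 2 2)) (hterm 2 0 2)) (hterm 2 1 2)) (hterm 2 2 2))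
  · show C 1 2 ∈ J ^ (k+1)
    have hid : C 1 2 = ((C + U1 S * C * U1i S + U2 S * C * U2i S) 0 2 + (C + U1 S * C * U1i S + U2 S * C * U2i S) 1 2) - (C 0 1 * 2 * 1 + C 0 2 * 2 * 1 + C 1 1 * 2 * 1 + C 1 2 * 2 * 1 + C 2 1 * 2 * 2 + C 2 2 * 2 * 1) := by
      simp only [U1, U1i, U2, U2i, Matrix.add_apply, Matrix.mul_apply, Fin.sum_univ_three,
        Matrix.of_apply, Matrix.cons_val', Matrix.cons_val_zero, Matrix.cons_val_one,
        Matrix.head_cons, Matrix.cons_val_two, Matrix.tail_cons, Matrix.head_fin_const,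
        Matrix.empty_val', Matrix.cons_val_fin_one]
      ring
    rw [hid]
    exact sub_mem (add_mem (hR 0 2) (hR 1 2)) (add_mem (add_mem (add_mem (add_mem (add_mem (hterm 0 1 1) (hterm 0 2 1)) (hterm 1 1 1)) (hterm 1 2 1)) (hterm 2 1 2)) (hterm 2 2 1))
  · show C 2 0 ∈ J ^ (k+1)
    have hid : C 2 0 = ((C + U1 S * C * U1i S + U2 S * C * U2i S) 0 1 + (C + U1 S * C * U1i S + U2 S * C * U2i S) 1 0 + (C + U1 S * C * U1i S + U2 S * C * U2i S) 1 1 + (C + U1 S * C * U1i S + U2 S * C * U2i S) 2 1 + (C + U1 S * C * U1i S + U2 S * C * U2i S) 2 2) - (C 0 0 * 2 * 3 + C 0 1 * 2 * 4 + C 0 2 * 2 * 2 + C 1 0 * 2 * 3 + C 1 1 * 2 * 4 + C 1 2 * 2 * 2 + C 2 0 * 2 * 3 + C 2 1 * 2 * 4 + C 2 2 * 2 * 2) := by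
      simp only [U1, U1i, U2, U2i, Matrix.add_apply, Matrix.mul_apply, Fin.sum_univ_three,
        Matrix.of_apply, Matrix.cons_val', Matrix.cons_val_zero, Matrix.cons_val_one,
        Matrix.head_cons, Matrix.cons_val_two, Matrix.tail_cons, Matrix.head_fin_const,
        Matrix.empty_val', Matrix.cons_val_fin_one]
      ring
    rw [hid]
    exact sub_mem (add_mem (add_mem (add_mem (add_mem (hR 0 1) (hR 1 0)) (hR 1 1)) (hR 2 1)) (hR 2 2)) (add_mem (add_mem (add_mem (add_mem (add_mem (add_mem (add_mem (add_mem (hterm 0 0 3) (hterm 0 1 4)) (hterm 0 2 2)) (hterm 1 0 3)) (hterm 1 1 4)) (hterm 1 2 2)) (hterm 2 0 3)) (hterm 2 1 4)) (hterm 2 2 2))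
  · show C 2 1 ∈ J ^ (k+1)
    have hid : C 2 1 = ((C + U1 S * C * U1i S + U2 S * C * U2i S) 0 2 + (C + U1 S * C * U1i S + U2 S * C * U2i S) 1 0 + (C + U1 S * C * U1i S + U2 S * C * U2i S) 1 2 + (C + U1 S * C * U1i S + U2 S * C * U2i S) 2 0) - (C 0 0 * 2 * 2 + C 0 1 * 2 * 2 + C 0 2 * 2 * 2 + C 1 0 * 2 * 2 + C 1 1 * 2 * 2 + C 1 2 * 2 * 2 + C 2 0 * 2 * 2 + C 2 1 * 2 * 2 + C 2 2 * 2 * 2) := by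
      simp only [U1, U1i, U2, U2i, Matrix.add_apply, Matrix.mul_apply, Fin.sum_univ_three,
        Matrix.of_apply, Matrix.cons_val', Matrix.cons_val_zero, Matrix.cons_val_one,
        Matrix.head_cons, Matrix.cons_val_two, Matrix.tail_cons, Matrix.head_fin_const,
        Matrix.empty_val', Matrix.cons_val_fin_one]
      ring
    rw [hid]
    exact sub_mem (add_mem (add_mem (add_mem (hR 0 2) (hR 1 0)) (hR 1 2)) (hR 2 0)) (add_mem (add_mem (add_mem (add_mem (add_mem (add_mem (add_mem (add_mem (hterm 0 0 2) (hterm 0 1 2)) (hterm 0 2 2)) (hterm 1 0 2)) (hterm 1 1 2)) (hterm 1 2 2)) (hterm 2 0 2)) (hterm 2 1 2)) (hterm 2 2 2))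
  · show C 2 2 ∈ J ^ (k+1)
    have hid : C 2 2 = ((C + U1 S * C * U1i S + U2 S * C * U2i S) 0 1 + (C + U1 S * C * U1i S + U2 S * C * U2i S) 0 2 + (C + U1 S * C * U1i S + U2 S * C * U2i S) 1 1 + (C + U1 S * C * U1i S + U2 S * C * U2i S) 1 2 + (C + U1 S * C * U1i S + U2 S * C * U2i S) 2 0) - (C 0 0 * 2 * 2 + C 0 1 * 2 * 3 + C 0 2 * 2 * 2 + C 1 0 * 2 * 2 + C 1 1 * 2 * 3 + C 1 2 * 2 * 3 + C 2 0 * 2 * 3 + C 2 1 * 2 * 4 + C 2 2 * 2 * 2) := by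
      simp only [U1, U1i, U2, U2i, Matrix.add_apply, Matrix.mul_apply, Fin.sum_univ_three,
        Matrix.of_apply, Matrix.cons_val', Matrix.cons_val_zero, Matrix.cons_val_one,
        Matrix.head_cons, Matrix.cons_val_two, Matrix.tail_cons, Matrix.head_fin_const,
        Matrix.empty_val', Matrix.cons_val_fin_one]
      ring
    rw [hid]
    exact sub_mem (add_mem (add_mem (add_mem (add_mem (hR 0 1) (hR 0 2)) (hR 1 1)) (hR 1 2)) (hR 2 0)) (add_mem (add_mem (add_mem (add_mem (add_mem (add_mem (add_mem (add_mem (hterm 0 0 2) (hterm 0 1 3)) (hterm 0 2 2)) (hterm 1 0 2)) (hterm 1 1 3)) (hterm 1 2 3)) (hterm 2 0 3)) (hterm 2 1 4)) (hterm 2 2 2))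

end SL3DefAux

open SL3DefAux

set_option maxHeartbeats 2000000 in
/-- Any two lifts of the natural representation of `SL_3(F₂)` to an
Artinian local ring `S` with residue field `F₂` are strictly equivalent, i.e. conjugate
by a matrix `≡ I mod m_S`. -/
theorem sl3_F2_lifts_strictly_equivalent
    {S : Type*} [CommRing S] [IsLocalRing S] [IsArtinianRing S]
    (πS : S →+* ZMod 2) (hπS : Function.Surjective πS)
    (hkerS : RingHom.ker πS = maximalIdeal S)
    (ρ₁ ρ₂ : SpecialLinearGroup (Fin 3) (ZMod 2) →* GL (Fin 3) S)
    (hlift₁ : ∀ (M : SpecialLinearGroup (Fin 3) (ZMod 2)) (a b : Fin 3),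
      πS ((ρ₁ M : Matrix (Fin 3) (Fin 3) S) a b) = (M : Matrix (Fin 3) (Fin 3) (ZMod 2)) a b)
    (hlift₂ : ∀ (M : SpecialLinearGroup (Fin 3) (ZMod 2)) (a b : Fin 3),
      πS ((ρ₂ M : Matrix (Fin 3) (Fin 3) S) a b) = (M : Matrix (Fin 3) (Fin 3) (ZMod 2)) a b) :
    ∃ X : GL (Fin 3) S,
      (∀ a b, (X : Matrix (Fin 3) (Fin 3) S) a b - (1 : Matrix (Fin 3) (Fin 3) S) a b ∈
        maximalIdeal S) ∧
      ∀ M : SpecialLinearGroup (Fin 3) (ZMod 2), ρ₂ M = X * ρ₁ M * X⁻¹ := by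
  classical
  obtain ⟨n, hn⟩ : ∃ n, (maximalIdeal S) ^ n = ⊥ := by
    have h := IsArtinianRing.isNilpotent_jacobson_bot (R := S)
    rw [IsLocalRing.jacobson_eq_maximalIdeal ⊥ bot_ne_top] at h
    exact h
  have hmem : ∀ x : S, πS x = 0 → x ∈ maximalIdeal S := by
    intro x hx
    rw [← hkerS]
    exact (RingHom.mem_ker).mpr hx
  set π3 : Matrix (Fin 3) (Fin 3) S →+* Matrix (Fin 3) (Fin 3) F2 := πS.mapMatrix with hπ3
  have hπ3app : ∀ (M : Matrix (Fin 3) (Fin 3) S) i j, π3 M i j = πS (M i j) := by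
    intro M i j; simp [hπ3, RingHom.mapMatrix_apply, Matrix.map_apply]
  have hl₁ : ∀ g : G3, π3 ((ρ₁ g : GL (Fin 3) S) : Matrix (Fin 3) (Fin 3) S) = (g : Matrix (Fin 3) (Fin 3) F2) := by
    intro g; ext i j; rw [hπ3app]; exact hlift₁ g i j
  have hl₂ : ∀ g : G3, π3 ((ρ₂ g : GL (Fin 3) S) : Matrix (Fin 3) (Fin 3) S) = (g : Matrix (Fin 3) (Fin 3) F2) := by
    intro g; ext i j; rw [hπ3app]; exact hlift₂ g i j
  have hl₁inv : ∀ g : G3, π3 (((ρ₁ g)⁻¹ : GL (Fin 3) S) : Matrix (Fin 3) (Fin 3) S)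
      = ((g⁻¹ : G3) : Matrix (Fin 3) (Fin 3) F2) := by
    intro g; rw [← map_inv ρ₁ g]; exact hl₁ g⁻¹
  -- the averaging matrix
  set gE : ZMod 7 × ZMod 3 → G3 := fun p => aG ^ p.1.val * bG ^ p.2.val with hgE
  set X : Matrix (Fin 3) (Fin 3) S :=
    ∑ p : ZMod 7 × ZMod 3, ((ρ₂ (gE p) : GL (Fin 3) S) : Matrix (Fin 3) (Fin 3) S)
      * (((ρ₁ (gE p))⁻¹ : GL (Fin 3) S) : Matrix (Fin 3) (Fin 3) S) with hX
  have hπX : π3 X = 1 := by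
    rw [hX, map_sum]
    have hterm : ∀ p : ZMod 7 × ZMod 3,
        π3 (((ρ₂ (gE p) : GL (Fin 3) S) : Matrix (Fin 3) (Fin 3) S)
          * (((ρ₁ (gE p))⁻¹ : GL (Fin 3) S) : Matrix (Fin 3) (Fin 3) S)) = 1 := by
      intro p
      rw [_root_.map_mul, hl₂, hl₁inv, ← Matrix.SpecialLinearGroup.coe_mul, mul_inv_cancel,
        Matrix.SpecialLinearGroup.coe_one]
    rw [Finset.sum_congr rfl (fun p _ => hterm p), Finset.sum_const, Finset.card_univ]
    have hcard : Fintype.card (ZMod 7 × ZMod 3) = 21 := by decide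
    rw [hcard]
    exact card21
  have hdet1 : πS X.det = 1 := by
    have := RingHom.map_det πS X
    rw [hπX] at this
    simpa using this
  have hdu : IsUnit X.det := by
    by_contra hcon
    have h1 : X.det ∈ maximalIdeal S := (mem_maximalIdeal _).mpr hcon
    rw [← hkerS, RingHom.mem_ker] at h1
    rw [h1] at hdet1
    exact one_ne_zero hdet1.symm
  obtain ⟨Xu, hXuval⟩ := (Matrix.isUnit_iff_isUnit_det X).mpr hdu
  have hπXi : π3 ((Xu⁻¹ : (Matrix (Fin 3) (Fin 3) S)ˣ) : Matrix (Fin 3) (Fin 3) S) = 1 := by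
    have h1 : π3 ((Xu⁻¹ : (Matrix (Fin 3) (Fin 3) S)ˣ) : Matrix (Fin 3) (Fin 3) S)
        * π3 ((Xu : (Matrix (Fin 3) (Fin 3) S)ˣ) : Matrix (Fin 3) (Fin 3) S) = 1 := by
      rw [← _root_.map_mul, Units.inv_mul, _root_.map_one]
    rw [hXuval, hπX, mul_one] at h1
    exact h1
  -- intertwining relations
  have hint : ∀ (w : G3), (∀ p : ZMod 7 × ZMod 3, ∃ q : ZMod 7 × ZMod 3, True) → True := fun _ _ => trivial
  have key : ∀ (w : G3) (e : (ZMod 7 × ZMod 3) ≃ (ZMod 7 × ZMod 3)),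
      (∀ p, gE (e p) = w * gE p) →
      ((ρ₂ w : GL (Fin 3) S) : Matrix (Fin 3) (Fin 3) S) * X
        = X * ((ρ₁ w : GL (Fin 3) S) : Matrix (Fin 3) (Fin 3) S) := by
    intro w e he
    rw [hX, Finset.mul_sum, Finset.sum_mul]
    refine Fintype.sum_equiv e _ _ ?_
    intro p
    rw [he p]
    have h2 : ((ρ₂ (w * gE p) : GL (Fin 3) S) : Matrix (Fin 3) (Fin 3) S)
        = ((ρ₂ w : GL (Fin 3) S) : Matrix (Fin 3) (Fin 3) S)
          * ((ρ₂ (gE p) : GL (Fin 3) S) : Matrix (Fin 3) (Fin 3) S) := by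
      rw [_root_.map_mul]; rfl
    have h1 : (((ρ₁ (w * gE p))⁻¹ : GL (Fin 3) S) : Matrix (Fin 3) (Fin 3) S)
        * ((ρ₁ w : GL (Fin 3) S) : Matrix (Fin 3) (Fin 3) S)
        = (((ρ₁ (gE p))⁻¹ : GL (Fin 3) S) : Matrix (Fin 3) (Fin 3) S) := by
      have : (ρ₁ (w * gE p))⁻¹ * ρ₁ w = (ρ₁ (gE p))⁻¹ := by
        rw [_root_.map_mul, _root_.mul_inv_rev, mul_assoc, inv_mul_cancel, mul_one]
      calc (((ρ₁ (w * gE p))⁻¹ : GL (Fin 3) S) : Matrix (Fin 3) (Fin 3) S)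
            * ((ρ₁ w : GL (Fin 3) S) : Matrix (Fin 3) (Fin 3) S)
          = (((ρ₁ (w * gE p))⁻¹ * ρ₁ w : GL (Fin 3) S) : Matrix (Fin 3) (Fin 3) S) := by
            rw [Units.val_mul]
        _ = _ := by rw [this]
    rw [h2, mul_assoc, mul_assoc, h1]
  have hea : ∀ p : ZMod 7 × ZMod 3, gE (ea p) = aG * gE p := by
    intro p
    show aG ^ ((p.1 + 1).val) * bG ^ p.2.val = aG * (aG ^ p.1.val * bG ^ p.2.val)
    exact shift_a p.1 p.2
  have heb : ∀ p : ZMod 7 × ZMod 3, gE (eb p) = bG * gE p := by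
    intro p
    show aG ^ ((2 * p.1).val) * bG ^ ((p.2 + 1).val) = bG * (aG ^ p.1.val * bG ^ p.2.val)
    exact shift_b p.1 p.2
  have hintA := key aG ea hea
  have hintB := key bG eb heb
  -- conjugated second representation
  set ρ' : G3 → (Matrix (Fin 3) (Fin 3) S)ˣ := fun g => Xu⁻¹ * ρ₂ g * Xu with hρ'
  have hρ'mul : ∀ u v : G3, ρ' (u * v) = ρ' u * ρ' v := by
    intro u v
    rw [hρ']
    simp only [_root_.map_mul]
    group
  have hρ'one : ρ' 1 = 1 := by rw [hρ']; simp
  have hagree : ∀ w : G3,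
      ((ρ₂ w : GL (Fin 3) S) : Matrix (Fin 3) (Fin 3) S) * X
        = X * ((ρ₁ w : GL (Fin 3) S) : Matrix (Fin 3) (Fin 3) S) → ρ' w = ρ₁ w := by
    intro w hw
    apply Units.ext
    show ((Xu⁻¹ * ρ₂ w * Xu : (Matrix (Fin 3) (Fin 3) S)ˣ) : Matrix (Fin 3) (Fin 3) S) = _
    rw [Units.val_mul, Units.val_mul, hXuval, mul_assoc, hw, ← mul_assoc]
    rw [← hXuval, ← Units.val_mul, inv_mul_cancel, Units.val_one, one_mul]
  -- the difference cocycle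
  set cc : G3 → Matrix (Fin 3) (Fin 3) S :=
    fun g => ((ρ' g : (Matrix (Fin 3) (Fin 3) S)ˣ) : Matrix (Fin 3) (Fin 3) S)
      * (((ρ₁ g)⁻¹ : GL (Fin 3) S) : Matrix (Fin 3) (Fin 3) S) - 1 with hcc
  have hczero : ∀ g : G3, ρ' g = ρ₁ g → cc g = 0 := by
    intro g hg
    simp only [hcc, hg]
    rw [← Units.val_mul, mul_inv_cancel, Units.val_one, sub_self]
  have hcoc : ∀ u v : G3, cc (u * v)
      = cc u + ((ρ' u : (Matrix (Fin 3) (Fin 3) S)ˣ) : Matrix (Fin 3) (Fin 3) S) * cc v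
        * (((ρ₁ u)⁻¹ : GL (Fin 3) S) : Matrix (Fin 3) (Fin 3) S) := by
    intro u v
    simp only [hcc]
    simp only [hρ'mul, _root_.map_mul ρ₁, _root_.mul_inv_rev, Units.val_mul]
    noncomm_ring
  have hPmul : ∀ (u v : G3) (Z : Matrix (Fin 3) (Fin 3) S),
      ((ρ' u : (Matrix (Fin 3) (Fin 3) S)ˣ) : Matrix (Fin 3) (Fin 3) S)
        * (((ρ' v : (Matrix (Fin 3) (Fin 3) S)ˣ) : Matrix (Fin 3) (Fin 3) S) * Z
          * (((ρ₁ v)⁻¹ : GL (Fin 3) S) : Matrix (Fin 3) (Fin 3) S))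
        * (((ρ₁ u)⁻¹ : GL (Fin 3) S) : Matrix (Fin 3) (Fin 3) S)
      = ((ρ' (u * v) : (Matrix (Fin 3) (Fin 3) S)ˣ) : Matrix (Fin 3) (Fin 3) S) * Z
        * (((ρ₁ (u * v))⁻¹ : GL (Fin 3) S) : Matrix (Fin 3) (Fin 3) S) := by
    intro u v Z
    simp only [hρ'mul, _root_.map_mul ρ₁, _root_.mul_inv_rev, Units.val_mul]
    noncomm_ring
  have hgrA : ρ' aG = ρ₁ aG := hagree aG hintA
  have hgrB : ρ' bG = ρ₁ bG := hagree bG hintB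
  have hgr : ∀ u v : G3, ρ' u = ρ₁ u → ρ' v = ρ₁ v → ρ' (u * v) = ρ₁ (u * v) := by
    intro u v hu hv
    rw [hρ'mul, hu, hv, _root_.map_mul]
  have hgrB2 : ρ' (bG ^ 2) = ρ₁ (bG ^ 2) := by
    rw [pow_two]; exact hgr _ _ hgrB hgrB
  have hgrh₁ : ρ' (aG * bG ^ 2) = ρ₁ (aG * bG ^ 2) := hgr _ _ hgrA hgrB2
  have hgrA3 : ρ' (aG ^ 3) = ρ₁ (aG ^ 3) := by
    have h3 : aG ^ 3 = aG * aG * aG := by rw [pow_succ, pow_two]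
    rw [h3]; exact hgr _ _ (hgr _ _ hgrA hgrA) hgrA
  have hgrh₂ : ρ' (aG ^ 3 * bG) = ρ₁ (aG ^ 3 * bG) := hgr _ _ hgrA3 hgrB
  have hc1 : cc 1 = 0 := hczero 1 (by rw [hρ'one, _root_.map_one])
  -- the relation, exactly
  have e5 : cc (tG * bG ^ 2) = cc tG := by
    rw [hcoc, hczero _ hgrB2]
    simp
  have e4 : cc ((aG ^ 3 * bG) * (tG * bG ^ 2))
      = ((ρ' (aG ^ 3 * bG) : (Matrix (Fin 3) (Fin 3) S)ˣ) : Matrix (Fin 3) (Fin 3) S) * cc tG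
        * (((ρ₁ (aG ^ 3 * bG))⁻¹ : GL (Fin 3) S) : Matrix (Fin 3) (Fin 3) S) := by
    rw [hcoc, hczero _ hgrh₂, e5, zero_add]
  have e3 : cc (tG * ((aG ^ 3 * bG) * (tG * bG ^ 2)))
      = cc tG + ((ρ' (tG * (aG ^ 3 * bG)) : (Matrix (Fin 3) (Fin 3) S)ˣ) : Matrix (Fin 3) (Fin 3) S)
          * cc tG * (((ρ₁ (tG * (aG ^ 3 * bG)))⁻¹ : GL (Fin 3) S) : Matrix (Fin 3) (Fin 3) S) := by
    rw [hcoc, e4, hPmul]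
  have e2 : cc ((aG * bG ^ 2) * (tG * ((aG ^ 3 * bG) * (tG * bG ^ 2))))
      = ((ρ' (aG * bG ^ 2) : (Matrix (Fin 3) (Fin 3) S)ˣ) : Matrix (Fin 3) (Fin 3) S) * cc tG
          * (((ρ₁ (aG * bG ^ 2))⁻¹ : GL (Fin 3) S) : Matrix (Fin 3) (Fin 3) S)
        + ((ρ' ((aG * bG ^ 2) * (tG * (aG ^ 3 * bG))) : (Matrix (Fin 3) (Fin 3) S)ˣ) : Matrix (Fin 3) (Fin 3) S)
          * cc tG * (((ρ₁ ((aG * bG ^ 2) * (tG * (aG ^ 3 * bG))))⁻¹ : GL (Fin 3) S) : Matrix (Fin 3) (Fin 3) S) := by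
    rw [hcoc, hczero _ hgrh₁, e3, zero_add, Matrix.mul_add, Matrix.add_mul, hPmul]
  have e1 : cc (tG * ((aG * bG ^ 2) * (tG * ((aG ^ 3 * bG) * (tG * bG ^ 2)))))
      = cc tG
        + ((ρ' (tG * (aG * bG ^ 2)) : (Matrix (Fin 3) (Fin 3) S)ˣ) : Matrix (Fin 3) (Fin 3) S)
          * cc tG * (((ρ₁ (tG * (aG * bG ^ 2)))⁻¹ : GL (Fin 3) S) : Matrix (Fin 3) (Fin 3) S)
        + ((ρ' (tG * ((aG * bG ^ 2) * (tG * (aG ^ 3 * bG)))) : (Matrix (Fin 3) (Fin 3) S)ˣ) : Matrix (Fin 3) (Fin 3) S)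
          * cc tG * (((ρ₁ (tG * ((aG * bG ^ 2) * (tG * (aG ^ 3 * bG)))))⁻¹ : GL (Fin 3) S) : Matrix (Fin 3) (Fin 3) S) := by
    rw [hcoc, e2, Matrix.mul_add, Matrix.add_mul, hPmul, hPmul, ← add_assoc]
  have hrel0 : (0 : Matrix (Fin 3) (Fin 3) S)
      = cc tG
        + ((ρ' (tG * (aG * bG ^ 2)) : (Matrix (Fin 3) (Fin 3) S)ˣ) : Matrix (Fin 3) (Fin 3) S)
          * cc tG * (((ρ₁ (tG * (aG * bG ^ 2)))⁻¹ : GL (Fin 3) S) : Matrix (Fin 3) (Fin 3) S)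
        + ((ρ' (tG * ((aG * bG ^ 2) * (tG * (aG ^ 3 * bG)))) : (Matrix (Fin 3) (Fin 3) S)ˣ) : Matrix (Fin 3) (Fin 3) S)
          * cc tG * (((ρ₁ (tG * ((aG * bG ^ 2) * (tG * (aG ^ 3 * bG)))))⁻¹ : GL (Fin 3) S) : Matrix (Fin 3) (Fin 3) S) := by
    rw [← e1, relw, hc1]
  -- residue of the conjugated representation
  have hπρ' : ∀ g : G3, π3 ((ρ' g : (Matrix (Fin 3) (Fin 3) S)ˣ) : Matrix (Fin 3) (Fin 3) S)
      = (g : Matrix (Fin 3) (Fin 3) F2) := by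
    intro g
    show π3 ((↑(Xu⁻¹ * ρ₂ g * Xu) : Matrix (Fin 3) (Fin 3) S)) = _
    rw [Units.val_mul, Units.val_mul, _root_.map_mul, _root_.map_mul, hπXi, hXuval, hπX,
      hl₂, one_mul, mul_one]
  have hψ : ∀ x : S, πS x = 0 ↔ x ∈ maximalIdeal S := by
    intro x
    constructor
    · exact hmem x
    · intro hx; rw [← hkerS] at hx; exact (RingHom.mem_ker).mp hx
  -- entrywise congruences for the two conjugating matrices
  have hA1 : ∀ i j, U1 S i j
      - ((ρ' (tG * (aG * bG ^ 2)) : (Matrix (Fin 3) (Fin 3) S)ˣ) : Matrix (Fin 3) (Fin 3) S) i j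
      ∈ maximalIdeal S := by
    intro i j
    apply hmem
    rw [map_sub]
    have h1 : πS (U1 S i j) = U1 F2 i j := by
      have := congrFun (congrFun (map_U1 πS) i) j
      simpa [Matrix.map_apply] using this
    have h2 : πS (((ρ' (tG * (aG * bG ^ 2)) : (Matrix (Fin 3) (Fin 3) S)ˣ)
        : Matrix (Fin 3) (Fin 3) S) i j) = U1 F2 i j := by
      rw [← hπ3app, hπρ', u1_val]
    rw [h1, h2, sub_self]
  have hB1 : ∀ i j, U1i S i j
      - (((ρ₁ (tG * (aG * bG ^ 2)))⁻¹ : GL (Fin 3) S) : Matrix (Fin 3) (Fin 3) S) i j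
      ∈ maximalIdeal S := by
    intro i j
    apply hmem
    rw [map_sub]
    have h1 : πS (U1i S i j) = U1i F2 i j := by
      have := congrFun (congrFun (map_U1i πS) i) j
      simpa [Matrix.map_apply] using this
    have h2 : πS ((((ρ₁ (tG * (aG * bG ^ 2)))⁻¹ : GL (Fin 3) S)
        : Matrix (Fin 3) (Fin 3) S) i j) = U1i F2 i j := by
      rw [← hπ3app, hl₁inv, u1i_val]
    rw [h1, h2, sub_self]
  have hA2 : ∀ i j, U2 S i j
      - ((ρ' (tG * ((aG * bG ^ 2) * (tG * (aG ^ 3 * bG)))) : (Matrix (Fin 3) (Fin 3) S)ˣ)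
        : Matrix (Fin 3) (Fin 3) S) i j ∈ maximalIdeal S := by
    intro i j
    apply hmem
    rw [map_sub]
    have h1 : πS (U2 S i j) = U2 F2 i j := by
      have := congrFun (congrFun (map_U2 πS) i) j
      simpa [Matrix.map_apply] using this
    have h2 : πS (((ρ' (tG * ((aG * bG ^ 2) * (tG * (aG ^ 3 * bG)))) : (Matrix (Fin 3) (Fin 3) S)ˣ)
        : Matrix (Fin 3) (Fin 3) S) i j) = U2 F2 i j := by
      rw [← hπ3app, hπρ', u2'_val]
    rw [h1, h2, sub_self]
  have hB2 : ∀ i j, U2i S i j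
      - (((ρ₁ (tG * ((aG * bG ^ 2) * (tG * (aG ^ 3 * bG)))))⁻¹ : GL (Fin 3) S)
        : Matrix (Fin 3) (Fin 3) S) i j ∈ maximalIdeal S := by
    intro i j
    apply hmem
    rw [map_sub]
    have h1 : πS (U2i S i j) = U2i F2 i j := by
      have := congrFun (congrFun (map_U2i πS) i) j
      simpa [Matrix.map_apply] using this
    have h2 : πS ((((ρ₁ (tG * ((aG * bG ^ 2) * (tG * (aG ^ 3 * bG)))))⁻¹ : GL (Fin 3) S)
        : Matrix (Fin 3) (Fin 3) S) i j) = U2i F2 i j := by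
      rw [← hπ3app, hl₁inv, u2'i_val]
    rw [h1, h2, sub_self]
  have h2m : (2 : S) ∈ maximalIdeal S := by
    apply hmem
    rw [show (2 : S) = 1 + 1 by norm_num, map_add, _root_.map_one]
    decide
  -- main induction step
  have hstep : ∀ k : ℕ, (∀ (g : G3) (i j : Fin 3), cc g i j ∈ (maximalIdeal S) ^ k) →
      ∀ (g : G3) (i j : Fin 3), cc g i j ∈ (maximalIdeal S) ^ (k + 1) := by
    intro k ih
    have hRm : ∀ p q, (cc tG + U1 S * cc tG * U1i S + U2 S * cc tG * U2i S) p q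
        ∈ (maximalIdeal S) ^ (k + 1) := by
      intro p q
      have d1 := approx3 (maximalIdeal S) k (U1 S) _ (U1i S) _ (cc tG) hA1 hB1 (ih tG) p q
      have d2 := approx3 (maximalIdeal S) k (U2 S) _ (U2i S) _ (cc tG) hA2 hB2 (ih tG) p q
      have hsplit : (cc tG + U1 S * cc tG * U1i S + U2 S * cc tG * U2i S) p q
          = (cc tG
            + ((ρ' (tG * (aG * bG ^ 2)) : (Matrix (Fin 3) (Fin 3) S)ˣ) : Matrix (Fin 3) (Fin 3) S)
              * cc tG * (((ρ₁ (tG * (aG * bG ^ 2)))⁻¹ : GL (Fin 3) S) : Matrix (Fin 3) (Fin 3) S)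
            + ((ρ' (tG * ((aG * bG ^ 2) * (tG * (aG ^ 3 * bG)))) : (Matrix (Fin 3) (Fin 3) S)ˣ)
                : Matrix (Fin 3) (Fin 3) S)
              * cc tG * (((ρ₁ (tG * ((aG * bG ^ 2) * (tG * (aG ^ 3 * bG)))))⁻¹ : GL (Fin 3) S)
                : Matrix (Fin 3) (Fin 3) S)) p q
            + ((U1 S * cc tG * U1i S) p q
              - (((ρ' (tG * (aG * bG ^ 2)) : (Matrix (Fin 3) (Fin 3) S)ˣ) : Matrix (Fin 3) (Fin 3) S)
                * cc tG * (((ρ₁ (tG * (aG * bG ^ 2)))⁻¹ : GL (Fin 3) S) : Matrix (Fin 3) (Fin 3) S)) p q)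
            + ((U2 S * cc tG * U2i S) p q
              - (((ρ' (tG * ((aG * bG ^ 2) * (tG * (aG ^ 3 * bG)))) : (Matrix (Fin 3) (Fin 3) S)ˣ)
                  : Matrix (Fin 3) (Fin 3) S)
                * cc tG * (((ρ₁ (tG * ((aG * bG ^ 2) * (tG * (aG ^ 3 * bG)))))⁻¹ : GL (Fin 3) S)
                  : Matrix (Fin 3) (Fin 3) S)) p q) := by
        simp only [Matrix.add_apply]
        ring
      rw [hsplit, ← hrel0]
      rw [Matrix.zero_apply, zero_add]
      exact add_mem d1 d2
    have hCT : ∀ i j, cc tG i j ∈ (maximalIdeal S) ^ (k + 1) :=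
      cert (maximalIdeal S) k h2m (cc tG) (ih tG) hRm
    have Qmul : ∀ u v : G3, (∀ i j, cc u i j ∈ (maximalIdeal S) ^ (k + 1)) →
        (∀ i j, cc v i j ∈ (maximalIdeal S) ^ (k + 1)) →
        ∀ i j, cc (u * v) i j ∈ (maximalIdeal S) ^ (k + 1) := by
      intro u v hu hv i j
      rw [hcoc, Matrix.add_apply]
      refine add_mem (hu i j) ?_
      simp only [Matrix.mul_apply, Finset.sum_mul]
      refine Ideal.sum_mem _ fun l _ => Ideal.sum_mem _ fun m _ => ?_
      exact Ideal.mul_mem_right _ _ (Ideal.mul_mem_left _ _ (hv m l))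
    have Qzero : ∀ u : G3, cc u = 0 → ∀ i j, cc u i j ∈ (maximalIdeal S) ^ (k + 1) := by
      intro u hu i j
      rw [hu, Matrix.zero_apply]
      exact zero_mem _
    have Qa : ∀ i j, cc aG i j ∈ (maximalIdeal S) ^ (k + 1) := Qzero aG (hczero aG hgrA)
    have Qb : ∀ i j, cc bG i j ∈ (maximalIdeal S) ^ (k + 1) := Qzero bG (hczero bG hgrB)
    have Qone : ∀ i j, cc 1 i j ∈ (maximalIdeal S) ^ (k + 1) := Qzero 1 hc1
    have Qt : ∀ i j, cc tG i j ∈ (maximalIdeal S) ^ (k + 1) := hCT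
    have htrans : ∀ t : Matrix.TransvectionStruct (Fin 3) F2, ∃ s : G3,
        (s : Matrix (Fin 3) (Fin 3) F2) = t.toMatrix ∧
        ∀ i j, cc s i j ∈ (maximalIdeal S) ^ (k + 1) := by
      rintro ⟨ti, tj, hij, tc⟩
      rcases f2_cases tc with rfl | rfl
      · refine ⟨1, ?_, Qone⟩
        rw [Matrix.TransvectionStruct.toMatrix_mk]
        simp [Matrix.transvection]
      · fin_cases ti <;> fin_cases tj
        · exact absurd rfl hij
        · exact ⟨tG, by rw [Matrix.TransvectionStruct.toMatrix_mk]; exact tw01, Qt⟩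
        · exact ⟨aG * tG * bG, by rw [Matrix.TransvectionStruct.toMatrix_mk]; exact tw02,
            Qmul _ _ (Qmul _ _ Qa Qt) Qb⟩
        · exact ⟨aG * bG * bG * tG * bG * tG,
            by rw [Matrix.TransvectionStruct.toMatrix_mk]; exact tw10,
            Qmul _ _ (Qmul _ _ (Qmul _ _ (Qmul _ _ (Qmul _ _ Qa Qb) Qb) Qt) Qb) Qt⟩
        · exact absurd rfl hij
        · exact ⟨aG * bG * tG * aG, by rw [Matrix.TransvectionStruct.toMatrix_mk]; exact tw12,
            Qmul _ _ (Qmul _ _ (Qmul _ _ Qa Qb) Qt) Qa⟩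
        · exact ⟨bG * tG * bG * tG * aG,
            by rw [Matrix.TransvectionStruct.toMatrix_mk]; exact tw20,
            Qmul _ _ (Qmul _ _ (Qmul _ _ (Qmul _ _ Qb Qt) Qb) Qt) Qa⟩
        · exact ⟨aG * bG * aG * bG * tG * aG * bG,
            by rw [Matrix.TransvectionStruct.toMatrix_mk]; exact tw21,
            Qmul _ _ (Qmul _ _ (Qmul _ _ (Qmul _ _ (Qmul _ _ (Qmul _ _ Qa Qb) Qa) Qb) Qt) Qa) Qb⟩
        · exact absurd rfl hij
    have hlist : ∀ L : List (Matrix.TransvectionStruct (Fin 3) F2), ∃ g : G3,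
        (g : Matrix (Fin 3) (Fin 3) F2) = (L.map Matrix.TransvectionStruct.toMatrix).prod ∧
        ∀ i j, cc g i j ∈ (maximalIdeal S) ^ (k + 1) := by
      intro L
      induction L with
      | nil => exact ⟨1, by rw [List.map_nil, List.prod_nil, Matrix.SpecialLinearGroup.coe_one], Qone⟩
      | cons t L ihL =>
        obtain ⟨g, hg, hQ⟩ := ihL
        obtain ⟨s, hs, hQs⟩ := htrans t
        refine ⟨s * g, ?_, Qmul _ _ hQs hQ⟩
        rw [List.map_cons, List.prod_cons, Matrix.SpecialLinearGroup.coe_mul, hs, hg]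
    intro g i j
    obtain ⟨L, L', D, hD⟩ :=
      Matrix.Pivot.exists_list_transvec_mul_diagonal_mul_list_transvec ((g : Matrix (Fin 3) (Fin 3) F2))
    have hdetD : Matrix.det (Matrix.diagonal D) = 1 := by
      have h1 : Matrix.det (g : Matrix (Fin 3) (Fin 3) F2) = 1 := g.2
      rw [hD] at h1
      simpa [Matrix.det_mul] using h1
    have hDone : Matrix.diagonal D = 1 := by
      have hprod : ∏ i, D i = 1 := by simpa [Matrix.det_diagonal] using hdetD
      have hone : ∀ i, D i = 1 := by
        intro i
        rcases f2_cases (D i) with h0 | h1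
        · exfalso
          have hz : (∏ i, D i) = 0 := Finset.prod_eq_zero (Finset.mem_univ i) h0
          rw [hprod] at hz
          exact one_ne_zero hz
        · exact h1
      have : D = fun _ => 1 := funext hone
      rw [this, Matrix.diagonal_one]
    obtain ⟨g₁, hg₁, hQ₁⟩ := hlist L
    obtain ⟨g₂, hg₂, hQ₂⟩ := hlist L'
    have hgm : g = g₁ * g₂ := by
      apply Subtype.ext
      rw [Matrix.SpecialLinearGroup.coe_mul, hg₁, hg₂, hD, hDone, Matrix.mul_one]
    rw [hgm]
    exact Qmul _ _ hQ₁ hQ₂ i j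
  -- all values of the cocycle vanish
  have hall : ∀ (k : ℕ) (g : G3) (i j : Fin 3), cc g i j ∈ (maximalIdeal S) ^ k := by
    intro k
    induction k with
    | zero =>
      intro g i j
      rw [pow_zero, Ideal.one_eq_top]
      exact Submodule.mem_top
    | succ k ihk => exact hstep k ihk
  have hceq : ∀ g : G3, ρ' g = ρ₁ g := by
    intro g
    have hc0 : cc g = 0 := by
      ext i j
      have hm := hall n g i j
      rw [hn] at hm
      simpa using hm
    have h1 : ((ρ' g : (Matrix (Fin 3) (Fin 3) S)ˣ) : Matrix (Fin 3) (Fin 3) S)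
        * (((ρ₁ g)⁻¹ : GL (Fin 3) S) : Matrix (Fin 3) (Fin 3) S) = 1 := by
      have := hc0
      simp only [hcc] at this
      exact sub_eq_zero.mp this
    have h2 : ρ' g * (ρ₁ g)⁻¹ = 1 := Units.ext (by rw [Units.val_mul, h1, Units.val_one])
    exact mul_inv_eq_one.mp h2
  refine ⟨Xu, ?_, ?_⟩
  · intro a b
    apply hmem
    rw [map_sub]
    have h1 : πS ((Xu : Matrix (Fin 3) (Fin 3) S) a b)
        = (1 : Matrix (Fin 3) (Fin 3) F2) a b := by
      rw [← hπ3app, hXuval, hπX]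
    have h2 : πS ((1 : Matrix (Fin 3) (Fin 3) S) a b)
        = (1 : Matrix (Fin 3) (Fin 3) F2) a b := by
      rw [← hπ3app, _root_.map_one]
    rw [h1, h2, sub_self]
  · intro M
    have hM := hceq M
    have hM' : Xu⁻¹ * ρ₂ M * Xu = ρ₁ M := by
      rw [← hM, hρ']
    calc ρ₂ M = Xu * (Xu⁻¹ * ρ₂ M * Xu) * Xu⁻¹ := by group
    _ = Xu * ρ₁ M * Xu⁻¹ := by rw [hM']
end
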